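/- arXiv:2210.13121 — 7 statements merged into one kernel-verified Lean document; each statement's English description precedes it below -/
import Mathlib

section
/- Let P be a probability measure on a measurable space 𝒳, let f : 𝒳 → ℝ be measurable, and let λ ∈ ℝ be such that ∫ e^{λf} dP < +∞. Define the probability measure Q_λ by dQ_λ/dP = e^{λf} / ∫ e^{λf} dP, and suppose f is Q_λ-integrable. Then for every probability measure R with R ≪ P, f R-integrable, and D(R‖P) < +∞, one has D(R‖P) − D(Q_λ‖P) = D(R‖Q_λ) + λ( ∫ f dR − ∫ f dQ_λ ); in particular D(R‖P) − D(Q_λ‖P) ≥ λ( ∫ f dR − ∫ f dQ_λ ). -/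
open MeasureTheory Filter Topology Real
open scoped ENNReal NNReal Classical

/-- Relative entropy `D(Q‖P)`: `∫ log (dQ/dP) dQ` if `Q ≪ P` (and the integral is
well-defined), `+∞` otherwise. -/
noncomputable def relEnt {X : Type*} [MeasurableSpace X] (Q P : Measure X) : ℝ≥0∞ :=
  if Q ≪ P ∧ Integrable (llr Q P) Q then ENNReal.ofReal (∫ x, llr Q P x ∂Q) else ⊤

lemma gibbs_nonneg {X : Type*} [MeasurableSpace X] (μ ν : Measure X)
    [IsProbabilityMeasure μ] [IsProbabilityMeasure ν] (hμν : μ ≪ ν)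
    (h_int : Integrable (llr μ ν) μ) : 0 ≤ ∫ x, llr μ ν x ∂μ := by
  have hint2 : Integrable (fun x => (ν.rnDeriv μ x).toReal) μ :=
    Measure.integrable_toReal_rnDeriv
  have h1 : ∫ x, (ν.rnDeriv μ x).toReal ∂μ ≤ 1 := by
    calc ∫ x, (ν.rnDeriv μ x).toReal ∂μ
        = ∫ x in Set.univ, (ν.rnDeriv μ x).toReal ∂μ := setIntegral_univ.symm
      _ ≤ (ν Set.univ).toReal := Measure.setIntegral_toReal_rnDeriv_le (measure_ne_top ν _)
      _ = 1 := by simp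
  have key : ∀ᵐ x ∂μ, -llr μ ν x ≤ (ν.rnDeriv μ x).toReal - 1 := by
    filter_upwards [exp_neg_llr hμν] with x hx
    have := Real.add_one_le_exp (-llr μ ν x)
    rw [hx] at this
    linarith
  have h2 : ∫ x, -llr μ ν x ∂μ ≤ ∫ x, ((ν.rnDeriv μ x).toReal - 1) ∂μ :=
    integral_mono_ae h_int.neg (hint2.sub (integrable_const 1)) key
  rw [integral_neg, integral_sub hint2 (integrable_const 1)] at h2
  simp only [integral_const, measure_univ, ENNReal.toReal_one, probReal_univ, mul_one, smul_eq_mul, one_mul] at h2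
  linarith

/-- **Tilting identity for relative entropy.** If `dQ_λ/dP = e^{λ f}/∫ e^{λ f} dP`, then for
any probability measure `R ≪ P` with `f` `R`-integrable and `D(R‖P) < ∞`,
`D(R‖P) − D(Q_λ‖P) = D(R‖Q_λ) + λ(∫ f dR − ∫ f dQ_λ) ≥ λ(∫ f dR − ∫ f dQ_λ)`. -/
theorem relEnt_tilted_identity {X : Type*} [MeasurableSpace X]
    (P : Measure X) [IsProbabilityMeasure P] (f : X → ℝ) (hf : Measurable f) (l : ℝ)
    (hexp : Integrable (fun x => Real.exp (l * f x)) P)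
    (Q : Measure X)
    (hQ : Q = P.withDensity fun x =>
      ENNReal.ofReal (Real.exp (l * f x) / ∫ y, Real.exp (l * f y) ∂P))
    (hfQ : Integrable f Q)
    (R : Measure X) [IsProbabilityMeasure R] (hRP : R ≪ P) (hfR : Integrable f R)
    (hDR : relEnt R P ≠ ⊤) :
    (relEnt R P : EReal) - (relEnt Q P : EReal)
        = (relEnt R Q : EReal) + ((l * (∫ x, f x ∂ R - ∫ x, f x ∂Q) : ℝ) : EReal)
      ∧ ((l * (∫ x, f x ∂ R - ∫ x, f x ∂Q) : ℝ) : EReal)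
          ≤ (relEnt R P : EReal) - (relEnt Q P : EReal) := by
  classical
  set g : X → ℝ := fun x => l * f x with hg
  have hQt : Q = P.tilted g := by rw [hQ]; rfl
  haveI hQprob : IsProbabilityMeasure Q := hQt ▸ isProbabilityMeasure_tilted hexp
  have hQP : Q ≪ P := hQt ▸ tilted_absolutelyContinuous P g
  have hPQ : P ≪ Q := hQt ▸ absolutelyContinuous_tilted hexp
  have hRQ : R ≪ Q := hRP.trans hPQ
  have hR : R ≪ P ∧ Integrable (llr R P) R := by
    by_contra h
    exact hDR (by rw [relEnt, if_neg h])
  obtain ⟨-, h_int⟩ := hR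
  have hgQ : Integrable g Q := hfQ.const_mul l
  have hgR : Integrable g R := hfR.const_mul l
  have hZ : (0:ℝ) < ∫ y, Real.exp (g y) ∂P := integral_exp_pos hexp
  -- llr Q P computation
  have hllrPP : llr P P =ᵐ[P] 0 := by
    filter_upwards [Measure.rnDeriv_self P] with x hx
    simp [llr, hx]
  have hllrQP_P : llr Q P =ᵐ[P] fun x => g x - Real.log (∫ y, Real.exp (g y) ∂P) := by
    have h1 := llr_tilted_left (Measure.AbsolutelyContinuous.refl P) hexp (hf.const_mul l).aemeasurable
    rw [← hQt] at h1
    filter_upwards [h1, hllrPP] with x hx hx0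
    rw [hx]
    simp [hx0]
    rfl
  have hllrQP : llr Q P =ᵐ[Q] fun x => g x - Real.log (∫ y, Real.exp (g y) ∂P) :=
    hQP.ae_le hllrQP_P
  have h_int_QP : Integrable (llr Q P) Q :=
    (integrable_congr hllrQP).mpr (hgQ.sub (integrable_const _))
  have IQ : ∫ x, llr Q P x ∂Q = (∫ x, g x ∂Q) - Real.log (∫ y, Real.exp (g y) ∂P) := by
    rw [integral_congr_ae hllrQP, integral_sub hgQ (integrable_const _)]
    simp
  -- llr R Q computation
  have h_int_RQ : Integrable (llr R Q) R := by
    rw [hQt]; exact integrable_llr_tilted_right hRP hgR h_int hexp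
  have IRQ : ∫ x, llr R Q x ∂ R
      = ∫ x, llr R P x ∂ R - (∫ x, g x ∂ R) + Real.log (∫ y, Real.exp (g y) ∂P) := by
    rw [hQt]; exact integral_llr_tilted_right hRP hgR hexp h_int
  -- nonnegativity
  have ha : 0 ≤ ∫ x, llr R P x ∂ R := gibbs_nonneg R P hRP h_int
  have hb : 0 ≤ ∫ x, llr Q P x ∂Q := gibbs_nonneg Q P hQP h_int_QP
  have hc : 0 ≤ ∫ x, llr R Q x ∂ R := gibbs_nonneg R Q hRQ h_int_RQ
  -- rewrite relEnt values
  have e1 : relEnt R P = ENNReal.ofReal (∫ x, llr R P x ∂ R) := by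
    rw [relEnt, if_pos ⟨hRP, h_int⟩]
  have e2 : relEnt Q P = ENNReal.ofReal (∫ x, llr Q P x ∂Q) := by
    rw [relEnt, if_pos ⟨hQP, h_int_QP⟩]
  have e3 : relEnt R Q = ENNReal.ofReal (∫ x, llr R Q x ∂ R) := by
    rw [relEnt, if_pos ⟨hRQ, h_int_RQ⟩]
  have hcoe : ∀ r : ℝ, 0 ≤ r → ((ENNReal.ofReal r : ℝ≥0∞) : EReal) = (r : EReal) := by
    intro r hr
    rw [EReal.coe_ennreal_ofReal, max_eq_left hr]
  rw [e1, e2, e3, hcoe _ ha, hcoe _ hb, hcoe _ hc]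
  have hgRint : ∫ x, g x ∂ R = l * ∫ x, f x ∂ R := integral_const_mul l f
  have hgQint : ∫ x, g x ∂Q = l * ∫ x, f x ∂Q := integral_const_mul l f
  constructor
  · rw [← EReal.coe_sub, ← EReal.coe_add, EReal.coe_eq_coe_iff, IQ, IRQ, hgRint, hgQint]
    ring
  · rw [← EReal.coe_sub, EReal.coe_le_coe_iff, IQ, hgQint]
    rw [IRQ, hgRint] at hc
    linarith
end

section
/- Let P be a probability measure on a measurable space 𝒳, let Γ be a convex set of probability measures on 𝒳, and let Q ∈ Γ satisfy D(Q‖P) < +∞. Then Q is an I-projection of P on Γ (i.e., D(Q‖P) ≤ D(R‖P) for all R ∈ Γ) if and only if every R ∈ Γ satisfies D(R‖P) ≥ D(R‖Q) + D(Q‖P). -/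
open MeasureTheory Filter Topology
open scoped ENNReal NNReal Classical

lemma relEnt_eq {X : Type*} [MeasurableSpace X] {Q P : Measure X}
    (h1 : Q ≪ P) (h2 : Integrable (llr Q P) Q) :
    relEnt Q P = ENNReal.ofReal (∫ x, llr Q P x ∂Q) := if_pos ⟨h1, h2⟩

namespace IProjAux

noncomputable def phiRE : ℝ → ℝ := fun y => y * Real.log y

lemma sub_one_le_phiRE {y : ℝ} (hy : 0 ≤ y) : y - 1 ≤ phiRE y := by
  rcases eq_or_lt_of_le hy with h | h
  · simp [phiRE, ← h]
  · have h1 := Real.log_le_sub_one_of_pos (inv_pos.mpr h)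
    rw [Real.log_inv] at h1
    have h2 : 1 - y⁻¹ ≤ Real.log y := by linarith
    have h3 : y - 1 = y * (1 - y⁻¹) := by field_simp
    rw [h3]
    exact mul_le_mul_of_nonneg_left h2 hy

lemma neg_one_le_phiRE {y : ℝ} (hy : 0 ≤ y) : -1 ≤ phiRE y :=
  le_trans (by linarith) (sub_one_le_phiRE hy)

lemma phiRE_convex_comb {a b t : ℝ} (ha : 0 ≤ a) (hb : 0 ≤ b) (ht0 : 0 ≤ t) (ht1 : t ≤ 1) :
    phiRE (a + t * (b - a)) ≤ (1 - t) * phiRE a + t * phiRE b := by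
  have h := Real.convexOn_mul_log.2 (Set.mem_Ici.mpr ha) (Set.mem_Ici.mpr hb)
    (sub_nonneg.mpr ht1) ht0 (by ring)
  simpa [phiRE, smul_eq_mul, show (1 - t) * a + t * b = a + t * (b - a) by ring] using h

lemma phiRE_slope_mono {a b s t : ℝ} (ha : 0 ≤ a) (hb : 0 ≤ b)
    (hs : 0 < s) (hst : s ≤ t) (ht : t ≤ 1) :
    (phiRE (a + s * (b - a)) - phiRE a) / s ≤ (phiRE (a + t * (b - a)) - phiRE a) / t := by
  have ht0 : 0 < t := lt_of_lt_of_le hs hst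
  set c := a + t * (b - a) with hc_def
  have hc : 0 ≤ c := by nlinarith [mul_nonneg (sub_nonneg.mpr ht) ha, mul_nonneg ht0.le hb]
  have key := Real.convexOn_mul_log.2 (Set.mem_Ici.mpr ha) (Set.mem_Ici.mpr hc)
    (show (0:ℝ) ≤ 1 - s / t by rw [sub_nonneg]; exact (div_le_one ht0).mpr hst)
    (show (0:ℝ) ≤ s / t from div_nonneg hs.le ht0.le)
    (show 1 - s / t + s / t = 1 by ring)
  have harg : (1 - s / t) • a + (s / t) • c = a + s * (b - a) := by
    simp only [smul_eq_mul, hc_def]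
    field_simp
    ring
  rw [harg] at key
  have key2 : phiRE (a + s * (b - a)) ≤ (1 - s / t) * phiRE a + (s / t) * phiRE c := key
  rw [div_le_div_iff₀ hs ht0]
  have h3 : t * ((1 - s / t) * phiRE a + (s / t) * phiRE c)
      = (t - s) * phiRE a + s * phiRE c := by field_simp
  have key3 := mul_le_mul_of_nonneg_left key2 ht0.le
  rw [h3] at key3
  nlinarith

lemma integral_llr_nonneg {X : Type*} [MeasurableSpace X] (μ ν : Measure X)
    [IsProbabilityMeasure μ] [IsProbabilityMeasure ν]
    (hμν : μ ≪ ν) (h : Integrable (llr μ ν) μ) : 0 ≤ ∫ x, llr μ ν x ∂μ := by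
  have hpos : ∀ᵐ x ∂μ, 0 < ν.rnDeriv μ x := Measure.rnDeriv_pos' hμν
  have hlt : ∀ᵐ x ∂μ, ν.rnDeriv μ x < ⊤ := Measure.rnDeriv_lt_top ν μ
  have hle : ∀ᵐ x ∂μ, 1 - (ν.rnDeriv μ x).toReal ≤ llr μ ν x := by
    filter_upwards [hpos, hlt, neg_llr hμν] with x h1 h2 h3
    have htr : 0 < (ν.rnDeriv μ x).toReal := ENNReal.toReal_pos h1.ne' h2.ne
    have h4 := Real.log_le_sub_one_of_pos htr
    have h5 : -llr μ ν x = Real.log (ν.rnDeriv μ x).toReal := h3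
    linarith
  have hint2 : Integrable (fun x => 1 - (ν.rnDeriv μ x).toReal) μ :=
    (integrable_const 1).sub Measure.integrable_toReal_rnDeriv
  have hmono := integral_mono_ae hint2 h hle
  have hev : ∫ x, (1 - (ν.rnDeriv μ x).toReal) ∂μ
      = 1 - ∫ x, (ν.rnDeriv μ x).toReal ∂μ := by
    rw [integral_sub (integrable_const 1) Measure.integrable_toReal_rnDeriv]
    simp
  have hle1 : ∫ x, (ν.rnDeriv μ x).toReal ∂μ ≤ 1 := by
    rw [Measure.integral_toReal_rnDeriv']
    simp only [measureReal_def, measure_univ, ENNReal.toReal_one]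
    have := ENNReal.toReal_nonneg (a := ν.singularPart μ Set.univ)
    linarith
  linarith

end IProjAux


/-- **Characterization of the I-projection on a convex set** (Csiszár).
For a convex set `Γ` of probability measures and `Q ∈ Γ` with `D(Q‖P) < ∞`,
`Q` minimizes `D(·‖P)` over `Γ` iff `D(R‖P) ≥ D(R‖Q) + D(Q‖P)` for all `R ∈ Γ`. -/
theorem iProjection_characterization {X : Type*} [MeasurableSpace X]
    (P : Measure X) [IsProbabilityMeasure P]
    (Γ : Set (Measure X)) (hΓprob : ∀ R ∈ Γ, IsProbabilityMeasure R)
    (hconv : ∀ R₁ ∈ Γ, ∀ R₂ ∈ Γ, ∀ t : ℝ≥0, t ≤ 1 →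
      ((t : ℝ≥0∞) • R₁ + ((1 - t : ℝ≥0) : ℝ≥0∞) • R₂) ∈ Γ)
    (Q : Measure X) (hQΓ : Q ∈ Γ) (hQfin : relEnt Q P < ⊤) :
    (∀ R ∈ Γ, relEnt Q P ≤ relEnt R P) ↔ (∀ R ∈ Γ, relEnt R Q + relEnt Q P ≤ relEnt R P) := by
  constructor
  case mpr =>
    intro h R hR
    exact le_trans le_add_self (h R hR)
  intro hmin R hR
  by_cases hRfin : R ≪ P ∧ Integrable (llr R P) R
  case neg =>
    have htop : relEnt R P = ⊤ := by simp only [relEnt]; rw [if_neg hRfin]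
    rw [htop]; exact le_top
  obtain ⟨hRP, hRint⟩ := hRfin
  have hQfin' : Q ≪ P ∧ Integrable (llr Q P) Q := by
    by_contra h
    simp only [relEnt] at hQfin
    rw [if_neg h] at hQfin
    exact absurd hQfin (lt_irrefl ⊤)
  obtain ⟨hQP, hQint⟩ := hQfin'
  haveI hQprob : IsProbabilityMeasure Q := hΓprob Q hQΓ
  haveI hRprob : IsProbabilityMeasure R := hΓprob R hR
  set q : X → ℝ := fun x => (Q.rnDeriv P x).toReal with hq_def
  set r : X → ℝ := fun x => (R.rnDeriv P x).toReal with hr_def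
  have hqm : Measurable q := (Measure.measurable_rnDeriv Q P).ennreal_toReal
  have hrm : Measurable r := (Measure.measurable_rnDeriv R P).ennreal_toReal
  have hq0 : ∀ x, 0 ≤ q x := fun x => ENNReal.toReal_nonneg
  have hr0 : ∀ x, 0 ≤ r x := fun x => ENNReal.toReal_nonneg
  set u : ℝ → X → ℝ := fun t x => q x + t * (r x - q x) with hu_def
  have hum : ∀ t, Measurable (u t) := fun t => hqm.add ((hrm.sub hqm).const_mul t)
  have hu0 : ∀ (t) (x : X), 0 ≤ t → t ≤ 1 → 0 ≤ u t x := by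
    intro t x ht0 ht1
    have h1 : u t x = (1 - t) * q x + t * r x := by simp only [hu_def]; ring
    rw [h1]
    have h2 := mul_nonneg (sub_nonneg.mpr ht1) (hq0 x)
    have h3 := mul_nonneg ht0 (hr0 x)
    linarith
  have hsmul_eq : ∀ (μ : Measure X), (fun x => (μ.rnDeriv P x).toReal • llr μ P x)
      = fun x => IProjAux.phiRE (μ.rnDeriv P x).toReal := by
    intro μ; funext x; simp [IProjAux.phiRE, llr, smul_eq_mul]
  have hφq_int : Integrable (fun x => IProjAux.phiRE (q x)) P := by
    have h := (integrable_rnDeriv_smul_iff hQP).mpr hQint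
    rwa [hsmul_eq] at h
  have hφr_int : Integrable (fun x => IProjAux.phiRE (r x)) P := by
    have h := (integrable_rnDeriv_smul_iff hRP).mpr hRint
    rwa [hsmul_eq] at h
  have hDq : ∫ x, llr Q P x ∂Q = ∫ x, IProjAux.phiRE (q x) ∂P := by
    rw [← integral_rnDeriv_smul hQP, hsmul_eq]
  set D : ℝ := ∫ x, IProjAux.phiRE (q x) ∂P with hD_def
  have hD0 : 0 ≤ D := by
    rw [← hDq]; exact IProjAux.integral_llr_nonneg Q P hQP hQint
  have hφu_int : ∀ t : ℝ, 0 ≤ t → t ≤ 1 → Integrable (fun x => IProjAux.phiRE (u t x)) P := by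
    intro t ht0 ht1
    have hb_int : Integrable
        (fun x => |(1 - t) * IProjAux.phiRE (q x) + t * IProjAux.phiRE (r x)| + 1) P :=
      ((hφq_int.const_mul (1 - t)).add (hφr_int.const_mul t)).abs.add (integrable_const 1)
    refine Integrable.mono' hb_int ?_ ?_
    · exact ((hum t).mul (hum t).log).aestronglyMeasurable
    · refine ae_of_all _ fun x => ?_
      have h1 := IProjAux.phiRE_convex_comb (hq0 x) (hr0 x) ht0 ht1
      have h2 := IProjAux.neg_one_le_phiRE (hu0 t x ht0 ht1)
      rw [Real.norm_eq_abs, abs_le]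
      constructor
      · have := abs_nonneg ((1 - t) * IProjAux.phiRE (q x) + t * IProjAux.phiRE (r x))
        linarith
      · have := le_abs_self ((1 - t) * IProjAux.phiRE (q x) + t * IProjAux.phiRE (r x))
        linarith
  have key : ∀ τ : ℝ≥0, τ ≤ 1 → D ≤ ∫ x, IProjAux.phiRE (u (τ : ℝ) x) ∂P := by
    intro τ hτ
    have hτ0 : (0 : ℝ) ≤ (τ : ℝ) := τ.coe_nonneg
    have hτ1 : ((τ : ℝ≥0) : ℝ) ≤ 1 := by exact_mod_cast hτ
    set Qt : Measure X := (τ : ℝ≥0∞) • R + ((1 - τ : ℝ≥0) : ℝ≥0∞) • Q with hQt_def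
    have hQtΓ : Qt ∈ Γ := hconv R hR Q hQΓ τ hτ
    haveI hQtprob : IsProbabilityMeasure Qt := hΓprob _ hQtΓ
    have hQtP : Qt ≪ P := by
      refine Measure.AbsolutelyContinuous.mk fun s hs h0 => ?_
      simp [hQt_def, Measure.add_apply, Measure.smul_apply, hRP h0, hQP h0]
    haveI h1 : IsFiniteMeasure ((τ : ℝ≥0∞) • R) := by
      constructor
      rw [Measure.smul_apply, measure_univ, smul_eq_mul, mul_one]
      exact ENNReal.coe_lt_top
    haveI h2 : IsFiniteMeasure (((1 - τ : ℝ≥0) : ℝ≥0∞) • Q) := by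
      constructor
      rw [Measure.smul_apply, measure_univ, smul_eq_mul, mul_one]
      exact ENNReal.coe_lt_top
    have hrn : Qt.rnDeriv P =ᵐ[P] fun x =>
        (τ : ℝ≥0∞) * R.rnDeriv P x + ((1 - τ : ℝ≥0) : ℝ≥0∞) * Q.rnDeriv P x := by
      have ha := Measure.rnDeriv_add ((τ : ℝ≥0∞) • R) (((1 - τ : ℝ≥0) : ℝ≥0∞) • Q) P
      have hb := Measure.rnDeriv_smul_left_of_ne_top R P (r := (τ : ℝ≥0∞)) ENNReal.coe_ne_top
      have hc := Measure.rnDeriv_smul_left_of_ne_top Q P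
        (r := ((1 - τ : ℝ≥0) : ℝ≥0∞)) ENNReal.coe_ne_top
      filter_upwards [ha, hb, hc] with x hx1 hx2 hx3
      rw [hx1, Pi.add_apply, hx2, hx3, Pi.smul_apply, Pi.smul_apply, smul_eq_mul, smul_eq_mul]
    have hrnu : (fun x => (Qt.rnDeriv P x).toReal) =ᵐ[P] u (τ : ℝ) := by
      filter_upwards [hrn, Measure.rnDeriv_lt_top R P, Measure.rnDeriv_lt_top Q P]
        with x hx h2' h3'
      rw [hx, ENNReal.toReal_add (ENNReal.mul_ne_top ENNReal.coe_ne_top h2'.ne)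
        (ENNReal.mul_ne_top ENNReal.coe_ne_top h3'.ne), ENNReal.toReal_mul, ENNReal.toReal_mul]
      simp only [ENNReal.coe_toReal]
      have hτc : ((1 - τ : ℝ≥0) : ℝ) = 1 - (τ : ℝ) := by rw [NNReal.coe_sub hτ]; simp
      rw [hτc]
      simp only [hu_def, hq_def, hr_def]
      ring
    have hllr_eq : (fun x => (Qt.rnDeriv P x).toReal • llr Qt P x)
        =ᵐ[P] fun x => IProjAux.phiRE (u (τ : ℝ) x) := by
      filter_upwards [hrnu] with x hx
      simp only [llr, smul_eq_mul, hx, IProjAux.phiRE]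
    have hint_u := hφu_int (τ : ℝ) hτ0 hτ1
    have hIQt : Integrable (llr Qt P) Qt :=
      (integrable_rnDeriv_smul_iff hQtP).mp (hint_u.congr hllr_eq.symm)
    have hval : ∫ x, llr Qt P x ∂Qt = ∫ x, IProjAux.phiRE (u (τ : ℝ) x) ∂P := by
      rw [← integral_rnDeriv_smul hQtP, integral_congr_ae hllr_eq]
    have h0t : 0 ≤ ∫ x, IProjAux.phiRE (u (τ : ℝ) x) ∂P := by
      rw [← hval]; exact IProjAux.integral_llr_nonneg Qt P hQtP hIQt
    have hmono := hmin Qt hQtΓ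
    rw [relEnt_eq hQP hQint, relEnt_eq hQtP hIQt, hval, hDq] at hmono
    exact (ENNReal.ofReal_le_ofReal_iff h0t).mp hmono
  set tR : ℕ → ℝ := fun n => ((n : ℝ) + 1)⁻¹ with htR_def
  have htR_pos : ∀ n, 0 < tR n := fun n => by positivity
  have htR_le1 : ∀ n, tR n ≤ 1 := by
    intro n
    apply inv_le_one_of_one_le₀
    have := Nat.cast_nonneg (α := ℝ) n
    linarith
  have htR_anti : ∀ m n, m ≤ n → tR n ≤ tR m := by
    intro m n h
    have h1 : (0 : ℝ) < (m : ℝ) + 1 := by positivity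
    have h2 : (m : ℝ) + 1 ≤ (n : ℝ) + 1 := by
      have := Nat.cast_le (α := ℝ).mpr h
      linarith
    exact inv_anti₀ h1 h2
  have htR_tend : Tendsto tR atTop (𝓝 0) := by
    have := tendsto_one_div_add_atTop_nhds_zero_nat (𝕜 := ℝ)
    simpa [htR_def, one_div] using this
  set sl : ℕ → X → ℝ :=
    fun n x => (IProjAux.phiRE (u (tR n) x) - IProjAux.phiRE (q x)) / tR n with hsl_def
  set sl1 : X → ℝ := fun x => IProjAux.phiRE (r x) - IProjAux.phiRE (q x) with hsl1_def
  have hu1 : ∀ x, u 1 x = r x := fun x => by simp only [hu_def]; ring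
  have hsl_le1 : ∀ (n) (x : X), sl n x ≤ sl1 x := by
    intro n x
    have h := IProjAux.phiRE_slope_mono (hq0 x) (hr0 x) (htR_pos n) (htR_le1 n) le_rfl
    rw [show q x + 1 * (r x - q x) = r x by ring, div_one] at h
    exact h
  have hsl_anti : ∀ (x : X) (m n), m ≤ n → sl n x ≤ sl m x := by
    intro x m n h
    exact IProjAux.phiRE_slope_mono (hq0 x) (hr0 x) (htR_pos n) (htR_anti m n h) (htR_le1 m)
  have hsl_int : ∀ n, Integrable (sl n) P :=
    fun n => ((hφu_int _ (htR_pos n).le (htR_le1 n)).sub hφq_int).div_const _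
  have hsl1_int : Integrable sl1 P := hφr_int.sub hφq_int
  have hsl_nonneg : ∀ n, 0 ≤ ∫ x, sl n x ∂P := by
    intro n
    have hk := key ⟨tR n, (htR_pos n).le⟩ (by
      apply NNReal.coe_le_coe.mp
      exact htR_le1 n)
    have hk' : D ≤ ∫ x, IProjAux.phiRE (u (tR n) x) ∂P := hk
    have heq : ∫ x, sl n x ∂P = (∫ x, IProjAux.phiRE (u (tR n) x) ∂P - D) / tR n := by
      simp only [hsl_def]
      rw [integral_div, integral_sub (hφu_int _ (htR_pos n).le (htR_le1 n)) hφq_int]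
    rw [heq]
    apply div_nonneg _ (htR_pos n).le
    linarith [hk']
  set g : ℕ → X → ℝ≥0∞ := fun n x => ENNReal.ofReal (sl1 x - sl n x) with hg_def
  have hg_mono : ∀ x, Monotone fun n => g n x := by
    intro x m n h
    exact ENNReal.ofReal_le_ofReal (by have := hsl_anti x m n h; linarith)
  have hslm : ∀ n, Measurable (sl n) :=
    fun n => (((hum _).mul (hum _).log).sub (hqm.mul hqm.log)).div_const _
  have hsl1m : Measurable sl1 := (hrm.mul hrm.log).sub (hqm.mul hqm.log)
  have hgm : ∀ n, Measurable (g n) := fun n => (hsl1m.sub (hslm n)).ennreal_ofReal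
  have hlg : ∀ n, ∫⁻ x, g n x ∂P ≤ ENNReal.ofReal (∫ x, sl1 x ∂P) := by
    intro n
    have hint : Integrable (fun x => sl1 x - sl n x) P := hsl1_int.sub (hsl_int n)
    have heq := ofReal_integral_eq_lintegral_ofReal hint
      (ae_of_all _ fun x => sub_nonneg.mpr (hsl_le1 n x))
    simp only [hg_def]
    rw [← heq]
    apply ENNReal.ofReal_le_ofReal
    rw [integral_sub hsl1_int (hsl_int n)]
    linarith [hsl_nonneg n]
  set G : X → ℝ≥0∞ := fun x => ⨆ n, g n x with hG_def
  have hGm : Measurable G := Measurable.iSup hgm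
  have hlG : ∫⁻ x, G x ∂P ≤ ENNReal.ofReal (∫ x, sl1 x ∂P) := by
    simp only [hG_def]
    rw [lintegral_iSup' (fun n => (hgm n).aemeasurable) (ae_of_all _ hg_mono)]
    exact iSup_le hlg
  have hGne : ∫⁻ x, G x ∂P ≠ ⊤ := (lt_of_le_of_lt hlG ENNReal.ofReal_lt_top).ne
  have hGlt : ∀ᵐ x ∂P, G x < ⊤ := ae_lt_top hGm hGne
  have hq0r0 : ∀ᵐ x ∂P, q x = 0 → r x = 0 := by
    filter_upwards [hGlt] with x hx
    intro hqx
    by_contra hr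
    have hrpos : 0 < r x := lt_of_le_of_ne (hr0 x) (Ne.symm hr)
    have hsl_eq : ∀ n, sl n x = r x * Real.log (tR n * r x) := by
      intro n
      simp only [hsl_def, hu_def, hqx, IProjAux.phiRE, zero_add, sub_zero, zero_mul]
      field_simp
      rw [mul_div_cancel_left₀ _ (htR_pos n).ne']
    have hlogt : Tendsto (fun n => Real.log (tR n)) atTop atBot := by
      have h1 : Tendsto tR atTop (𝓝[>] 0) := by
        apply tendsto_nhdsWithin_of_tendsto_nhds_of_eventually_within _ htR_tend
        exact Eventually.of_forall fun n => htR_pos n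
      exact Real.tendsto_log_nhdsGT_zero.comp h1
    have hinner : Tendsto (fun n => sl1 x - sl n x) atTop atTop := by
      have h2 : Tendsto (fun n => r x * Real.log (tR n)) atTop atBot :=
        hlogt.const_mul_atBot hrpos
      have h3 : Tendsto (fun n => -(r x * Real.log (tR n))) atTop atTop :=
        tendsto_neg_atBot_atTop.comp h2
      have h4 := tendsto_atTop_add_const_left _ (sl1 x - r x * Real.log (r x)) h3
      refine h4.congr fun n => ?_
      rw [hsl_eq n, Real.log_mul (htR_pos n).ne' hrpos.ne']
      ring
    have htop : Tendsto (fun n => g n x) atTop (𝓝 ⊤) :=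
      ENNReal.tendsto_ofReal_atTop.comp hinner
    have hGx : G x = ⊤ := tendsto_nhds_unique (tendsto_atTop_iSup (hg_mono x)) htop
    rw [hGx] at hx
    exact absurd hx (lt_irrefl _)
  have hRQ : R ≪ Q := by
    refine Measure.AbsolutelyContinuous.mk fun s hs hQs => ?_
    have hq_zero : Q.rnDeriv P =ᵐ[P.restrict s] 0 := by
      rw [← lintegral_eq_zero_iff (Measure.measurable_rnDeriv Q P)]
      have heq : ∫⁻ x in s, Q.rnDeriv P x ∂P = Q s := by
        conv_rhs => rw [← Measure.withDensity_rnDeriv_eq Q P hQP]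
        rw [withDensity_apply _ hs]
      rw [heq, hQs]
    have hr_zero : R.rnDeriv P =ᵐ[P.restrict s] (0 : X → ℝ≥0∞) := by
      filter_upwards [hq_zero, ae_restrict_of_ae hq0r0,
        ae_restrict_of_ae (Measure.rnDeriv_lt_top R P)] with x h1 h2 h3
      have h1' : Q.rnDeriv P x = 0 := h1
      have hqx : q x = 0 := by simp [hq_def, h1']
      have hrx : r x = 0 := h2 hqx
      show R.rnDeriv P x = 0
      rcases (ENNReal.toReal_eq_zero_iff _).mp hrx with h | h
      · exact h
      · exact absurd h h3.ne
    calc R s = ∫⁻ x in s, R.rnDeriv P x ∂P := by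
          conv_lhs => rw [← Measure.withDensity_rnDeriv_eq R P hRP]
          rw [withDensity_apply _ hs]
      _ = 0 := (lintegral_eq_zero_iff (Measure.measurable_rnDeriv R P)).mpr hr_zero
  set L : X → ℝ := fun x => (Real.log (q x) + 1) * (r x - q x) with hL_def
  have htends : ∀ᵐ x ∂P, Tendsto (fun n => sl n x) atTop (𝓝 (L x)) := by
    filter_upwards [hq0r0] with x hx
    rcases eq_or_lt_of_le (hq0 x) with hq | hq
    · have hqx : q x = 0 := hq.symm
      have hrx : r x = 0 := hx hqx
      have hzero : ∀ n, sl n x = 0 := by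
        intro n
        simp [hsl_def, hu_def, hqx, hrx]
      have hL0 : L x = 0 := by simp [hL_def, hqx, hrx]
      rw [hL0]
      exact tendsto_const_nhds.congr fun n => (hzero n).symm
    · have hF : HasDerivAt (fun t : ℝ => IProjAux.phiRE (q x + t * (r x - q x)))
          ((Real.log (q x) + 1) * (r x - q x)) 0 := by
        have h1 : HasDerivAt (fun t : ℝ => q x + t * (r x - q x)) (r x - q x) 0 := by
          simpa using ((hasDerivAt_id (0 : ℝ)).mul_const (r x - q x)).const_add (q x)
        have h2 : HasDerivAt (fun y : ℝ => y * Real.log y) (Real.log (q x) + 1)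
            ((fun t : ℝ => q x + t * (r x - q x)) 0) := by
          simp only [zero_mul, add_zero]
          exact Real.hasDerivAt_mul_log hq.ne'
        exact h2.comp 0 h1
      have hslope := hasDerivAt_iff_tendsto_slope.mp hF
      have hseq : Tendsto tR atTop (𝓝[≠] (0 : ℝ)) := by
        apply tendsto_nhdsWithin_of_tendsto_nhds_of_eventually_within _ htR_tend
        exact Eventually.of_forall fun n => (htR_pos n).ne'
      refine (hslope.comp hseq).congr fun n => ?_
      rw [Function.comp_apply, slope_def_field]
      simp only [hsl_def, hu_def]
      norm_num
  have hL_le : ∀ᵐ x ∂P, L x ≤ sl1 x := by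
    filter_upwards [htends] with x hx
    exact le_of_tendsto hx (Eventually.of_forall fun n => hsl_le1 n x)
  have hGeq : ∀ᵐ x ∂P, G x = ENNReal.ofReal (sl1 x - L x) := by
    filter_upwards [htends] with x hx
    have h2 : Tendsto (fun n => g n x) atTop (𝓝 (ENNReal.ofReal (sl1 x - L x))) := by
      apply (ENNReal.continuous_ofReal.tendsto _).comp
      exact tendsto_const_nhds.sub hx
    exact tendsto_nhds_unique (tendsto_atTop_iSup (hg_mono x)) h2
  have hdiff_int : Integrable (fun x => sl1 x - L x) P := by
    have h1 : Integrable (fun x => (G x).toReal) P :=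
      integrable_toReal_of_lintegral_ne_top hGm.aemeasurable hGne
    refine h1.congr ?_
    filter_upwards [hGeq, hL_le] with x h2 h3
    rw [h2, ENNReal.toReal_ofReal (by linarith)]
  have hsl1_nonneg : 0 ≤ ∫ x, sl1 x ∂P := by
    have hk := key 1 le_rfl
    have h1 : ∫ x, IProjAux.phiRE (u ((1 : ℝ≥0) : ℝ) x) ∂P
        = ∫ x, IProjAux.phiRE (r x) ∂P := by
      refine integral_congr_ae (Eventually.of_forall fun x => ?_)
      simp only [hu_def]
      congr 1
      push_cast
      ring
    rw [h1] at hk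
    have h2 : ∫ x, sl1 x ∂P = ∫ x, IProjAux.phiRE (r x) ∂P - D := by
      simp only [hsl1_def]
      rw [integral_sub hφr_int hφq_int]
    rw [h2]
    linarith
  have hint_ineq : ∫ x, (sl1 x - L x) ∂P ≤ ∫ x, sl1 x ∂P := by
    have hnn : 0 ≤ᵐ[P] fun x => sl1 x - L x := hL_le.mono fun x h => sub_nonneg.mpr h
    rw [integral_eq_lintegral_of_nonneg_ae hnn hdiff_int.aestronglyMeasurable]
    have hcongr : ∫⁻ x, ENNReal.ofReal (sl1 x - L x) ∂P = ∫⁻ x, G x ∂P :=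
      lintegral_congr_ae (hGeq.mono fun x hx => hx.symm)
    rw [hcongr]
    calc (∫⁻ x, G x ∂P).toReal ≤ (ENNReal.ofReal (∫ x, sl1 x ∂P)).toReal :=
          ENNReal.toReal_mono ENNReal.ofReal_ne_top hlG
      _ = ∫ x, sl1 x ∂P := ENNReal.toReal_ofReal hsl1_nonneg
  have hL_int : Integrable L P :=
    (hsl1_int.sub hdiff_int).congr (Eventually.of_forall fun x => by
      simp only [Pi.sub_apply]
      ring)
  have hL_nonneg : 0 ≤ ∫ x, L x ∂P := by
    have h := hint_ineq
    rw [integral_sub hsl1_int hL_int] at h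
    linarith
  have hrq_int : Integrable (fun x => r x - q x) P :=
    Measure.integrable_toReal_rnDeriv.sub Measure.integrable_toReal_rnDeriv
  have hrq_zero : ∫ x, (r x - q x) ∂P = 0 := by
    rw [integral_sub Measure.integrable_toReal_rnDeriv Measure.integrable_toReal_rnDeriv,
      Measure.integral_toReal_rnDeriv hRP, Measure.integral_toReal_rnDeriv hQP]
    simp
  have hm2_int : Integrable (fun x => (r x - q x) * Real.log (q x)) P :=
    (hL_int.sub hrq_int).congr (Eventually.of_forall fun x => by
      simp only [Pi.sub_apply, hL_def]
      ring)
  have hm2_nonneg : 0 ≤ ∫ x, (r x - q x) * Real.log (q x) ∂P := by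
    have heq : ∫ x, (r x - q x) * Real.log (q x) ∂P = ∫ x, L x ∂P - ∫ x, (r x - q x) ∂P := by
      rw [← integral_sub hL_int hrq_int]
      exact integral_congr_ae (Eventually.of_forall fun x => by simp only [hL_def]; ring)
    rw [heq, hrq_zero]
    linarith
  have hm_int : Integrable (fun x => r x * Real.log (q x)) P :=
    (hm2_int.add hφq_int).congr (Eventually.of_forall fun x => by
      simp only [Pi.add_apply, IProjAux.phiRE]
      ring)
  have hm_ge : D ≤ ∫ x, r x * Real.log (q x) ∂P := by
    have heq : ∫ x, r x * Real.log (q x) ∂P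
        = ∫ x, (r x - q x) * Real.log (q x) ∂P + D := by
      rw [hD_def, ← integral_add hm2_int hφq_int]
      exact integral_congr_ae (Eventually.of_forall fun x => by
        simp only [IProjAux.phiRE]; ring)
    rw [heq]
    linarith
  have hllrQP_R_int : Integrable (llr Q P) R := by
    apply (integrable_rnDeriv_smul_iff hRP).mp
    refine hm_int.congr (Eventually.of_forall fun x => ?_)
    rfl
  have hllrQP_R_val : D ≤ ∫ x, llr Q P x ∂ R := by
    rw [← integral_rnDeriv_smul hRP]
    refine le_trans hm_ge (le_of_eq ?_)
    exact integral_congr_ae (Eventually.of_forall fun x => rfl)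
  have hchain : llr R Q =ᵐ[R] fun x => llr R P x - llr Q P x := by
    have h0 := hRP.ae_le (Measure.rnDeriv_mul_rnDeriv hRQ (κ := P))
    filter_upwards [h0, Measure.rnDeriv_pos hRQ, hRQ.ae_le (Measure.rnDeriv_lt_top R Q),
      hRQ.ae_le (Measure.rnDeriv_pos hQP), hRP.ae_le (Measure.rnDeriv_lt_top Q P)]
      with x h1 h2 h3 h4 h5
    have hRQx : (R.rnDeriv Q x).toReal ≠ 0 := (ENNReal.toReal_pos h2.ne' h3.ne).ne'
    have hQPx : (Q.rnDeriv P x).toReal ≠ 0 := (ENNReal.toReal_pos h4.ne' h5.ne).ne'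
    have h6 : (R.rnDeriv P x).toReal = (R.rnDeriv Q x).toReal * (Q.rnDeriv P x).toReal := by
      rw [← h1, Pi.mul_apply, ENNReal.toReal_mul]
    show llr R Q x = llr R P x - llr Q P x
    simp only [llr]
    rw [h6, Real.log_mul hRQx hQPx]
    ring
  have hllrRQ_int : Integrable (llr R Q) R := (hRint.sub hllrQP_R_int).congr hchain.symm
  have hvalRQ : ∫ x, llr R Q x ∂ R = ∫ x, llr R P x ∂ R - ∫ x, llr Q P x ∂ R := by
    rw [integral_congr_ae hchain, integral_sub hRint hllrQP_R_int]
  have hRQ_nonneg : 0 ≤ ∫ x, llr R Q x ∂ R := IProjAux.integral_llr_nonneg R Q hRQ hllrRQ_int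
  rw [relEnt_eq hRQ hllrRQ_int, relEnt_eq hQP hQint, relEnt_eq hRP hRint,
    ← ENNReal.ofReal_add hRQ_nonneg (by rw [hDq]; exact hD0)]
  apply ENNReal.ofReal_le_ofReal
  rw [hDq]
  linarith [hvalRQ, hllrQP_R_val]
end

section
/- Let 𝒳 be a Polish space, let P be a Borel probability measure on 𝒳, and let Γ be a nonempty subset of the space of Borel probability measures on 𝒳 that is closed in the topology of weak convergence. Then there exists R* ∈ Γ with D(R*‖P) = inf_{R∈Γ} D(R‖P); i.e., the I-projection of P on Γ exists. -/
open MeasureTheory Filter Topology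
open scoped ENNReal NNReal Classical

open Set

section auxlemmas

variable {X : Type*} [MeasurableSpace X]

/-- Young-type inequality: `s*t ≤ t log t + exp (s-1)` for `t ≥ 0`. -/
lemma aux_pointwise {t : ℝ} (ht : 0 ≤ t) (s : ℝ) :
    s * t ≤ t * Real.log t + Real.exp (s - 1) := by
  rcases eq_or_lt_of_le ht with h0 | hpos
  · simp [← h0, (Real.exp_pos _).le]
  · have h1 : s - Real.log t ≤ Real.exp (s - Real.log t - 1) := by
      have := Real.add_one_le_exp (s - Real.log t - 1)
      linarith
    have h2 : Real.exp (s - Real.log t - 1) = Real.exp (s - 1) / t := by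
      rw [show s - Real.log t - 1 = (s - 1) - Real.log t by ring, Real.exp_sub,
        Real.exp_log hpos]
    rw [h2] at h1
    have h3 : (s - Real.log t) * t ≤ Real.exp (s - 1) / t * t := by
      exact mul_le_mul_of_nonneg_right h1 ht
    rw [div_mul_cancel₀ _ (ne_of_gt hpos)] at h3
    nlinarith [Real.log_le_sub_one_of_pos hpos]

lemma aux_abs_sub {X : Type*} [MeasurableSpace X] (μ : Measure X) [IsFiniteMeasure μ]
    {S A : Set X} :
    |(μ S).toReal - (μ A).toReal| ≤ (μ (symmDiff S A)).toReal := by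
  have h1 : μ S ≤ μ A + μ (symmDiff S A) := by
    refine le_trans (measure_mono ?_) (measure_union_le _ _)
    intro x hx
    by_cases hA : x ∈ A
    · exact Or.inl hA
    · exact Or.inr (Or.inl ⟨hx, hA⟩)
  have h2 : μ A ≤ μ S + μ (symmDiff S A) := by
    refine le_trans (measure_mono ?_) (measure_union_le _ _)
    intro x hx
    by_cases hS : x ∈ S
    · exact Or.inl hS
    · exact Or.inr (Or.inr ⟨hx, hS⟩)
  have fS : μ S ≠ ⊤ := measure_ne_top _ _
  have fA : μ A ≠ ⊤ := measure_ne_top _ _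
  have fD : μ (symmDiff S A) ≠ ⊤ := measure_ne_top _ _
  rw [abs_sub_le_iff]
  constructor
  · have := ENNReal.toReal_mono (by finiteness) h1
    rw [ENNReal.toReal_add fA fD] at this
    linarith
  · have := ENNReal.toReal_mono (by finiteness) h2
    rw [ENNReal.toReal_add fS fD] at this
    linarith

lemma aux_integrable_of_bounded {μ : Measure X} [IsFiniteMeasure μ] {s : X → ℝ} {C : ℝ}
    (hs : Measurable s) (hC : ∀ x, |s x| ≤ C) : Integrable s μ :=
  (integrable_const C).mono' hs.aestronglyMeasurable (ae_of_all _ fun x => by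
    simpa using hC x)

/-- Donsker–Varadhan-type upper bound for a single bounded measurable `s`. -/
lemma aux_integral_le {Q P : Measure X} [IsProbabilityMeasure Q] [IsProbabilityMeasure P]
    (hQP : Q ≪ P) (hint : Integrable (llr Q P) Q) {s : X → ℝ} {C : ℝ}
    (hs : Measurable s) (hC : ∀ x, |s x| ≤ C) :
    ∫ x, s x ∂Q ≤ ∫ x, llr Q P x ∂Q + ∫ x, Real.exp (s x - 1) ∂P := by
  set f : X → ℝ := fun x => (Q.rnDeriv P x).toReal with hf
  have hfm : Measurable f := (Measure.measurable_rnDeriv Q P).ennreal_toReal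
  have h1 : ∫ x, s x ∂Q = ∫ x, f x • s x ∂P := (MeasureTheory.integral_rnDeriv_smul hQP).symm
  have h2 : ∫ x, llr Q P x ∂Q = ∫ x, f x • llr Q P x ∂P :=
    (MeasureTheory.integral_rnDeriv_smul hQP).symm
  rw [h1, h2]
  have hint1 : Integrable (fun x => f x • s x) P :=
    (MeasureTheory.integrable_rnDeriv_smul_iff hQP).mpr (aux_integrable_of_bounded hs hC)
  have hint2 : Integrable (fun x => f x • llr Q P x) P :=
    (MeasureTheory.integrable_rnDeriv_smul_iff hQP).mpr hint
  have hint3 : Integrable (fun x => Real.exp (s x - 1)) P := by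
    refine aux_integrable_of_bounded ((hs.sub measurable_const).exp) (C := Real.exp (C - 1)) ?_
    intro x
    rw [abs_of_pos (Real.exp_pos _)]
    exact Real.exp_le_exp.mpr (by have := (abs_le.mp (hC x)).2; linarith)
  have key : ∀ x, f x • s x ≤ f x • llr Q P x + Real.exp (s x - 1) := by
    intro x
    have := aux_pointwise (ENNReal.toReal_nonneg : (0:ℝ) ≤ f x) (s x)
    simpa [llr, smul_eq_mul, mul_comm] using this
  calc ∫ x, f x • s x ∂P ≤ ∫ x, (f x • llr Q P x + Real.exp (s x - 1)) ∂P :=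
      integral_mono hint1 (hint2.add hint3) key
    _ = ∫ x, f x • llr Q P x ∂P + ∫ x, Real.exp (s x - 1) ∂P := integral_add hint2 hint3

/-- Uniform absolute continuity from an entropy bound. -/
lemma aux_uac {Q P : Measure X} [IsProbabilityMeasure Q] [IsProbabilityMeasure P]
    (hQP : Q ≪ P) (hint : Integrable (llr Q P) Q) {c : ℝ} (hc : 0 ≤ c)
    (hD : ∫ x, llr Q P x ∂Q ≤ c) {ε : ℝ} (hε : 0 < ε) {S : Set X} (hS : MeasurableSet S)
    (hPS : (P S).toReal ≤ Real.exp (-((c + 2) / ε))) :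
    (Q S).toReal ≤ ε := by
  set lam : ℝ := (c + 2) / ε with hlam
  have hlampos : 0 < lam := div_pos (by linarith) hε
  set s : X → ℝ := S.indicator (fun _ => lam) with hsdef
  have hsm : Measurable s := measurable_const.indicator hS
  have hsb : ∀ x, |s x| ≤ lam := by
    intro x
    by_cases hx : x ∈ S <;> simp [hsdef, hx, abs_of_nonneg, hlampos.le]
  have key := aux_integral_le hQP hint hsm hsb
  -- compute ∫ s ∂Q
  have h1 : ∫ x, s x ∂Q = lam * (Q S).toReal := by
    rw [hsdef, integral_indicator_const _ hS]
    simp [smul_eq_mul, mul_comm]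
    exact Or.inl rfl
  -- bound ∫ exp (s - 1) ∂P
  have h2 : ∫ x, Real.exp (s x - 1) ∂P ≤ Real.exp (lam - 1) * (P S).toReal + 1 := by
    have hb : ∀ x, Real.exp (s x - 1) ≤
        S.indicator (fun _ => Real.exp (lam - 1)) x + Real.exp (-1) := by
      intro x
      by_cases hx : x ∈ S
      · simp only [hsdef, Set.indicator_of_mem hx]
        have : (0:ℝ) < Real.exp (-1) := Real.exp_pos _
        linarith
      · simp only [hsdef, Set.indicator_of_notMem hx]
        norm_num
    have hintL : Integrable (fun x => Real.exp (s x - 1)) P := by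
      refine aux_integrable_of_bounded ((hsm.sub measurable_const).exp)
        (C := Real.exp (lam - 1)) ?_
      intro x
      rw [abs_of_pos (Real.exp_pos _)]
      exact Real.exp_le_exp.mpr (by have := (abs_le.mp (hsb x)).2; linarith)
    have hintR : Integrable
        (fun x => S.indicator (fun _ => Real.exp (lam - 1)) x + Real.exp (-1)) P :=
      ((integrable_const _).indicator hS).add (integrable_const _)
    have := integral_mono hintL hintR hb
    rw [integral_add ((integrable_const _).indicator hS) (integrable_const _),
      integral_indicator_const _ hS, integral_const] at this
    have hP1 : (P univ).toReal = 1 := by simp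
    have hexp : Real.exp (-1) ≤ 1 := Real.exp_le_one_iff.mpr (by norm_num)
    calc ∫ x, Real.exp (s x - 1) ∂P ≤ _ := this
      _ ≤ Real.exp (lam - 1) * (P S).toReal + 1 := by
          rw [smul_eq_mul, smul_eq_mul, measureReal_def, measureReal_def, hP1]
          nlinarith [ENNReal.toReal_nonneg (a := P S)]
  -- combine
  have main : lam * (Q S).toReal ≤ c + Real.exp (lam - 1) * (P S).toReal + 1 := by
    rw [h1] at key
    linarith
  have hexpbound : Real.exp (lam - 1) * (P S).toReal ≤ 1 := by
    have : Real.exp (lam - 1) * (P S).toReal ≤ Real.exp (lam - 1) * Real.exp (-lam) := by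
      apply mul_le_mul_of_nonneg_left _ (Real.exp_pos _).le
      exact hPS
    rw [← Real.exp_add] at this
    refine this.trans (Real.exp_le_one_iff.mpr (by linarith))
  have : lam * (Q S).toReal ≤ lam * ε := by
    have : lam * ε = c + 2 := by rw [hlam]; field_simp
    linarith
  exact le_of_mul_le_mul_left (by linarith) hlampos

/-- Setwise convergence of probability measures implies convergence of integrals of bounded
measurable functions. -/
lemma aux_tendsto_integral {μs : ℕ → Measure X} {μ : Measure X}
    [∀ n, IsProbabilityMeasure (μs n)] [IsProbabilityMeasure μ]
    (h : ∀ S : Set X, MeasurableSet S → Tendsto (fun n => μs n S) atTop (𝓝 (μ S)))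
    {g : X → ℝ} {C : ℝ} (hg : Measurable g) (hC : ∀ x, |g x| ≤ C) :
    Tendsto (fun n => ∫ x, g x ∂μs n) atTop (𝓝 (∫ x, g x ∂μ)) := by
  set g' : X → ℝ := fun x => g x + C with hg'
  have hg'm : Measurable g' := hg.add measurable_const
  have hg'nn : ∀ x, 0 ≤ g' x := fun x => by have := (abs_le.mp (hC x)).1; simp [hg']; linarith
  have hg'le : ∀ x, g' x ≤ 2 * C := fun x => by
    have := (abs_le.mp (hC x)).2; simp [hg']; linarith
  -- integral in terms of lintegral, for any probability measure
  have key : ∀ (ν : Measure X), IsProbabilityMeasure ν →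
      ∫ x, g x ∂ν = (∫⁻ t in Ioi (0:ℝ), ν {a | t < g' a}).toReal - C := by
    intro ν hν
    have h1 : ∫ x, g x ∂ν = ∫ x, g' x ∂ν - C := by
      have hgint : Integrable g ν :=
        (integrable_const C).mono' hg.aestronglyMeasurable (ae_of_all _ fun x => by
          simpa using hC x)
      rw [hg']
      rw [integral_add hgint (integrable_const C), integral_const]
      simp
    have h2 : ∫ x, g' x ∂ν = (∫⁻ x, ENNReal.ofReal (g' x) ∂ν).toReal := by
      rw [integral_eq_lintegral_of_nonneg_ae (ae_of_all _ hg'nn) hg'm.aestronglyMeasurable]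
    rw [h1, h2, lintegral_eq_lintegral_meas_lt ν (ae_of_all _ hg'nn) hg'm.aemeasurable]
  have hDCT : Tendsto (fun n => ∫⁻ t in Ioi (0:ℝ), μs n {a | t < g' a}) atTop
      (𝓝 (∫⁻ t in Ioi (0:ℝ), μ {a | t < g' a})) := by
    refine tendsto_lintegral_of_dominated_convergence
      (bound := (Ioc (0:ℝ) (2*C + 1)).indicator (fun _ => (1:ℝ≥0∞))) ?_ ?_ ?_ ?_
    · intro n
      exact Antitone.measurable (fun t₁ t₂ hle =>
        measure_mono (fun a ha => lt_of_le_of_lt hle ha))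
    · intro n
      rw [EventuallyLE, ae_restrict_iff' measurableSet_Ioi]
      refine ae_of_all _ (fun t htpos => ?_)
      by_cases ht : t ∈ Ioc (0:ℝ) (2*C + 1)
      · rw [indicator_of_mem ht]; exact prob_le_one
      · rw [indicator_of_notMem ht]
        have ht2 : 2*C + 1 < t := by
          rcases not_and_or.mp (fun hc => ht ⟨hc.1, hc.2⟩) with h' | h'
          · exact absurd htpos h'
          · exact lt_of_not_ge h'
        have : {a | t < g' a} = ∅ := by
          ext a; simp only [mem_setOf_eq, mem_empty_iff_false, iff_false, not_lt]
          exact (hg'le a).trans (by linarith)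
        simp [this]
    · rw [lintegral_indicator measurableSet_Ioc]
      simp [Measure.restrict_apply]
    · refine ae_of_all _ (fun t => h _ (measurableSet_lt measurable_const hg'm))
  have hfin : ∀ (ν : Measure X), IsProbabilityMeasure ν →
      (∫⁻ t in Ioi (0:ℝ), ν {a | t < g' a}) ≠ ⊤ := by
    intro ν hν
    have hle : (∫⁻ t in Ioi (0:ℝ), ν {a | t < g' a}) ≤
        ∫⁻ t in Ioi (0:ℝ), (Ioc (0:ℝ) (2*C + 1)).indicator (fun _ => (1:ℝ≥0∞)) t := by
      refine lintegral_mono_ae ?_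
      rw [ae_restrict_iff' measurableSet_Ioi]
      refine ae_of_all _ (fun t htpos => ?_)
      by_cases ht : t ∈ Ioc (0:ℝ) (2*C + 1)
      · rw [indicator_of_mem ht]; exact prob_le_one
      · rw [indicator_of_notMem ht]
        have ht2 : 2*C + 1 < t := by
          rcases not_and_or.mp (fun hc => ht ⟨hc.1, hc.2⟩) with h' | h'
          · exact absurd htpos h'
          · exact lt_of_not_ge h'
        have : {a | t < g' a} = ∅ := by
          ext a; simp only [mem_setOf_eq, mem_empty_iff_false, iff_false, not_lt]
          exact (hg'le a).trans (by linarith)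
        simp [this]
    refine ne_top_of_le_ne_top ?_ hle
    rw [lintegral_indicator measurableSet_Ioc]
    simp [Measure.restrict_apply]
  have := (ENNReal.tendsto_toReal (hfin μ inferInstance)).comp hDCT
  have htendsto : Tendsto (fun n => (∫⁻ t in Ioi (0:ℝ), μs n {a | t < g' a}).toReal - C) atTop
      (𝓝 ((∫⁻ t in Ioi (0:ℝ), μ {a | t < g' a}).toReal - C)) := this.sub_const C
  have heq : ∀ n, ∫ x, g x ∂μs n
      = (∫⁻ t in Ioi (0:ℝ), μs n {a | t < g' a}).toReal - C :=
    fun n => key (μs n) inferInstance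
  rw [key μ inferInstance]
  simpa [heq] using htendsto

/-- If `∫ s dQ ≤ b + ∫ exp(s-1) dP` for all bounded measurable `s`, then `relEnt Q P ≤ b`. -/
lemma aux_relEnt_le {Q P : Measure X} [IsProbabilityMeasure Q] [IsProbabilityMeasure P]
    (hQP : Q ≪ P) {b : ℝ}
    (hJ : ∀ s : X → ℝ, Measurable s → (∃ C, ∀ x, |s x| ≤ C) →
      ∫ x, s x ∂Q ≤ b + ∫ x, Real.exp (s x - 1) ∂P) :
    relEnt Q P ≤ ENNReal.ofReal b := by
  set f : X → ℝ := fun x => (Q.rnDeriv P x).toReal with hf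
  have hfm : Measurable f := (Measure.measurable_rnDeriv Q P).ennreal_toReal
  have hfnn : ∀ x, 0 ≤ f x := fun x => ENNReal.toReal_nonneg
  set u : X → ℝ := fun x => 1 + Real.log (f x) with hu
  have hum : Measurable u := measurable_const.add (Real.measurable_log.comp hfm)
  -- truncations
  have htb : ∀ k : ℕ, ∀ x, |max (min (u x) k) (-(k:ℝ))| ≤ (k:ℝ) := by
    intro k x
    rw [abs_le]
    refine ⟨le_max_right _ _, max_le (min_le_right _ _) (neg_le_self (Nat.cast_nonneg k))⟩
  have hsdef : ∀ k : ℕ, ∀ x,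
      (fun x => if f x = 0 then -(k:ℝ) else max (min (u x) k) (-(k:ℝ))) x
      = if f x = 0 then -(k:ℝ) else max (min (u x) k) (-(k:ℝ)) := fun _ _ => rfl
  have hsm : ∀ k : ℕ, Measurable
      (fun x => if f x = 0 then -(k:ℝ) else max (min (u x) k) (-(k:ℝ))) := fun k =>
    Measurable.ite (hfm (measurableSet_singleton 0)) measurable_const
      ((hum.min measurable_const).max measurable_const)
  have hsb : ∀ k : ℕ, ∀ x,
      |if f x = 0 then -(k:ℝ) else max (min (u x) k) (-(k:ℝ))| ≤ (k:ℝ) := by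
    intro k x
    by_cases h0 : f x = 0
    · rw [if_pos h0, abs_neg, Nat.abs_cast]
    · rw [if_neg h0]; exact htb k x
  have hfint : Integrable f P := Measure.integrable_toReal_rnDeriv
  have hexp_le : ∀ k : ℕ, ∀ x,
      Real.exp ((if f x = 0 then -(k:ℝ) else max (min (u x) k) (-(k:ℝ))) - 1)
      ≤ f x + Real.exp (-(k:ℝ)) := by
    intro k x
    by_cases h0 : f x = 0
    · rw [if_pos h0, h0, zero_add]
      exact Real.exp_le_exp.mpr (by linarith)
    · rw [if_neg h0]
      have hfpos : 0 < f x := lt_of_le_of_ne (hfnn x) (Ne.symm h0)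
      by_cases hcase : -(k:ℝ) ≤ min (u x) k
      · rw [max_eq_left hcase]
        have h1 : min (u x) (k:ℝ) - 1 ≤ Real.log (f x) := by
          have h2 : min (u x) (k:ℝ) ≤ u x := min_le_left _ _
          rw [hu] at h2; dsimp at h2; linarith
        calc Real.exp (min (u x) (k:ℝ) - 1) ≤ Real.exp (Real.log (f x)) :=
              Real.exp_le_exp.mpr h1
          _ = f x := Real.exp_log hfpos
          _ ≤ f x + Real.exp (-(k:ℝ)) := by linarith [Real.exp_pos (-(k:ℝ))]
      · rw [max_eq_right (le_of_not_ge hcase)]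
        have : Real.exp (-(k:ℝ) - 1) ≤ Real.exp (-(k:ℝ)) := Real.exp_le_exp.mpr (by linarith)
        linarith [hfnn x]
  have hint_f1 : ∫ x, f x ∂P = 1 := by
    rw [hf, Measure.integral_toReal_rnDeriv hQP]
    simp
  have hexp_int_le : ∀ k : ℕ,
      ∫ x, Real.exp ((if f x = 0 then -(k:ℝ) else max (min (u x) k) (-(k:ℝ))) - 1) ∂P
      ≤ 1 + Real.exp (-(k:ℝ)) := by
    intro k
    have hintL : Integrable
        (fun x => Real.exp ((if f x = 0 then -(k:ℝ) else max (min (u x) k) (-(k:ℝ))) - 1)) P := by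
      refine (integrable_const (Real.exp ((k:ℝ) - 1))).mono'
        ((((hsm k).sub measurable_const).exp).aestronglyMeasurable) (ae_of_all _ fun x => ?_)
      rw [Real.norm_eq_abs, abs_of_pos (Real.exp_pos _)]
      exact Real.exp_le_exp.mpr (by have := (abs_le.mp (hsb k x)).2; linarith)
    have hintR : Integrable (fun x => f x + Real.exp (-(k:ℝ))) P :=
      hfint.add (integrable_const _)
    have := integral_mono hintL hintR (hexp_le k)
    rw [integral_add hfint (integrable_const _), integral_const, hint_f1] at this
    simpa using this
  have hsk_bound : ∀ k : ℕ,
      ∫ x, (if f x = 0 then -(k:ℝ) else max (min (u x) k) (-(k:ℝ))) ∂Q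
      ≤ b + 1 + Real.exp (-(k:ℝ)) := by
    intro k
    have := hJ _ (hsm k) ⟨(k:ℝ), hsb k⟩
    linarith [hexp_int_le k]
  have hae_pos : ∀ᵐ x ∂Q, 0 < f x := by
    filter_upwards [Measure.rnDeriv_pos hQP, hQP.ae_le (Measure.rnDeriv_lt_top Q P)]
      with x h1 h2
    exact ENNReal.toReal_pos h1.ne' h2.ne
  have hst : ∀ k : ℕ, (fun x => if f x = 0 then -(k:ℝ) else max (min (u x) k) (-(k:ℝ)))
      =ᵐ[Q] (fun x => max (min (u x) k) (-(k:ℝ))) := by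
    intro k
    filter_upwards [hae_pos] with x hx
    rw [if_neg hx.ne']
  have htint : ∀ k : ℕ, Integrable (fun x => max (min (u x) k) (-(k:ℝ))) Q := by
    intro k
    refine (integrable_const (k:ℝ)).mono'
      (((hum.min measurable_const).max measurable_const)).aestronglyMeasurable
      (ae_of_all _ fun x => ?_)
    rw [Real.norm_eq_abs]; exact htb k x
  have htk_bound : ∀ k : ℕ, ∫ x, max (min (u x) k) (-(k:ℝ)) ∂Q ≤ b + 1 + Real.exp (-(k:ℝ)) := by
    intro k
    rw [← integral_congr_ae (hst k)]
    exact hsk_bound k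
  -- negative part control
  have hneg : ∫⁻ x, ENNReal.ofReal (-(u x)) ∂Q ≤ ENNReal.ofReal (Real.exp (-1)) := by
    have hmeas : AEMeasurable (fun x => ENNReal.ofReal (-(u x))) P :=
      (ENNReal.measurable_ofReal.comp (hum.neg)).aemeasurable
    rw [← MeasureTheory.lintegral_rnDeriv_mul hQP hmeas]
    calc ∫⁻ x, Q.rnDeriv P x * ENNReal.ofReal (-(u x)) ∂P
        ≤ ∫⁻ _, ENNReal.ofReal (Real.exp (-1)) ∂P := by
          refine lintegral_mono_ae ?_
          filter_upwards [Measure.rnDeriv_lt_top Q P] with x hx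
          have hrn : Q.rnDeriv P x = ENNReal.ofReal (f x) := by
            rw [hf]; exact (ENNReal.ofReal_toReal hx.ne).symm
          rw [hrn, ← ENNReal.ofReal_mul (hfnn x)]
          apply ENNReal.ofReal_le_ofReal
          rcases eq_or_lt_of_le (hfnn x) with h0 | hpos
          · rw [← h0]; simp [Real.exp_pos (-1) |>.le]
          · set y := Real.log (f x) with hy
            have hfy : f x = Real.exp y := (Real.exp_log hpos).symm
            have h2 : -(1+y) + 1 ≤ Real.exp (-(1+y)) := Real.add_one_le_exp _
            have hxu : -(u x) = -(1 + y) := by rw [hu]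
            rw [hxu, hfy]
            calc Real.exp y * (-(1+y)) ≤ Real.exp y * (Real.exp (-(1+y)) - 1) := by
                  nlinarith [Real.exp_pos y]
              _ ≤ Real.exp y * Real.exp (-(1+y)) := by nlinarith [Real.exp_pos y]
              _ = Real.exp (-1) := by rw [← Real.exp_add]; ring_nf
      _ = ENNReal.ofReal (Real.exp (-1)) := by simp
  -- pointwise domination of truncations
  have htu : ∀ k : ℕ, ∀ x, |max (min (u x) k) (-(k:ℝ))| ≤ |u x| := by
    intro k x
    have hk : (0:ℝ) ≤ k := Nat.cast_nonneg k
    have h1 : u x ≤ |u x| := le_abs_self _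
    have h3 : (0:ℝ) ≤ |u x| := abs_nonneg _
    rw [abs_le]
    constructor
    · rcases le_or_gt 0 (u x) with hc | hc
      · have hm : (0:ℝ) ≤ min (u x) k := le_min hc hk
        have := le_max_left (min (u x) (k:ℝ)) (-(k:ℝ))
        linarith
      · have hmin : min (u x) (k:ℝ) = u x := min_eq_left (by linarith)
        rw [abs_of_neg hc, hmin, neg_neg]
        exact le_max_left _ _
    · refine max_le ?_ (by linarith)
      rcases le_or_gt 0 (u x) with hc | hc
      · exact (min_le_left _ _).trans h1
      · have hmin : min (u x) (k:ℝ) = u x := min_eq_left (by linarith)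
        rw [hmin]; linarith
  -- positive part bound via the truncation bounds
  have hBk : ∀ k : ℕ, ∫⁻ x, ENNReal.ofReal (-(max (min (u x) k) (-(k:ℝ)))) ∂Q
      ≤ ENNReal.ofReal (Real.exp (-1)) := by
    intro k
    refine le_trans (lintegral_mono fun x => ?_) hneg
    apply ENNReal.ofReal_le_ofReal_iff'.mpr
    rcases le_or_gt 0 (u x) with hc | hc
    · right
      have hm : (0:ℝ) ≤ min (u x) k := le_min hc (Nat.cast_nonneg k)
      have h4 := le_max_left (min (u x) (k:ℝ)) (-(k:ℝ))
      linarith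
    · left
      have hmin : min (u x) (k:ℝ) = u x := min_eq_left (hc.le.trans (Nat.cast_nonneg k))
      have h5 : max (min (u x) (k:ℝ)) (-(k:ℝ)) = max (u x) (-(k:ℝ)) := by rw [hmin]
      rw [h5]
      have h6 := le_max_left (u x) (-(k:ℝ))
      linarith
  have hAk : ∀ k : ℕ, ∫⁻ x, ENNReal.ofReal (max (min (u x) k) (-(k:ℝ))) ∂Q
      ≤ ENNReal.ofReal (b + 2 + Real.exp (-1)) := by
    intro k
    have hAfin : ∫⁻ x, ENNReal.ofReal (max (min (u x) k) (-(k:ℝ))) ∂Q ≠ ⊤ := by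
      refine ne_top_of_le_ne_top (by simp : (ENNReal.ofReal (k:ℝ)) * (Q univ) ≠ ⊤) ?_
      rw [← lintegral_const]
      exact lintegral_mono fun x => ENNReal.ofReal_le_ofReal ((abs_le.mp (htb k x)).2)
    have hBfin : ∫⁻ x, ENNReal.ofReal (-(max (min (u x) k) (-(k:ℝ)))) ∂Q ≠ ⊤ :=
      ne_top_of_le_ne_top ENNReal.ofReal_ne_top (hBk k)
    have hBch := integral_eq_lintegral_pos_part_sub_lintegral_neg_part (htint k)
    have hBle : (∫⁻ x, ENNReal.ofReal (-(max (min (u x) k) (-(k:ℝ)))) ∂Q).toReal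
        ≤ Real.exp (-1) := by
      have := ENNReal.toReal_mono ENNReal.ofReal_ne_top (hBk k)
      rwa [ENNReal.toReal_ofReal (Real.exp_pos _).le] at this
    have hexpk : Real.exp (-(k:ℝ)) ≤ 1 :=
      Real.exp_le_one_iff.mpr (neg_nonpos_of_nonneg (Nat.cast_nonneg k))
    have hAtoReal : (∫⁻ x, ENNReal.ofReal (max (min (u x) k) (-(k:ℝ))) ∂Q).toReal
        ≤ b + 2 + Real.exp (-1) := by
      have h1 := htk_bound k
      rw [hBch] at h1
      linarith
    calc ∫⁻ x, ENNReal.ofReal (max (min (u x) k) (-(k:ℝ))) ∂Q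
        = ENNReal.ofReal ((∫⁻ x, ENNReal.ofReal (max (min (u x) k) (-(k:ℝ))) ∂Q).toReal) :=
          (ENNReal.ofReal_toReal hAfin).symm
      _ ≤ ENNReal.ofReal (b + 2 + Real.exp (-1)) := ENNReal.ofReal_le_ofReal hAtoReal
  -- monotone convergence for the positive part
  have hposU : ∫⁻ x, ENNReal.ofReal (u x) ∂Q ≤ ENNReal.ofReal (b + 2 + Real.exp (-1)) := by
    have hptsup : ∀ x, (⨆ k : ℕ, ENNReal.ofReal (min (u x) k)) = ENNReal.ofReal (u x) := by
      intro x
      refine le_antisymm (iSup_le fun k => ENNReal.ofReal_le_ofReal (min_le_left _ _)) ?_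
      refine le_iSup_of_le ⌈|u x|⌉₊ (le_of_eq ?_)
      rw [min_eq_left ((le_abs_self _).trans ((Nat.le_ceil _).trans (le_refl _)))]
    have hmono : Monotone (fun k : ℕ => fun x => ENNReal.ofReal (min (u x) k)) := by
      intro k k' hkk x
      exact ENNReal.ofReal_le_ofReal (min_le_min (le_refl _) (Nat.cast_le.mpr hkk))
    have hmeas : ∀ k : ℕ, Measurable (fun x => ENNReal.ofReal (min (u x) k)) :=
      fun k => ENNReal.measurable_ofReal.comp (hum.min measurable_const)
    calc ∫⁻ x, ENNReal.ofReal (u x) ∂Q = ∫⁻ x, ⨆ k : ℕ, ENNReal.ofReal (min (u x) k) ∂Q := by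
          refine lintegral_congr fun x => (hptsup x).symm
      _ = ⨆ k : ℕ, ∫⁻ x, ENNReal.ofReal (min (u x) k) ∂Q := lintegral_iSup hmeas hmono
      _ ≤ ENNReal.ofReal (b + 2 + Real.exp (-1)) := by
          refine iSup_le fun k => le_trans (lintegral_mono fun x => ?_) (hAk k)
          exact ENNReal.ofReal_le_ofReal (le_max_left _ _)
  -- integrability of u
  have hu_int : Integrable u Q := by
    refine ⟨hum.aestronglyMeasurable, (hasFiniteIntegral_iff_norm u).mpr ?_⟩
    have hsplit : ∀ x, ENNReal.ofReal ‖u x‖ ≤ ENNReal.ofReal (u x) + ENNReal.ofReal (-(u x)) := by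
      intro x
      rcases le_or_gt 0 (u x) with hc | hc
      · rw [Real.norm_eq_abs, abs_of_nonneg hc]; exact le_self_add
      · rw [Real.norm_eq_abs, abs_of_neg hc]; exact le_add_self
    calc ∫⁻ x, ENNReal.ofReal ‖u x‖ ∂Q
        ≤ ∫⁻ x, (ENNReal.ofReal (u x) + ENNReal.ofReal (-(u x))) ∂Q := lintegral_mono hsplit
      _ = ∫⁻ x, ENNReal.ofReal (u x) ∂Q + ∫⁻ x, ENNReal.ofReal (-(u x)) ∂Q :=
          lintegral_add_left (ENNReal.measurable_ofReal.comp hum) _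
      _ < ⊤ := ENNReal.add_lt_top.mpr ⟨lt_of_le_of_lt hposU (by simp),
          lt_of_le_of_lt hneg (by simp)⟩
  -- dominated convergence to get the value bound
  have hlim : ∀ x, Tendsto (fun k : ℕ => max (min (u x) k) (-(k:ℝ))) atTop (𝓝 (u x)) := by
    intro x
    refine tendsto_atTop_of_eventually_const (i₀ := ⌈|u x|⌉₊) fun k hk => ?_
    have hceil : |u x| ≤ (k:ℝ) := (Nat.le_ceil _).trans (Nat.cast_le.mpr hk)
    have h1 : u x ≤ (k:ℝ) := (le_abs_self _).trans hceil
    have h2 : -(k:ℝ) ≤ u x := by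
      have := neg_abs_le (u x); linarith
    rw [min_eq_left h1, max_eq_left h2]
  have hDCTval : Tendsto (fun k : ℕ => ∫ x, max (min (u x) k) (-(k:ℝ)) ∂Q) atTop
      (𝓝 (∫ x, u x ∂Q)) := by
    refine tendsto_integral_of_dominated_convergence (fun x => |u x|)
      (fun k => ((hum.min measurable_const).max measurable_const).aestronglyMeasurable)
      hu_int.abs (fun k => ae_of_all _ fun x => ?_) (ae_of_all _ hlim)
    rw [Real.norm_eq_abs]
    exact htu k x
  have hexp0 : Tendsto (fun k : ℕ => Real.exp (-(k:ℝ))) atTop (𝓝 0) :=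
    Real.tendsto_exp_atBot.comp (tendsto_neg_atBot_iff.mpr tendsto_natCast_atTop_atTop)
  have hRHS : Tendsto (fun k : ℕ => b + 1 + Real.exp (-(k:ℝ))) atTop (𝓝 (b + 1)) := by
    have := (tendsto_const_nhds (x := b + 1) (f := atTop (α := ℕ))).add hexp0
    simpa using this
  have hval_u : ∫ x, u x ∂Q ≤ b + 1 := le_of_tendsto_of_tendsto' hDCTval hRHS htk_bound
  -- conclusion
  have hllr_eq : llr Q P = fun x => u x - 1 := by
    funext x
    rw [llr_def, hu]
    dsimp
    ring
  have hint_llr : Integrable (llr Q P) Q := by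
    rw [hllr_eq]; exact hu_int.sub (integrable_const 1)
  have hval_llr : ∫ x, llr Q P x ∂Q ≤ b := by
    have : ∫ x, llr Q P x ∂Q = ∫ x, u x ∂Q - 1 := by
      rw [hllr_eq, integral_sub hu_int (integrable_const 1), integral_const]
      simp
    linarith
  rw [relEnt, if_pos ⟨hQP, hint_llr⟩]
  exact ENNReal.ofReal_le_ofReal hval_llr

end auxlemmas

section limitconstruction

variable {X : Type*} [MeasurableSpace X] [TopologicalSpace X] [PolishSpace X] [BorelSpace X]

/-- Construction of a setwise limit along a subsequence, under uniform absolute continuity. -/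
lemma aux_limit (P : Measure X) [IsProbabilityMeasure P] (Qs : ℕ → Measure X)
    [∀ n, IsProbabilityMeasure (Qs n)]
    (huac : ∀ ε : ℝ, 0 < ε → ∃ δ : ℝ, 0 < δ ∧ ∀ n, ∀ S : Set X, MeasurableSet S →
      (P S).toReal ≤ δ → (Qs n S).toReal ≤ ε) :
    ∃ (μ : Measure X), IsProbabilityMeasure μ ∧ ∃ φ : ℕ → ℕ, StrictMono φ ∧
      ∀ S : Set X, MeasurableSet S → Tendsto (fun n => Qs (φ n) S) atTop (𝓝 (μ S)) := by
  classical
  -- countable measure-dense family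
  obtain ⟨𝒜, hcount, hdense⟩ := MeasureTheory.exists_countable_measureDense (μ := P)
  obtain ⟨e, he⟩ := hcount.exists_eq_range hdense.nonempty
  have hem : ∀ k, MeasurableSet (e k) := fun k => hdense.measurable _ (he ▸ mem_range_self k)
  -- diagonal extraction via compactness of [0,1]^ℕ
  set y : ℕ → ℕ → ℝ := fun n k => (Qs n (e k)).toReal with hy
  have hyK : ∀ n, y n ∈ Set.pi univ (fun _ : ℕ => Icc (0:ℝ) 1) := by
    intro n k _
    refine ⟨ENNReal.toReal_nonneg, ?_⟩
    have h1 : Qs n (e k) ≤ 1 := prob_le_one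
    have := ENNReal.toReal_mono ENNReal.one_ne_top h1
    simpa using this
  have hK : IsCompact (Set.pi univ (fun _ : ℕ => Icc (0:ℝ) 1)) :=
    isCompact_univ_pi fun _ => isCompact_Icc
  obtain ⟨a, -, φ, hφ, hconv⟩ := hK.isSeqCompact hyK
  have haK : ∀ k, Tendsto (fun n => y (φ n) k) atTop (𝓝 (a k)) := by
    intro k
    have := tendsto_pi_nhds.mp hconv k
    exact this
  -- Cauchy for every measurable set
  have hz : ∀ S : Set X, MeasurableSet S → CauchySeq (fun n => (Qs (φ n) S).toReal) := by
    intro S hS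
    rw [Metric.cauchySeq_iff]
    intro ε hε
    obtain ⟨δ, hδ, huacδ⟩ := huac (ε/4) (by linarith)
    obtain ⟨A, hA𝒜, hPA⟩ := hdense.approx S hS (measure_ne_top _ _) δ hδ
    obtain ⟨k, hk⟩ : ∃ k, e k = A := by
      have : A ∈ range e := he ▸ hA𝒜
      exact this.imp fun k h => h
    have hPA' : (P (symmDiff S A)).toReal ≤ δ :=
      le_of_lt ((ENNReal.lt_ofReal_iff_toReal_lt (measure_ne_top _ _)).mp hPA)
    have hAm : MeasurableSet A := hk ▸ hem k
    have hnear : ∀ n, |(Qs n S).toReal - (Qs n A).toReal| ≤ ε/4 := by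
      intro n
      refine le_trans (aux_abs_sub (Qs n)) ?_
      exact huacδ n _ (hS.symmDiff hAm) hPA'
    have hcauchyA : CauchySeq (fun n => (Qs (φ n) A).toReal) := by
      have h7 := haK k
      simp only [hy] at h7
      rw [hk] at h7
      exact h7.cauchySeq
    rw [Metric.cauchySeq_iff] at hcauchyA
    obtain ⟨N, hN⟩ := hcauchyA (ε/4) (by linarith)
    refine ⟨N, fun m hm n hn => ?_⟩
    have h1 := hnear (φ m)
    have h2 := hnear (φ n)
    have h3 := hN m hm n hn
    rw [Real.dist_eq] at h3 ⊢
    calc |(Qs (φ m) S).toReal - (Qs (φ n) S).toReal|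
        ≤ |(Qs (φ m) S).toReal - (Qs (φ m) A).toReal|
          + |(Qs (φ m) A).toReal - (Qs (φ n) A).toReal|
          + |(Qs (φ n) A).toReal - (Qs (φ n) S).toReal| := by
          have := abs_sub_le ((Qs (φ m) S).toReal) ((Qs (φ m) A).toReal) ((Qs (φ n) S).toReal)
          have h4 := abs_sub_le ((Qs (φ m) A).toReal) ((Qs (φ n) A).toReal) ((Qs (φ n) S).toReal)
          linarith
      _ < ε := by
          have h2' : |(Qs (φ n) A).toReal - (Qs (φ n) S).toReal| ≤ ε/4 := by
            rw [abs_sub_comm]; exact h2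
          linarith
  have hlim : ∀ S : Set X, MeasurableSet S →
      ∃ l, Tendsto (fun n => (Qs (φ n) S).toReal) atTop (𝓝 l) :=
    fun S hS => cauchySeq_tendsto_of_complete (hz S hS)
  set L : Set X → ℝ := fun S => if h : MeasurableSet S then (hlim S h).choose else 0 with hLdef
  have hL : ∀ S : Set X, (hS : MeasurableSet S) →
      Tendsto (fun n => (Qs (φ n) S).toReal) atTop (𝓝 (L S)) := by
    intro S hS
    rw [hLdef]
    simp only [dif_pos hS]
    exact (hlim S hS).choose_spec
  have hLnn : ∀ S : Set X, MeasurableSet S → 0 ≤ L S := fun S hS =>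
    ge_of_tendsto (hL S hS) (Eventually.of_forall fun n => ENNReal.toReal_nonneg)
  have hLuniv : L univ = 1 := by
    refine tendsto_nhds_unique (hL univ MeasurableSet.univ) ?_
    have : ∀ n, (Qs (φ n) univ).toReal = 1 := fun n => by simp
    simpa [this] using tendsto_const_nhds
  have hLempty : L ∅ = 0 := by
    refine tendsto_nhds_unique (hL ∅ MeasurableSet.empty) (by simpa using tendsto_const_nhds)
  have hLadd : ∀ S T : Set X, MeasurableSet S → MeasurableSet T → Disjoint S T →
      L (S ∪ T) = L S + L T := by
    intro S T hS hT hd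
    refine tendsto_nhds_unique (hL _ (hS.union hT)) ?_
    have heq : ∀ n, (Qs (φ n) (S ∪ T)).toReal = (Qs (φ n) S).toReal + (Qs (φ n) T).toReal := by
      intro n
      rw [measure_union hd hT, ENNReal.toReal_add (measure_ne_top _ _) (measure_ne_top _ _)]
    simp_rw [heq]
    exact (hL S hS).add (hL T hT)
  have hLuac : ∀ ε : ℝ, 0 < ε → ∃ δ : ℝ, 0 < δ ∧ ∀ S : Set X, MeasurableSet S →
      (P S).toReal ≤ δ → L S ≤ ε := by
    intro ε hε
    obtain ⟨δ, hδ, huacδ⟩ := huac ε hε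
    exact ⟨δ, hδ, fun S hS hPS => le_of_tendsto (hL S hS)
      (Eventually.of_forall fun n => huacδ (φ n) S hS hPS)⟩
  -- sigma additivity
  have hsigma : ∀ (g : ℕ → Set X), (∀ i, MeasurableSet (g i)) → Pairwise (Function.onFun Disjoint g) →
      ENNReal.ofReal (L (⋃ i, g i)) = ∑' i, ENNReal.ofReal (L (g i)) := by
    intro g hgm hdisj
    have hU : MeasurableSet (⋃ i, g i) := MeasurableSet.iUnion hgm
    -- finite additivity over ranges
    have hfin : ∀ k : ℕ, L (⋃ i ∈ Finset.range k, g i) = ∑ i ∈ Finset.range k, L (g i) := by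
      intro k
      induction k with
      | zero => simpa using hLempty
      | succ k ih =>
        rw [Finset.sum_range_succ, ← ih]
        have hsets : (⋃ i ∈ Finset.range (k+1), g i)
            = (⋃ i ∈ Finset.range k, g i) ∪ g k := by
          ext x
          simp only [Finset.mem_range, Nat.lt_succ_iff_lt_or_eq, mem_iUnion, mem_union, exists_prop]
          constructor
          · rintro ⟨i, hi | rfl, hx⟩
            · exact Or.inl ⟨i, hi, hx⟩
            · exact Or.inr hx
          · rintro (⟨i, hi, hx⟩ | hx)
            · exact ⟨i, Or.inl hi, hx⟩
            · exact ⟨k, Or.inr rfl, hx⟩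
        rw [hsets]
        refine hLadd _ _ (Finset.measurableSet_biUnion _ (fun i _ => hgm i)) (hgm k) ?_
        refine Set.disjoint_left.mpr fun x hx hxk => ?_
        obtain ⟨i, hi, hxi⟩ := mem_iUnion₂.mp hx
        exact Set.disjoint_left.mp (hdisj (Nat.ne_of_lt (Finset.mem_range.mp hi))) hxi hxk
    -- tail decomposition
    have htailm : ∀ k : ℕ, MeasurableSet (⋃ j, g (j + k)) :=
      fun k => MeasurableSet.iUnion fun j => hgm _
    have hUsplit : ∀ k : ℕ, (⋃ i, g i) = (⋃ i ∈ Finset.range k, g i) ∪ (⋃ j, g (j + k)) := by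
      intro k
      ext x
      simp only [mem_iUnion, mem_union, Finset.mem_range, exists_prop]
      constructor
      · rintro ⟨i, hx⟩
        rcases lt_or_ge i k with hik | hik
        · exact Or.inl ⟨i, hik, hx⟩
        · exact Or.inr ⟨i - k, by rwa [Nat.sub_add_cancel hik]⟩
      · rintro (⟨i, _, hx⟩ | ⟨j, hx⟩)
        · exact ⟨i, hx⟩
        · exact ⟨j + k, hx⟩
    have hdisj2 : ∀ k : ℕ, Disjoint (⋃ i ∈ Finset.range k, g i) (⋃ j, g (j + k)) := by
      intro k
      refine Set.disjoint_left.mpr fun x hx hx' => ?_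
      obtain ⟨i, hi, hxi⟩ := mem_iUnion₂.mp hx
      obtain ⟨j, hxj⟩ := mem_iUnion.mp hx'
      have hij : i ≠ j + k := by
        have := Finset.mem_range.mp hi
        omega
      exact Set.disjoint_left.mp (hdisj hij) hxi hxj
    have hdecomp : ∀ k : ℕ, L (⋃ i, g i)
        = (∑ i ∈ Finset.range k, L (g i)) + L (⋃ j, g (j + k)) := by
      intro k
      rw [← hfin k, ← hLadd _ _ (Finset.measurableSet_biUnion _ (fun i _ => hgm i)) (htailm k)
        (hdisj2 k), ← hUsplit k]
    have hsumfin : ∑' i, P (g i) ≠ ⊤ := by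
      rw [← measure_iUnion hdisj hgm]
      exact measure_ne_top _ _
    have hPtail : Tendsto (fun k => (P (⋃ j, g (j + k))).toReal) atTop (𝓝 0) := by
      have h1 : Tendsto (fun k => P (⋃ j, g (j + k))) atTop (𝓝 0) := by
        refine tendsto_of_tendsto_of_tendsto_of_le_of_le tendsto_const_nhds
          (ENNReal.tendsto_sum_nat_add (fun i => P (g i)) hsumfin)
          (fun k => zero_le) (fun k => measure_iUnion_le _)
      have := (ENNReal.tendsto_toReal (by simp : (0:ℝ≥0∞) ≠ ⊤)).comp h1
      simpa [Function.comp_def] using this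
    have hLtail0 : Tendsto (fun k => L (⋃ j, g (j + k))) atTop (𝓝 0) := by
      rw [Metric.tendsto_atTop]
      intro ε hε
      obtain ⟨δ, hδ, hLδ⟩ := hLuac (ε/2) (by linarith)
      rw [Metric.tendsto_atTop] at hPtail
      obtain ⟨N, hN⟩ := hPtail δ hδ
      refine ⟨N, fun k hk => ?_⟩
      have h1 : (P (⋃ j, g (j + k))).toReal ≤ δ := by
        have := hN k hk
        rw [Real.dist_eq, sub_zero] at this
        exact (le_abs_self _).trans this.le
      have h2 := hLδ _ (htailm k) h1
      have h3 := hLnn _ (htailm k)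
      rw [Real.dist_eq, sub_zero, abs_of_nonneg h3]
      linarith
    have htendsto : Tendsto (fun k => ∑ i ∈ Finset.range k, L (g i)) atTop
        (𝓝 (L (⋃ i, g i))) := by
      have h1 : Tendsto (fun k => L (⋃ i, g i) - L (⋃ j, g (j + k))) atTop
          (𝓝 (L (⋃ i, g i) - 0)) := tendsto_const_nhds.sub hLtail0
      rw [sub_zero] at h1
      refine h1.congr fun k => ?_
      rw [hdecomp k]
      ring
    have hsummable : Summable (fun i => L (g i)) := by
      refine summable_of_sum_range_le (c := L (⋃ i, g i)) (fun i => hLnn _ (hgm i)) fun k => ?_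
      rw [hdecomp k]
      linarith [hLnn _ (htailm k)]
    have htsum : ∑' i, L (g i) = L (⋃ i, g i) :=
      tendsto_nhds_unique hsummable.hasSum.tendsto_sum_nat htendsto
    rw [← htsum, ENNReal.ofReal_tsum_of_nonneg (fun i => hLnn _ (hgm i)) hsummable]

  set μ : Measure X := Measure.ofMeasurable (fun S _ => ENNReal.ofReal (L S))
    (by simp [hLempty]) (fun g hg hd => hsigma g hg hd) with hμ
  have hμapp : ∀ S : Set X, MeasurableSet S → μ S = ENNReal.ofReal (L S) :=
    fun S hS => Measure.ofMeasurable_apply S hS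
  have hprob : IsProbabilityMeasure μ := ⟨by rw [hμapp univ MeasurableSet.univ, hLuniv]; simp⟩
  refine ⟨μ, hprob, φ, hφ, fun S hS => ?_⟩
  rw [hμapp S hS]
  have h8 : Tendsto (fun n => ENNReal.ofReal ((Qs (φ n) S).toReal)) atTop
      (𝓝 (ENNReal.ofReal (L S))) := (ENNReal.continuous_ofReal.tendsto _).comp (hL S hS)
  have h9 : ∀ n, ENNReal.ofReal ((Qs (φ n) S).toReal) = Qs (φ n) S :=
    fun n => ENNReal.ofReal_toReal (measure_ne_top _ _)
  simp only [h9] at h8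
  exact h8


end limitconstruction

/-- **Existence of the I-projection.** On a Polish space, if `Γ` is a nonempty set of Borel
probability measures that is closed in the weak topology, then some `R* ∈ Γ` attains
`inf_{R ∈ Γ} D(R‖P)`. -/
theorem iProjection_exists {X : Type*} [MeasurableSpace X] [TopologicalSpace X]
    [PolishSpace X] [BorelSpace X]
    (P : Measure X) [IsProbabilityMeasure P]
    (Γ : Set (ProbabilityMeasure X)) (hne : Γ.Nonempty) (hclosed : IsClosed Γ) :
    ∃ Rstar ∈ Γ, relEnt (Rstar : Measure X) P = ⨅ R ∈ Γ, relEnt (R : Measure X) P := by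
  classical
  set m : ℝ≥0∞ := ⨅ R ∈ Γ, relEnt (R : Measure X) P with hm
  by_cases hmtop : m = ⊤
  · obtain ⟨R₀, hR₀⟩ := hne
    refine ⟨R₀, hR₀, ?_⟩
    have h1 : m ≤ relEnt (R₀ : Measure X) P := iInf₂_le R₀ hR₀
    rw [hmtop] at h1 ⊢
    exact top_unique h1
  -- minimizing sequence
  have hseq : ∀ n : ℕ, ∃ R ∈ Γ, relEnt (R : Measure X) P
      < m + ENNReal.ofReal ((n+1:ℝ)⁻¹) := by
    intro n
    by_contra hcon
    push_neg at hcon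
    have h1 : m + ENNReal.ofReal ((n+1:ℝ)⁻¹) ≤ m := hm ▸ le_iInf₂ hcon
    have h2 : m < m + ENNReal.ofReal ((n+1:ℝ)⁻¹) := by
      refine ENNReal.lt_add_right hmtop ?_
      simp only [ne_eq, ENNReal.ofReal_eq_zero, not_le]
      positivity
    exact absurd (lt_of_lt_of_le h2 h1) (lt_irrefl m)
  choose Q hQΓ hQlt using hseq
  -- extract components of relEnt bounds
  have hcomp : ∀ n, ((Q n : Measure X) ≪ P ∧ Integrable (llr (Q n : Measure X) P) (Q n)) := by
    intro n
    by_contra hcon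
    have := hQlt n
    rw [relEnt, if_neg hcon] at this
    exact absurd this (by simp [ENNReal.add_ne_top, hmtop])
  have hac : ∀ n, (Q n : Measure X) ≪ P := fun n => (hcomp n).1
  have hint : ∀ n, Integrable (llr (Q n : Measure X) P) (Q n) := fun n => (hcomp n).2
  have hDbound : ∀ n, ∫ x, llr (Q n : Measure X) P x ∂(Q n : Measure X)
      ≤ m.toReal + (n+1:ℝ)⁻¹ := by
    intro n
    have h1 := hQlt n
    rw [relEnt, if_pos (hcomp n)] at h1
    rcases le_or_gt (∫ x, llr (Q n : Measure X) P x ∂(Q n : Measure X)) 0 with h2 | h2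
    · have : (0:ℝ) ≤ m.toReal + (n+1:ℝ)⁻¹ := by positivity
      linarith
    · have h3 := ENNReal.toReal_mono (by simp [hmtop] : m + ENNReal.ofReal ((n+1:ℝ)⁻¹) ≠ ⊤) h1.le
      rw [ENNReal.toReal_ofReal h2.le, ENNReal.toReal_add hmtop (by simp),
        ENNReal.toReal_ofReal (by positivity)] at h3
      exact h3
  -- uniform bound on relative entropies
  set c : ℝ := m.toReal + 1 with hc
  have hcnn : (0:ℝ) ≤ c := by positivity
  have hDc : ∀ n, ∫ x, llr (Q n : Measure X) P x ∂(Q n : Measure X) ≤ c := by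
    intro n
    refine (hDbound n).trans ?_
    rw [hc]
    have : ((n:ℝ)+1)⁻¹ ≤ 1 := by
      rw [inv_le_one_iff₀]
      right; linarith [Nat.cast_nonneg (α := ℝ) n]
    linarith
  -- uniform absolute continuity
  have huac : ∀ ε : ℝ, 0 < ε → ∃ δ : ℝ, 0 < δ ∧ ∀ n, ∀ S : Set X, MeasurableSet S →
      (P S).toReal ≤ δ → ((Q n : Measure X) S).toReal ≤ ε := by
    intro ε hε
    exact ⟨Real.exp (-((c + 2) / ε)), Real.exp_pos _, fun n S hS hPS =>
      aux_uac (hac n) (hint n) hcnn (hDc n) hε hS hPS⟩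
  -- setwise limit along a subsequence
  obtain ⟨μ, hμprob, φ, hφ, hconv⟩ := aux_limit P (fun n => (Q n : Measure X)) huac
  set Qlim : ProbabilityMeasure X := ⟨μ, hμprob⟩ with hQlim
  -- weak convergence
  have hweak : Tendsto (fun n => Q (φ n)) atTop (𝓝 Qlim) := by
    rw [ProbabilityMeasure.tendsto_iff_forall_integral_tendsto]
    intro g
    exact aux_tendsto_integral (μs := fun n => (Q (φ n) : Measure X)) (μ := μ)
      (fun S hS => hconv S hS) g.continuous.measurable
      (C := ‖g‖) (fun x => by
        have := g.norm_coe_le_norm x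
        rwa [Real.norm_eq_abs] at this)
  have hmem : Qlim ∈ Γ :=
    hclosed.mem_of_tendsto hweak (Eventually.of_forall fun n => hQΓ (φ n))
  -- absolute continuity of the limit
  have hlimac : μ ≪ P := by
    refine Measure.AbsolutelyContinuous.mk fun S hS hPS => ?_
    have h1 : Tendsto (fun n => ((Q (φ n) : Measure X)) S) atTop (𝓝 (μ S)) := hconv S hS
    have h2 : ∀ n, ((Q (φ n) : Measure X)) S = 0 := fun n => hac (φ n) hPS
    simp only [h2] at h1
    exact tendsto_nhds_unique h1 tendsto_const_nhds
  -- entropy bound for the limit via the variational inequality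
  have hJ : ∀ s : X → ℝ, Measurable s → (∃ C, ∀ x, |s x| ≤ C) →
      ∫ x, s x ∂μ ≤ m.toReal + ∫ x, Real.exp (s x - 1) ∂P := by
    intro s hs ⟨C, hCb⟩
    have hLHS : Tendsto (fun n => ∫ x, s x ∂(Q (φ n) : Measure X)) atTop (𝓝 (∫ x, s x ∂μ)) :=
      aux_tendsto_integral (fun S hS => hconv S hS) hs hCb
    have hRHSn : ∀ n, ∫ x, s x ∂(Q (φ n) : Measure X)
        ≤ (m.toReal + ((φ n : ℝ)+1)⁻¹) + ∫ x, Real.exp (s x - 1) ∂P := by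
      intro n
      have h1 := aux_integral_le (hac (φ n)) (hint (φ n)) hs hCb
      have h2 := hDbound (φ n)
      push_cast at h2
      linarith
    have hRHS : Tendsto (fun n => (m.toReal + ((φ n : ℝ)+1)⁻¹) + ∫ x, Real.exp (s x - 1) ∂P)
        atTop (𝓝 ((m.toReal + 0) + ∫ x, Real.exp (s x - 1) ∂P)) := by
      refine Tendsto.add_const _ (tendsto_const_nhds.add ?_)
      have hsq : ∀ n : ℕ, ((φ n : ℝ)+1)⁻¹ ≤ ((n:ℝ)+1)⁻¹ := by
        intro n
        have h4 : n ≤ φ n := hφ.le_apply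
        have h3 : (n:ℝ) + 1 ≤ (φ n : ℝ) + 1 := by
          have h5 : (n:ℝ) ≤ (φ n : ℝ) := Nat.cast_le.mpr h4
          linarith
        exact inv_anti₀ (by positivity) h3
      refine tendsto_of_tendsto_of_tendsto_of_le_of_le tendsto_const_nhds
        ?_ (fun n => by positivity) hsq
      exact tendsto_one_div_add_atTop_nhds_zero_nat.congr fun n => by rw [one_div]
    have := le_of_tendsto_of_tendsto' hLHS hRHS hRHSn
    simpa using this
  have hle : relEnt (Qlim : Measure X) P ≤ m := by
    have h1 : relEnt (Qlim : Measure X) P ≤ ENNReal.ofReal m.toReal :=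
      aux_relEnt_le hlimac hJ
    rwa [ENNReal.ofReal_toReal hmtop] at h1
  have hge : m ≤ relEnt (Qlim : Measure X) P := iInf₂_le Qlim hmem
  exact ⟨Qlim, hmem, le_antisymm hle hge⟩
end

section
/- Let Q be a probability measure on ℝ^d such that ∫ e^{⟨λ,x⟩} dQ(x) < +∞ for all λ in a neighborhood of the origin, and let α := ∫ x dQ(x) ∈ ℝ^d be its mean. Then for every ε > 0, liminf_{n→∞} −(1/n) log Q^{⊗n}{ x^n : (1/n)∑_{i=1}^n x_i ∉ B_ε(α) } > 0; that is, ℙ{ (1/n)∑_{i=1}^n X_i ∉ B_ε(α) } → 0 exponentially fast for i.i.d. X_i ∼ Q, where B_ε(α) is the open ε-ball around α for the sup-norm on ℝ^d. -/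
open MeasureTheory Filter Topology
open scoped ENNReal NNReal Classical

section AuxSec
set_option linter.unusedSectionVars false
open Real
variable {Ω : Type*} [MeasurableSpace Ω] {μ : Measure Ω} [IsProbabilityMeasure μ]


lemma aux_abs_mul_exp_le {a t t0 : ℝ} (ht0 : 0 < t0) (ht : |t| ≤ t0 / 2) :
    |a * Real.exp (t * a)| ≤ 2 / t0 * (Real.exp (t0 * a) + Real.exp (-(t0 * a))) := by
  have h1 : |a * Real.exp (t * a)| = |a| * Real.exp (t * a) := by
    rw [abs_mul, abs_of_pos (exp_pos _)]
  have h2 : t * a ≤ t0 / 2 * |a| := by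
    calc t * a ≤ |t * a| := le_abs_self _
      _ = |t| * |a| := abs_mul _ _
      _ ≤ t0 / 2 * |a| := mul_le_mul_of_nonneg_right ht (abs_nonneg a)
  set u := t0 / 2 * |a| with hu
  have hu0 : 0 ≤ u := by positivity
  have h3 : |a| * Real.exp (t * a) ≤ |a| * Real.exp u :=
    mul_le_mul_of_nonneg_left (exp_le_exp.2 h2) (abs_nonneg a)
  have h4 : |a| * Real.exp u = 2 / t0 * (u * Real.exp u) := by
    rw [hu]; field_simp
  have hue : u ≤ Real.exp u := by linarith [Real.add_one_le_exp u]
  have h5 : u * Real.exp u ≤ Real.exp u * Real.exp u :=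
    mul_le_mul_of_nonneg_right hue (exp_pos _).le
  have h6 : Real.exp u * Real.exp u = Real.exp (t0 * |a|) := by
    rw [← Real.exp_add]; congr 1; rw [hu]; ring
  have h7 : Real.exp (t0 * |a|) ≤ Real.exp (t0 * a) + Real.exp (-(t0 * a)) := by
    rcases le_total 0 a with h | h
    · rw [abs_of_nonneg h]; exact le_add_of_nonneg_right (exp_pos _).le
    · rw [abs_of_nonpos h, show t0 * -a = -(t0 * a) by ring]
      exact le_add_of_nonneg_left (exp_pos _).le
  calc |a * Real.exp (t * a)| = |a| * Real.exp (t * a) := h1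
    _ ≤ |a| * Real.exp u := h3
    _ = 2 / t0 * (u * Real.exp u) := h4
    _ ≤ 2 / t0 * (Real.exp u * Real.exp u) := by
        apply mul_le_mul_of_nonneg_left h5; positivity
    _ = 2 / t0 * Real.exp (t0 * |a|) := by rw [h6]
    _ ≤ _ := by apply mul_le_mul_of_nonneg_left h7; positivity

lemma integrable_exp_mul_of_le {X : Ω → ℝ} (hX : AEStronglyMeasurable X μ) {t0 t : ℝ}
    (h1 : Integrable (fun ω => Real.exp (t0 * X ω)) μ)
    (h2 : Integrable (fun ω => Real.exp (-(t0 * X ω))) μ)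
    (ht : |t| ≤ t0) :
    Integrable (fun ω => Real.exp (t * X ω)) μ := by
  refine (h1.add h2).mono'
    (Real.continuous_exp.comp_aestronglyMeasurable (hX.const_mul t))
    (ae_of_all _ fun ω => ?_)
  rw [Real.norm_eq_abs, abs_of_pos (exp_pos _)]
  have hta : t * X ω ≤ t0 * |X ω| := by
    calc t * X ω ≤ |t * X ω| := le_abs_self _
      _ = |t| * |X ω| := abs_mul _ _
      _ ≤ t0 * |X ω| := mul_le_mul_of_nonneg_right ht (abs_nonneg _)
  refine (exp_le_exp.2 hta).trans ?_
  rcases le_total 0 (X ω) with h | h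
  · rw [abs_of_nonneg h]; exact le_add_of_nonneg_right (exp_pos _).le
  · rw [abs_of_nonpos h, show t0 * -X ω = -(t0 * X ω) by ring]
    exact le_add_of_nonneg_left (exp_pos _).le

lemma integrable_and_hasDerivAt {X : Ω → ℝ} (hX : AEStronglyMeasurable X μ) {t0 : ℝ}
    (ht0 : 0 < t0)
    (h1 : Integrable (fun ω => Real.exp (t0 * X ω)) μ)
    (h2 : Integrable (fun ω => Real.exp (-(t0 * X ω))) μ) :
    Integrable X μ ∧
      HasDerivAt (fun t : ℝ => ∫ ω, Real.exp (t * X ω) ∂μ) (∫ ω, X ω ∂μ) 0 := by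
  have key := hasDerivAt_integral_of_dominated_loc_of_deriv_le (μ := μ)
    (F := fun t ω => Real.exp (t * X ω)) (F' := fun t ω => X ω * Real.exp (t * X ω))
    (x₀ := 0) (s := Metric.ball 0 (t0 / 2))
    (bound := fun ω => 2 / t0 * (Real.exp (t0 * X ω) + Real.exp (-(t0 * X ω))))
    (Metric.ball_mem_nhds 0 (half_pos ht0))
    (Filter.Eventually.of_forall fun t =>
      Real.continuous_exp.comp_aestronglyMeasurable (hX.const_mul t))
    (by simp only [zero_mul, Real.exp_zero]; exact integrable_const 1)
    (hX.mul (Real.continuous_exp.comp_aestronglyMeasurable (hX.const_mul 0)))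
    (ae_of_all _ fun ω t ht => by
      have ht' : |t| ≤ t0 / 2 := by
        rw [Metric.mem_ball, Real.dist_eq, sub_zero] at ht; exact ht.le
      have := aux_abs_mul_exp_le (a := X ω) ht0 ht'
      rw [abs_mul, abs_of_pos (exp_pos _)] at this
      simpa [Real.norm_eq_abs] using this)
    ((h1.add h2).const_mul (2 / t0))
    (ae_of_all _ fun ω t _ => by
      have := (hasDerivAt_mul_const (X ω)).exp (x := t)
      simpa [mul_comm] using this)
  obtain ⟨hint, hderiv⟩ := key
  constructor
  · simpa using hint
  · simpa using hderiv


lemma exists_chernoff_factor {X : Ω → ℝ} (hX : AEStronglyMeasurable X μ) {t0 : ℝ}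
    (ht0 : 0 < t0)
    (h1 : Integrable (fun ω => Real.exp (t0 * X ω)) μ)
    (h2 : Integrable (fun ω => Real.exp (-(t0 * X ω))) μ)
    {ε : ℝ} (hε : 0 < ε) :
    ∃ t c : ℝ, 0 < t ∧ 0 < c ∧ Integrable (fun ω => Real.exp (t * X ω)) μ ∧
      Real.exp (-(t * ((∫ ω, X ω ∂μ) + ε))) * (∫ ω, Real.exp (t * X ω) ∂μ) ≤ Real.exp (-c) := by
  obtain ⟨hXint, hD⟩ := integrable_and_hasDerivAt hX ht0 h1 h2
  set m := ∫ ω, X ω ∂μ with hm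
  set G : ℝ → ℝ := fun t => Real.exp (-(t * (m + ε))) * ∫ ω, Real.exp (t * X ω) ∂μ with hG
  have hI0 : (∫ ω, Real.exp ((0:ℝ) * X ω) ∂μ) = 1 := by simp
  have hG0 : G 0 = 1 := by rw [hG]; simp [hI0]
  have hGderiv : HasDerivAt G (-ε) 0 := by
    have d0 : HasDerivAt (fun t : ℝ => -(t * (m + ε))) (-(m + ε)) 0 :=
      (hasDerivAt_mul_const (m + ε)).neg
    have d1 : HasDerivAt (fun t : ℝ => Real.exp (-(t * (m + ε)))) (-(m + ε)) 0 := by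
      simpa using d0.exp
    have := d1.mul hD
    rw [hG]
    refine this.congr_deriv ?_
    rw [hI0]
    simp [hm]
  have hslope : Tendsto (slope G 0) (𝓝[>] 0) (𝓝 (-ε)) :=
    (hasDerivAt_iff_tendsto_slope.1 hGderiv).mono_left
      (nhdsWithin_mono 0 (fun x hx => ne_of_gt hx))
  have hlt : ∀ᶠ t in 𝓝[>] (0:ℝ), slope G 0 t < 0 :=
    hslope.eventually_lt_const (by linarith)
  have hIoo : ∀ᶠ t in 𝓝[>] (0:ℝ), t ∈ Set.Ioo (0:ℝ) t0 :=
    Filter.eventually_of_mem (Ioo_mem_nhdsGT_of_mem ⟨le_refl 0, ht0⟩) (fun x hx => hx)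
  obtain ⟨t, hts, htm⟩ := (hlt.and hIoo).exists
  have htpos : 0 < t := htm.1
  have hinttX : Integrable (fun ω => Real.exp (t * X ω)) μ :=
    integrable_exp_mul_of_le hX h1 h2 (by rw [abs_of_pos htpos]; exact htm.2.le)
  have hGtpos : 0 < G t := by
    have : 0 < ∫ ω, Real.exp (t * X ω) ∂μ := by
      have := ProbabilityTheory.mgf_pos (μ := μ) (X := X) (t := t) hinttX
      simpa [ProbabilityTheory.mgf] using this
    exact mul_pos (exp_pos _) this
  have hGt1 : G t < 1 := by
    rw [slope_def_field, hG0, sub_zero] at hts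
    rcases div_neg_iff.1 hts with ⟨h, _⟩ | ⟨_, h⟩
    · linarith
    · linarith
  refine ⟨t, -Real.log (G t), htpos, neg_pos.2 (Real.log_neg hGtpos hGt1), hinttX, ?_⟩
  rw [neg_neg, Real.exp_log hGtpos]

lemma pi_chernoff_bound {d : ℕ} (Q : Measure (Fin d → ℝ)) [IsProbabilityMeasure Q]
    {g : (Fin d → ℝ) → ℝ} (hg : AEStronglyMeasurable g Q) {t0 : ℝ} (ht0 : 0 < t0)
    (h1 : Integrable (fun x => Real.exp (t0 * g x)) Q)
    (h2 : Integrable (fun x => Real.exp (-(t0 * g x))) Q)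
    {ε : ℝ} (hε : 0 < ε) :
    ∃ c : ℝ, 0 < c ∧ ∀ n : ℕ,
      (Measure.pi fun _ : Fin n => Q) {x | ((∫ y, g y ∂Q) + ε) * n ≤ ∑ i, g (x i)} ≤
        ENNReal.ofReal (Real.exp (-(c * n))) := by
  obtain ⟨t, c, htpos, hcpos, hint, hfac⟩ := exists_chernoff_factor hg ht0 h1 h2 hε
  refine ⟨c, hcpos, fun n => ?_⟩
  letI : MeasureSpace (Fin d → ℝ) := ⟨Q⟩
  haveI : SigmaFinite (volume : Measure (Fin d → ℝ)) := inferInstanceAs (SigmaFinite Q)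
  set μn : Measure (Fin n → Fin d → ℝ) := Measure.pi fun _ : Fin n => Q with hμn
  haveI : IsProbabilityMeasure μn := by
    rw [hμn]; infer_instance
  have hprod : ∀ x : Fin n → (Fin d → ℝ),
      Real.exp (t * ∑ i, g (x i)) = ∏ i, Real.exp (t * g (x i)) := by
    intro x; rw [Finset.mul_sum, Real.exp_sum]
  have hvol : μn = (volume : Measure (Fin n → Fin d → ℝ)) := rfl
  have hXint : Integrable (fun x : Fin n → (Fin d → ℝ) => Real.exp (t * ∑ i, g (x i))) μn := by
    have h' : Integrable (fun x : Fin n → (Fin d → ℝ) => ∏ i, Real.exp (t * g (x i))) :=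
      Integrable.fintype_prod (f := fun _ y => Real.exp (t * g y)) (fun _ => hint)
    rw [hvol]
    exact h'.congr (ae_of_all _ fun x => (hprod x).symm)
  have hmgf : ProbabilityTheory.mgf (fun x : Fin n → Fin d → ℝ => ∑ i, g (x i)) μn t
      = (∫ y, Real.exp (t * g y) ∂Q) ^ n := by
    rw [ProbabilityTheory.mgf]
    calc (∫ x, Real.exp (t * ∑ i, g (x i)) ∂μn)
        = ∫ x : Fin n → Fin d → ℝ, ∏ i, Real.exp (t * g (x i)) := by
          rw [hvol]; exact integral_congr_ae (ae_of_all _ fun x => hprod x)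
      _ = (∫ y, Real.exp (t * g y) ∂Q) ^ n := by
          rw [← hvol, hμn, MeasureTheory.integral_fintype_prod_eq_pow (𝕜 := ℝ) (ι := Fin n)
            (f := fun y => Real.exp (t * g y))]
          rw [Fintype.card_fin]
  have hch := ProbabilityTheory.measure_ge_le_exp_mul_mgf (μ := μn)
    (X := fun x => ∑ i, g (x i)) (((∫ y, g y ∂Q) + ε) * n) htpos.le hXint
  rw [hmgf] at hch
  have hInn : 0 ≤ ∫ y, Real.exp (t * g y) ∂Q := integral_nonneg fun _ => (exp_pos _).le
  have hbd : Real.exp (-t * (((∫ y, g y ∂Q) + ε) * n)) * (∫ y, Real.exp (t * g y) ∂Q) ^ n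
      ≤ Real.exp (-(c * n)) := by
    have e1 : (-t * (((∫ y, g y ∂Q) + ε) * n)) = (n : ℝ) * (-(t * ((∫ y, g y ∂Q) + ε))) := by ring
    rw [e1, Real.exp_nat_mul, ← mul_pow]
    calc (Real.exp (-(t * ((∫ y, g y ∂Q) + ε))) * (∫ y, Real.exp (t * g y) ∂Q)) ^ n
        ≤ (Real.exp (-c)) ^ n := by
          apply pow_le_pow_left₀ (by positivity) hfac
      _ = Real.exp (-(c * n)) := by rw [← Real.exp_nat_mul]; congr 1; ring
  exact (ENNReal.le_ofReal_iff_toReal_le (measure_ne_top _ _) (exp_pos _).le).2 (hch.trans hbd)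


end AuxSec

/-- `-(1/n) log p`, as an extended real number. -/
noncomputable def negLogRate (n : ℕ) (p : ℝ≥0∞) : EReal :=
  (-(((n : ℝ)⁻¹ : ℝ) : EReal)) * ENNReal.log p

/-- **Exponential concentration of sample means on sup-norm balls.** If `Q` on `ℝ^d` has
finite exponential moments in a neighborhood of the origin and mean `α`, then for every
`ε > 0` the probability that the sample mean leaves the open sup-norm `ε`-ball around `α`
decays exponentially:
`liminf_n -(1/n) log Q^{⊗n}{ x^n : (1/n)∑ x_i ∉ B_ε(α) } > 0`.
(Here `Fin d → ℝ` carries the sup-norm, so `Metric.ball α ε` is the sup-norm ball.) -/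
theorem sampleMean_concentration {d : ℕ} (Q : Measure (Fin d → ℝ)) [IsProbabilityMeasure Q]
    (hexp : ∃ s ∈ 𝓝 (0 : Fin d → ℝ), ∀ l ∈ s,
      Integrable (fun x => Real.exp (∑ j, l j * x j)) Q)
    (α : Fin d → ℝ) (hα : α = ∫ x, x ∂Q) :
    ∀ ε : ℝ, 0 < ε →
      (0 : EReal) < liminf (fun n : ℕ =>
        negLogRate n ((Measure.pi fun _ : Fin n => Q)
          {x | (n : ℝ)⁻¹ • ∑ i, x i ∉ Metric.ball α ε})) atTop := by
  intro ε hε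
  classical
  obtain ⟨s, hs, hintl⟩ := hexp
  obtain ⟨δ, hδ, hball⟩ := Metric.mem_nhds_iff.1 hs
  set t0 : ℝ := δ / 2 with ht0def
  have ht0 : 0 < t0 := by positivity
  -- coordinate exponential integrability
  have hcoord : ∀ (j : Fin d) (r : ℝ), |r| ≤ t0 →
      Integrable (fun x : Fin d → ℝ => Real.exp (r * x j)) Q := by
    intro j r hr
    have hmem : (Pi.single j r : Fin d → ℝ) ∈ Metric.ball 0 δ := by
      rw [mem_ball_zero_iff, Pi.norm_single]
      calc ‖r‖ = |r| := rfl
        _ ≤ t0 := hr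
        _ < δ := by rw [ht0def]; linarith
    have h := hintl _ (hball hmem)
    have hx : ∀ x : Fin d → ℝ, (∑ k, (Pi.single j r : Fin d → ℝ) k * x k) = r * x j := by
      intro x
      rw [Finset.sum_eq_single j]
      · simp
      · intro k _ hk; simp [Pi.single_apply, hk]
      · simp
    exact h.congr (ae_of_all _ fun x => congrArg Real.exp (hx x))
  -- measurability of coordinates
  have hmeas : ∀ j : Fin d, AEStronglyMeasurable (fun x : Fin d → ℝ => x j) Q :=
    fun j => (measurable_pi_apply j).aestronglyMeasurable
  -- coordinate integrability
  have hcoordInt : ∀ j : Fin d, Integrable (fun x : Fin d → ℝ => x j) Q := by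
    intro j
    refine (integrable_and_hasDerivAt (hmeas j) ht0 (hcoord j t0 (by rw [abs_of_pos ht0]))
      ?_).1
    exact (hcoord j (-t0) (by rw [abs_neg, abs_of_pos ht0])).congr (ae_of_all _ fun x =>
      congrArg Real.exp (by ring))
  -- identity integrable
  have hid : Integrable (fun x : Fin d → ℝ => x) Q := by
    have hsum : Integrable (fun x : Fin d → ℝ => ∑ j, |x j|) Q :=
      integrable_finset_sum _ (fun j _ => (hcoordInt j).abs)
    refine hsum.mono' aestronglyMeasurable_id (ae_of_all _ fun x => ?_)
    have h0 : (0:ℝ) ≤ ∑ j, |x j| := Finset.sum_nonneg fun j _ => abs_nonneg _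
    refine (pi_norm_le_iff_of_nonneg h0).2 fun j => ?_
    rw [Real.norm_eq_abs]
    exact Finset.single_le_sum (fun k _ => abs_nonneg (x k)) (Finset.mem_univ j)
  have hαj : ∀ j : Fin d, (∫ x, x j ∂Q) = α j := by
    intro j
    rw [hα]
    have := (ContinuousLinearMap.proj (R := ℝ) (φ := fun _ : Fin d => ℝ)
      j).integral_comp_comm hid
    simpa using this
  -- signed coordinate functionals
  set σ : Bool → ℝ := fun b => if b then 1 else -1 with hσdef
  have hσabs : ∀ b, |σ b| = 1 := by intro b; cases b <;> simp [hσdef]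
  have hσt : σ true = 1 := by simp [hσdef]
  have hσf : σ false = -1 := by simp [hσdef]
  have hchern : ∀ p : Fin d × Bool, ∃ c : ℝ, 0 < c ∧ ∀ n : ℕ,
      (Measure.pi fun _ : Fin n => Q)
        {x | (σ p.2 * α p.1 + ε) * n ≤ ∑ i, σ p.2 * (x i p.1)} ≤
        ENNReal.ofReal (Real.exp (-(c * n))) := by
    rintro ⟨j, b⟩
    have hg : AEStronglyMeasurable (fun x : Fin d → ℝ => σ b * x j) Q :=
      (hmeas j).const_mul _
    have hmean : (∫ x, σ b * x j ∂Q) = σ b * α j := by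
      rw [integral_const_mul, hαj]
    have h1 : Integrable (fun x : Fin d → ℝ => Real.exp (t0 * (σ b * x j))) Q := by
      exact (hcoord j (t0 * σ b) (by rw [abs_mul, hσabs, mul_one, abs_of_pos ht0])).congr
        (ae_of_all _ fun x => congrArg Real.exp (by ring))
    have h2 : Integrable (fun x : Fin d → ℝ => Real.exp (-(t0 * (σ b * x j)))) Q := by
      exact (hcoord j (-(t0 * σ b))
        (by rw [abs_neg, abs_mul, hσabs, mul_one, abs_of_pos ht0])).congr
        (ae_of_all _ fun x => congrArg Real.exp (by ring))
    obtain ⟨c, hc, hcb⟩ := pi_chernoff_bound Q hg ht0 h1 h2 hε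
    exact ⟨c, hc, fun n => by rw [← hmean]; exact hcb n⟩
  choose cfun hcpos hcbd using hchern
  obtain ⟨c, hc0, hcle⟩ : ∃ c : ℝ, 0 < c ∧ ∀ p : Fin d × Bool, c ≤ cfun p := by
    rcases isEmpty_or_nonempty (Fin d × Bool) with h | h
    · exact ⟨1, one_pos, fun p => (h.elim p)⟩
    · obtain ⟨p0, _, hp0⟩ := Finset.exists_min_image Finset.univ cfun
        ⟨Classical.arbitrary _, Finset.mem_univ _⟩
      exact ⟨cfun p0, hcpos p0, fun p => hp0 p (Finset.mem_univ p)⟩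
  -- union bound
  set Kr : ℝ := (Fintype.card (Fin d × Bool) : ℝ) with hKr
  have hKr0 : 0 ≤ Kr := Nat.cast_nonneg _
  have hμbd : ∀ n : ℕ, 1 ≤ n →
      (Measure.pi fun _ : Fin n => Q) {x | (n : ℝ)⁻¹ • ∑ i, x i ∉ Metric.ball α ε} ≤
      ENNReal.ofReal (Kr * Real.exp (-(c * n))) := by
    intro n hn
    have hnpos : (0:ℝ) < n := by exact_mod_cast hn
    have hsub : {x : Fin n → Fin d → ℝ | (n : ℝ)⁻¹ • ∑ i, x i ∉ Metric.ball α ε} ⊆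
        ⋃ p : Fin d × Bool, {x | (σ p.2 * α p.1 + ε) * n ≤ ∑ i, σ p.2 * (x i p.1)} := by
      intro x hx
      simp only [Set.mem_setOf_eq] at hx
      have hdist : ¬ dist ((n:ℝ)⁻¹ • ∑ i, x i) α < ε := fun h => hx (Metric.mem_ball.2 h)
      rw [dist_pi_lt_iff hε] at hdist
      push_neg at hdist
      obtain ⟨j, hj⟩ := hdist
      rw [Real.dist_eq] at hj
      have hmean : ((n:ℝ)⁻¹ • ∑ i, x i) j = (∑ i, x i j) / n := by
        simp [Finset.sum_apply, div_eq_inv_mul]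
      rcases le_abs.mp hj with h | h
      · refine Set.mem_iUnion.2 ⟨(j, true), ?_⟩
        simp only [Set.mem_setOf_eq, hσt, one_mul]
        rw [hmean] at h
        have h' : α j + ε ≤ (∑ i, x i j) / n := by linarith
        linarith [(le_div_iff₀ hnpos).1 h']
      · refine Set.mem_iUnion.2 ⟨(j, false), ?_⟩
        simp only [Set.mem_setOf_eq, hσf, neg_one_mul]
        rw [hmean] at h
        have h' : -α j + ε ≤ (-(∑ i, x i j)) / n := by
          rw [neg_div]; linarith
        have h'' := (le_div_iff₀ hnpos).1 h'
        rw [Finset.sum_neg_distrib]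
        linarith
    calc (Measure.pi fun _ : Fin n => Q) {x | (n : ℝ)⁻¹ • ∑ i, x i ∉ Metric.ball α ε}
        ≤ (Measure.pi fun _ : Fin n => Q)
          (⋃ p : Fin d × Bool, {x | (σ p.2 * α p.1 + ε) * n ≤ ∑ i, σ p.2 * (x i p.1)}) :=
          measure_mono hsub
      _ ≤ ∑ p : Fin d × Bool, (Measure.pi fun _ : Fin n => Q)
          {x | (σ p.2 * α p.1 + ε) * n ≤ ∑ i, σ p.2 * (x i p.1)} :=
          measure_iUnion_fintype_le _ _
      _ ≤ ∑ _p : Fin d × Bool, ENNReal.ofReal (Real.exp (-(c * n))) := by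
          refine Finset.sum_le_sum fun p _ => (hcbd p n).trans ?_
          apply ENNReal.ofReal_le_ofReal
          apply Real.exp_le_exp.2
          have : c * n ≤ cfun p * n := mul_le_mul_of_nonneg_right (hcle p) hnpos.le
          linarith
      _ = ENNReal.ofReal (Kr * Real.exp (-(c * n))) := by
          rw [Finset.sum_const, Finset.card_univ, hKr, ENNReal.ofReal_mul hKr0,
            ENNReal.ofReal_natCast, nsmul_eq_mul]
  -- conclude
  have hev : ∀ᶠ n : ℕ in atTop, ((c / 2 : ℝ) : EReal) ≤ negLogRate n
      ((Measure.pi fun _ : Fin n => Q) {x | (n : ℝ)⁻¹ • ∑ i, x i ∉ Metric.ball α ε}) := by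
    have h1 : ∀ᶠ n : ℕ in atTop, 1 ≤ n := eventually_ge_atTop 1
    have h2 : ∀ᶠ n : ℕ in atTop, Real.log Kr ≤ c / 2 * n := by
      have := (tendsto_natCast_atTop_atTop (R := ℝ)).eventually_ge_atTop
        (2 * Real.log Kr / c)
      filter_upwards [this] with n hn
      calc Real.log Kr = c / 2 * (2 * Real.log Kr / c) := by field_simp
        _ ≤ c / 2 * n := by
            apply mul_le_mul_of_nonneg_left hn (by positivity)
    filter_upwards [h1, h2] with n hn1 hn2
    set p := (Measure.pi fun _ : Fin n => Q) {x | (n : ℝ)⁻¹ • ∑ i, x i ∉ Metric.ball α ε}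
      with hpdef
    have hnpos : (0:ℝ) < n := by exact_mod_cast hn1
    rcases eq_or_ne p 0 with hp | hp
    · rw [negLogRate, hp, ENNReal.log_zero,
        show (-(((n : ℝ)⁻¹ : ℝ) : EReal)) = (((-(n:ℝ)⁻¹ : ℝ)) : EReal) from
          (EReal.coe_neg _).symm,
        EReal.coe_mul_bot_of_neg (by exact_mod_cast neg_lt_zero.2 (inv_pos.2 hnpos))]
      exact le_top
    · have hptop : p ≠ ⊤ := measure_ne_top _ _
      have hr0 : 0 < p.toReal := ENNReal.toReal_pos hp hptop
      have hple : p.toReal ≤ Kr * Real.exp (-(c * n)) :=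
        ENNReal.toReal_le_of_le_ofReal (by positivity) (hμbd n hn1)
      have hKpos : 0 < Kr := by nlinarith [Real.exp_pos (-(c * (n:ℝ)))]
      have hlog : Real.log p.toReal ≤ Real.log Kr + (-(c * n)) := by
        calc Real.log p.toReal ≤ Real.log (Kr * Real.exp (-(c * n))) :=
              Real.log_le_log hr0 hple
          _ = _ := by rw [Real.log_mul hKpos.ne' (Real.exp_ne_zero _), Real.log_exp]
      rw [negLogRate, ENNReal.log_pos_real hp hptop,
        show (-(((n : ℝ)⁻¹ : ℝ) : EReal)) = (((-(n:ℝ)⁻¹ : ℝ)) : EReal) from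
          (EReal.coe_neg _).symm, ← EReal.coe_mul, EReal.coe_le_coe_iff]
      have h5 : Real.log p.toReal ≤ -(c / 2) * n := by linarith
      have hninv : (0:ℝ) < (n:ℝ)⁻¹ := by positivity
      have h6 := mul_le_mul_of_nonneg_left h5 hninv.le
      have hcancel : (n:ℝ)⁻¹ * (-(c / 2) * (n:ℝ)) = -(c / 2) := by
        field_simp
      rw [hcancel] at h6
      nlinarith
  refine lt_of_lt_of_le ?_ (Filter.le_liminf_of_le (by isBoundedDefault) hev)
  exact_mod_cast EReal.coe_pos.2 (by positivity : (0:ℝ) < c / 2)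
end

section
/- Let 𝒳 be a metric space and let {μ_n} be an exponentially tight sequence of Borel probability measures on 𝒳. For x ∈ 𝒳 define γ_−(x) := lim_{ε↓0} liminf_{n→∞} −(1/n) log μ_n(B_ε(x)) and γ_+(x) := lim_{ε↓0} limsup_{n→∞} −(1/n) log μ_n(B_ε(x)), where B_ε(x) is the open metric ball. Then: (a) for every closed set F ⊆ 𝒳, liminf_{n→∞} −(1/n) log μ_n(F) ≥ inf_{x∈F} γ_−(x); (b) for every open set G ⊆ 𝒳, limsup_{n→∞} −(1/n) log μ_n(G) ≤ inf_{x∈G} γ_+(x); (c) if γ_−(x) = γ_+(x) =: γ(x) for all x ∈ 𝒳, then {μ_n} satisfies the large deviation principle with rate function γ. -/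
open MeasureTheory Filter Topology
open scoped ENNReal NNReal Classical

/-- `γ₋(x) = lim_{ε↓0} liminf_n -(1/n) log μ_n(B_ε(x))`; since the inner quantity is
nonincreasing in `ε`, the limit as `ε ↓ 0` is the supremum over `ε > 0`. -/
noncomputable def gammaMinus {X : Type*} [MeasurableSpace X] [MetricSpace X]
    (μ : ℕ → Measure X) (x : X) : EReal :=
  ⨆ (ε : ℝ) (_ : 0 < ε), liminf (fun n : ℕ => negLogRate n (μ n (Metric.ball x ε))) atTop

/-- `γ₊(x) = lim_{ε↓0} limsup_n -(1/n) log μ_n(B_ε(x))`; since the inner quantity is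
nonincreasing in `ε`, the limit as `ε ↓ 0` is the supremum over `ε > 0`. -/
noncomputable def gammaPlus {X : Type*} [MeasurableSpace X] [MetricSpace X]
    (μ : ℕ → Measure X) (x : X) : EReal :=
  ⨆ (ε : ℝ) (_ : 0 < ε), limsup (fun n : ℕ => negLogRate n (μ n (Metric.ball x ε))) atTop

lemma log_le_iff' {p : ℝ≥0∞} {x : EReal} : ENNReal.log p ≤ x ↔ p ≤ EReal.exp x := by
  rw [← EReal.exp_le_exp_iff, ENNReal.exp_log]

lemma negLogRate_antitone (n : ℕ) {p q : ℝ≥0∞} (h : p ≤ q) :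
    negLogRate n q ≤ negLogRate n p := by
  unfold negLogRate
  rw [EReal.neg_mul, EReal.neg_mul, EReal.neg_le_neg_iff]
  exact mul_le_mul_of_nonneg_left (ENNReal.log_monotone h) (EReal.coe_nonneg.mpr (by positivity))

lemma le_negLogRate_iff {a : ℝ} {n : ℕ} (hn : 1 ≤ n) (p : ℝ≥0∞) :
    (a : EReal) ≤ negLogRate n p ↔ p ≤ EReal.exp (((-((n:ℝ) * a)) : ℝ) : EReal) := by
  rw [← log_le_iff']
  unfold negLogRate
  have hr : (0:ℝ) < (n:ℝ)⁻¹ := by positivity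
  rw [← EReal.coe_neg]
  induction ENNReal.log p using EReal.rec with
  | bot =>
    rw [EReal.coe_mul_bot_of_neg (by linarith : -((n:ℝ)⁻¹) < 0)]
    simp
  | coe l =>
    rw [show ((-((n:ℝ)⁻¹) : ℝ) : EReal) * (l : EReal) = ((-((n:ℝ)⁻¹) * l : ℝ) : EReal) from
      (EReal.coe_mul _ _), EReal.coe_le_coe_iff, EReal.coe_le_coe_iff]
    have hne : (n:ℝ) ≠ 0 := by positivity
    constructor
    · intro h
      have h2 := mul_le_mul_of_nonneg_left h (Nat.cast_nonneg n : (0:ℝ) ≤ n)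
      rw [show (n:ℝ) * (-(n:ℝ)⁻¹ * l) = -l by field_simp] at h2
      linarith
    · intro h
      have h2 := mul_le_mul_of_nonneg_left h hr.le
      rw [show ((n:ℝ)⁻¹ * -((n:ℝ) * a)) = -a by field_simp] at h2
      have : (n:ℝ)⁻¹ * l ≤ -a := h2
      nlinarith
  | top =>
    rw [EReal.coe_mul_top_of_neg (by linarith : -((n:ℝ)⁻¹) < 0)]
    simp only [le_bot_iff, top_le_iff]
    exact iff_of_false (EReal.coe_ne_bot _) (EReal.coe_ne_top _)

lemma EReal.le_of_forall_real_lt {x y : EReal} (h : ∀ a : ℝ, (a : EReal) < x → (a : EReal) ≤ y) :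
    x ≤ y := by
  by_contra hc
  push_neg at hc
  obtain ⟨a, hay, hax⟩ := EReal.exists_between_coe_real hc
  exact absurd (h a hax) (not_le.mpr hay)

lemma liminf_negLogRate_add (p q : ℕ → ℝ≥0∞) :
    min (liminf (fun n => negLogRate n (p n)) atTop) (liminf (fun n => negLogRate n (q n)) atTop)
      ≤ liminf (fun n => negLogRate n (p n + q n)) atTop := by
  refine EReal.le_of_forall_real_lt fun a ha => ?_
  obtain ⟨a', haa', ha'⟩ := EReal.exists_between_coe_real ha
  have hp : ∀ᶠ n in atTop, (a' : EReal) < negLogRate n (p n) :=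
    eventually_lt_of_lt_liminf (lt_of_lt_of_le ha' (min_le_left _ _))
  have hq : ∀ᶠ n in atTop, (a' : EReal) < negLogRate n (q n) :=
    eventually_lt_of_lt_liminf (lt_of_lt_of_le ha' (min_le_right _ _))
  have haa : a < a' := EReal.coe_lt_coe_iff.mp haa'
  have hbig : ∀ᶠ n : ℕ in atTop, Real.log 2 ≤ (n : ℝ) * (a' - a) := by
    refine eventually_atTop.mpr ⟨⌈Real.log 2 / (a' - a)⌉₊, fun n hn => ?_⟩
    have h1 : Real.log 2 / (a' - a) ≤ (n : ℝ) :=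
      le_trans (Nat.le_ceil _) (Nat.cast_le.mpr hn)
    rw [div_le_iff₀ (by linarith)] at h1
    linarith [h1]
  refine le_liminf_of_le (by isBoundedDefault) ?_
  filter_upwards [hp, hq, hbig, eventually_ge_atTop 1] with n hpn hqn hbign hn1
  rw [le_negLogRate_iff hn1]
  have h2 : p n + q n ≤ 2 * EReal.exp (((-((n:ℝ) * a')) : ℝ) : EReal) := by
    rw [two_mul]
    exact add_le_add ((le_negLogRate_iff hn1 _).mp hpn.le)
      ((le_negLogRate_iff hn1 _).mp hqn.le)
  refine le_trans h2 ?_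
  rw [EReal.exp_coe, EReal.exp_coe, ← ENNReal.ofReal_ofNat,
    ← ENNReal.ofReal_mul (by norm_num)]
  refine ENNReal.ofReal_le_ofReal ?_
  have : -((n:ℝ) * a) = ((n:ℝ) * (a' - a)) + (-((n:ℝ) * a')) := by ring
  rw [this, Real.exp_add]
  have h2le : (2:ℝ) ≤ Real.exp ((n:ℝ) * (a' - a)) := by
    calc (2:ℝ) = Real.exp (Real.log 2) := (Real.exp_log (by norm_num)).symm
    _ ≤ _ := Real.exp_le_exp.mpr hbign
  exact mul_le_mul_of_nonneg_right h2le (Real.exp_nonneg _)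

lemma liminf_negLogRate_sum {ι : Type*} (s : Finset ι) (p : ι → ℕ → ℝ≥0∞) :
    (s.inf fun i => liminf (fun n => negLogRate n (p i n)) atTop)
      ≤ liminf (fun n => negLogRate n (∑ i ∈ s, p i n)) atTop := by
  induction s using Finset.induction with
  | empty =>
    simp only [Finset.inf_empty, Finset.sum_empty]
    refine le_liminf_of_le (by isBoundedDefault) ?_
    filter_upwards [eventually_ge_atTop 1] with n hn1
    have hnn : (0:ℝ) < (n:ℝ)⁻¹ := inv_pos.mpr (by exact_mod_cast Nat.lt_of_lt_of_le Nat.zero_lt_one hn1)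
    have : negLogRate n (0 : ℝ≥0∞) = ⊤ := by
      rw [negLogRate, ENNReal.log_zero, ← EReal.coe_neg,
        EReal.coe_mul_bot_of_neg (by linarith)]
    rw [this]
  | @insert a s ha ih =>
    simp only [Finset.inf_insert, Finset.sum_insert ha]
    exact le_trans (inf_le_inf_left _ ih) (liminf_negLogRate_add _ _)

/-- **General principle for exponentially tight families.** For an exponentially tight
sequence of Borel probability measures on a metric space: (a) large deviation lower bound on
closed sets with `γ₋`; (b) upper bound on open sets with `γ₊`; (c) if `γ₋ = γ₊ = γ`
everywhere, the LDP holds with rate function `γ`. -/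
theorem general_principle {X : Type*} [MeasurableSpace X] [MetricSpace X] [BorelSpace X]
    (μ : ℕ → Measure X) (hprob : ∀ n, IsProbabilityMeasure (μ n))
    (htight : ∀ b : ℝ, 0 < b → ∃ K : Set X, IsCompact K ∧
      (b : EReal) ≤ liminf (fun n : ℕ => negLogRate n (μ n Kᶜ)) atTop) :
    (∀ F : Set X, IsClosed F →
      (⨅ x ∈ F, gammaMinus μ x)
        ≤ liminf (fun n : ℕ => negLogRate n (μ n F)) atTop)
    ∧ (∀ G : Set X, IsOpen G →
      limsup (fun n : ℕ => negLogRate n (μ n G)) atTop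
        ≤ ⨅ x ∈ G, gammaPlus μ x)
    ∧ ((∀ x : X, gammaMinus μ x = gammaPlus μ x) →
      ∀ Γ : Set X, MeasurableSet Γ →
        (⨅ x ∈ closure Γ, gammaMinus μ x)
            ≤ liminf (fun n : ℕ => negLogRate n (μ n Γ)) atTop
          ∧ liminf (fun n : ℕ => negLogRate n (μ n Γ)) atTop
            ≤ limsup (fun n : ℕ => negLogRate n (μ n Γ)) atTop
          ∧ limsup (fun n : ℕ => negLogRate n (μ n Γ)) atTop
            ≤ ⨅ x ∈ interior Γ, gammaMinus μ x) := by
  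
  have lower : ∀ F : Set X, IsClosed F →
      (⨅ x ∈ F, gammaMinus μ x)
        ≤ liminf (fun n : ℕ => negLogRate n (μ n F)) atTop := by
    intro F hF
    refine EReal.le_of_forall_real_lt fun a ha => ?_
    set b : ℝ := max a 0 + 1 with hbdef
    have hb0 : 0 < b := by positivity
    have hab : a < b := by
      have := le_max_left a 0; linarith
    obtain ⟨K, hK, hKc⟩ := htight b hb0
    have hx : ∀ x ∈ F ∩ K, ∃ ε : ℝ, 0 < ε ∧
        (a : EReal) < liminf (fun n : ℕ => negLogRate n (μ n (Metric.ball x ε))) atTop := by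
      intro x hxFK
      have h1 : (a : EReal) < gammaMinus μ x := lt_of_lt_of_le ha (iInf₂_le x hxFK.1)
      rw [gammaMinus, lt_iSup_iff] at h1
      obtain ⟨ε, hε⟩ := h1
      rw [lt_iSup_iff] at hε
      obtain ⟨hεpos, h⟩ := hε
      exact ⟨ε, hεpos, h⟩
    choose! E hEpos hEa using hx
    have hFK : IsCompact (F ∩ K) := hK.inter_left hF
    have hcov : F ∩ K ⊆ ⋃ x ∈ F ∩ K, Metric.ball x (E x) := fun x hx =>
      Set.mem_biUnion hx (Metric.mem_ball_self (hEpos x hx))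
    obtain ⟨t, hts, htfin, htcov⟩ :=
      hFK.elim_finite_subcover_image (fun x _ => Metric.isOpen_ball) hcov
    set s : Finset X := htfin.toFinset with hsdef
    have hmem : ∀ x, x ∈ s ↔ x ∈ t := fun x => htfin.mem_toFinset
    have hbound : ∀ n, μ n F ≤ μ n Kᶜ + ∑ x ∈ s, μ n (Metric.ball x (E x)) := by
      intro n
      have hsub : F ⊆ Kᶜ ∪ ⋃ x ∈ s, Metric.ball x (E x) := by
        intro y hy
        by_cases hyK : y ∈ K
        · right
          have : y ∈ ⋃ x ∈ t, Metric.ball x (E x) := htcov ⟨hy, hyK⟩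
          simpa [hmem] using this
        · exact Or.inl hyK
      calc μ n F ≤ μ n (Kᶜ ∪ ⋃ x ∈ s, Metric.ball x (E x)) := measure_mono hsub
        _ ≤ μ n Kᶜ + μ n (⋃ x ∈ s, Metric.ball x (E x)) := measure_union_le _ _
        _ ≤ μ n Kᶜ + ∑ x ∈ s, μ n (Metric.ball x (E x)) := by
            gcongr
            exact measure_biUnion_finset_le _ _
    have h1 : (a : EReal) ≤
        min (liminf (fun n : ℕ => negLogRate n (μ n Kᶜ)) atTop)
          (s.inf fun x => liminf (fun n : ℕ => negLogRate n (μ n (Metric.ball x (E x)))) atTop) := by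
      refine le_min (le_trans ?_ hKc) (Finset.le_inf fun x hxs => ?_)
      · exact_mod_cast hab.le
      · exact (hEa x (hts ((hmem x).mp hxs))).le
    have h2 :
        min (liminf (fun n : ℕ => negLogRate n (μ n Kᶜ)) atTop)
          (s.inf fun x => liminf (fun n : ℕ => negLogRate n (μ n (Metric.ball x (E x)))) atTop)
        ≤ liminf (fun n : ℕ =>
            negLogRate n (μ n Kᶜ + ∑ x ∈ s, μ n (Metric.ball x (E x)))) atTop :=
      le_trans (inf_le_inf_left _ (liminf_negLogRate_sum s fun x n => μ n (Metric.ball x (E x))))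
        (liminf_negLogRate_add _ _)
    have h3 : liminf (fun n : ℕ =>
          negLogRate n (μ n Kᶜ + ∑ x ∈ s, μ n (Metric.ball x (E x)))) atTop
        ≤ liminf (fun n : ℕ => negLogRate n (μ n F)) atTop :=
      liminf_le_liminf (Eventually.of_forall fun n => negLogRate_antitone n (hbound n))
    exact le_trans h1 (le_trans h2 h3)
  have upper : ∀ G : Set X, IsOpen G →
      limsup (fun n : ℕ => negLogRate n (μ n G)) atTop ≤ ⨅ x ∈ G, gammaPlus μ x := by
    intro G hG
    simp only [le_iInf_iff]
    intro x hx
    obtain ⟨ε, hεpos, hball⟩ := Metric.isOpen_iff.mp hG x hx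
    have h1 : limsup (fun n : ℕ => negLogRate n (μ n G)) atTop
        ≤ limsup (fun n : ℕ => negLogRate n (μ n (Metric.ball x ε))) atTop :=
      limsup_le_limsup (Eventually.of_forall fun n =>
        negLogRate_antitone n (measure_mono hball))
    exact le_trans h1 (le_iSup₂ (f := fun (ε : ℝ) (_ : 0 < ε) =>
      limsup (fun n : ℕ => negLogRate n (μ n (Metric.ball x ε))) atTop) ε hεpos)
  refine ⟨lower, upper, fun hγ Γ _ => ?_⟩
  refine ⟨?_, liminf_le_limsup, ?_⟩
  · refine le_trans (lower (closure Γ) isClosed_closure) ?_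
    exact liminf_le_liminf (Eventually.of_forall fun n =>
      negLogRate_antitone n (measure_mono subset_closure))
  · have h1 : limsup (fun n : ℕ => negLogRate n (μ n Γ)) atTop
        ≤ limsup (fun n : ℕ => negLogRate n (μ n (interior Γ))) atTop :=
      limsup_le_limsup (Eventually.of_forall fun n =>
        negLogRate_antitone n (measure_mono interior_subset))
    refine le_trans h1 (le_trans (upper (interior Γ) isOpen_interior) ?_)
    exact le_of_eq (by simp only [hγ])
end

section
/- Let Z_n be ℝ^d-valued random vectors with laws μ_n and logarithmic moment generating functions Λ_n(λ) := log E[e^{⟨λ,Z_n⟩}]. Assume that for each λ ∈ ℝ^d the limit Λ(λ) := lim_{n→∞} (1/n)Λ_n(nλ) exists as an extended real number, and that the origin lies in the interior of 𝒟_Λ := {λ : Λ(λ) < +∞}. Let Λ*(x) := sup_{λ∈ℝ^d} (⟨λ,x⟩ − Λ(λ)) be the Fenchel–Legendre transform of Λ, and let ℱ be the set of exposed points of Λ* whose exposing hyperplane belongs to the interior of 𝒟_Λ. Then: (a) for every closed F ⊆ ℝ^d, liminf_{n→∞} −(1/n) log μ_n(F) ≥ inf_{x∈F} Λ*(x); (b)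 for every open G ⊆ ℝ^d, limsup_{n→∞} −(1/n) log μ_n(G) ≤ inf_{x∈G∩ℱ} Λ*(x). -/
open MeasureTheory Filter Topology
open scoped ENNReal NNReal Classical

/-- The logarithmic moment generating function `Λ_μ(l) = log ∫ e^{⟨l,z⟩} dμ(z)`,
as an extended real number. -/
noncomputable def logMGF {d : ℕ} (μ : Measure (Fin d → ℝ)) (l : Fin d → ℝ) : EReal :=
  ENNReal.log (∫⁻ z, ENNReal.ofReal (Real.exp (∑ j, l j * z j)) ∂μ)

namespace GEaux
variable {d : ℕ}

noncomputable def pr (l x : Fin d → ℝ) : ℝ := ∑ j, l j * x j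

lemma pr_smul (c : ℝ) (l x : Fin d → ℝ) : pr (c • l) x = c * pr l x := by
  simp [pr, Finset.mul_sum, mul_assoc]

lemma pr_add (l m x : Fin d → ℝ) : pr (l + m) x = pr l x + pr m x := by
  simp [pr, add_mul, Finset.sum_add_distrib]

lemma pr_sub (l m x : Fin d → ℝ) : pr (l - m) x = pr l x - pr m x := by
  simp [pr, sub_mul, Finset.sum_sub_distrib]

lemma continuous_pr (l : Fin d → ℝ) : Continuous (pr l) := by
  unfold pr
  exact continuous_finset_sum _ fun j _ => (continuous_const.mul (continuous_apply j))

lemma measurable_expr (l : Fin d → ℝ) :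
    Measurable fun z : Fin d → ℝ => ENNReal.ofReal (Real.exp (pr l z)) :=
  (ENNReal.measurable_ofReal.comp (Real.continuous_exp.measurable.comp
    (continuous_pr l).measurable))

noncomputable def LL (μ : Measure (Fin d → ℝ)) (l : Fin d → ℝ) : ℝ≥0∞ :=
  ∫⁻ z, ENNReal.ofReal (Real.exp (pr l z)) ∂μ

noncomputable def fls (Λ : (Fin d → ℝ) → EReal) (x : Fin d → ℝ) : EReal :=
  ⨆ l : Fin d → ℝ, ((pr l x : ℝ) : EReal) - Λ l

/-! ### EReal helpers -/

lemma er_mul_le {n : ℕ} (hn : 1 ≤ n) {x : EReal} {t : ℝ} (hx : x ≤ ((-((n:ℝ)*t) : ℝ) : EReal)) :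
    (t : EReal) ≤ (-(((n : ℝ)⁻¹ : ℝ)) : EReal) * x := by
  have hnR : (0:ℝ) < (n:ℝ) := by exact_mod_cast hn
  rw [← EReal.coe_neg]
  induction x using EReal.rec with
  | bot =>
    rw [EReal.coe_mul_bot_of_neg (by simp; positivity)]
    exact le_top
  | coe r =>
    rw [← EReal.coe_mul, EReal.coe_le_coe_iff]
    have hr : r ≤ -((n:ℝ)*t) := by exact_mod_cast hx
    have : -((n:ℝ)⁻¹) * r ≥ -((n:ℝ)⁻¹) * (-((n:ℝ)*t)) := by nlinarith [inv_pos.2 hnR]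
    calc t = -((n:ℝ)⁻¹) * (-((n:ℝ)*t)) := by field_simp
    _ ≤ -((n:ℝ)⁻¹) * r := this
  | top => exact ((EReal.coe_lt_top _).not_ge hx).elim

lemma er_mul_ge {n : ℕ} (hn : 1 ≤ n) {x : EReal} {t : ℝ} (hx : ((-((n:ℝ)*t) : ℝ) : EReal) ≤ x) :
    (-(((n : ℝ)⁻¹ : ℝ)) : EReal) * x ≤ (t : EReal) := by
  have hnR : (0:ℝ) < (n:ℝ) := by exact_mod_cast hn
  rw [← EReal.coe_neg]
  induction x using EReal.rec with
  | bot => exact (hx.not_gt (EReal.bot_lt_coe _)).elim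
  | coe r =>
    rw [← EReal.coe_mul, EReal.coe_le_coe_iff]
    have hr : -((n:ℝ)*t) ≤ r := by exact_mod_cast hx
    have h1 : -((n:ℝ)⁻¹) * r ≤ -((n:ℝ)⁻¹) * (-((n:ℝ)*t)) := by nlinarith [inv_pos.2 hnR]
    calc -((n:ℝ)⁻¹) * r ≤ -((n:ℝ)⁻¹) * (-((n:ℝ)*t)) := h1
    _ = t := by field_simp
  | top =>
    rw [EReal.coe_mul_top_of_neg (by simp; positivity)]
    exact bot_le

lemma er_inv_lt {n : ℕ} (hn : 1 ≤ n) {x : EReal} {M : ℝ}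
    (h : ((((n:ℝ)⁻¹ : ℝ)) : EReal) * x < (M : EReal)) : x < (((n:ℝ) * M : ℝ) : EReal) := by
  have hnR : (0:ℝ) < (n:ℝ) := by exact_mod_cast hn
  induction x using EReal.rec with
  | bot => exact EReal.bot_lt_coe _
  | coe r =>
    rw [← EReal.coe_mul, EReal.coe_lt_coe_iff] at h
    rw [EReal.coe_lt_coe_iff]
    calc r = (n:ℝ) * ((n:ℝ)⁻¹ * r) := by field_simp
    _ < (n:ℝ) * M := by exact mul_lt_mul_of_pos_left h hnR
  | top =>
    rw [EReal.coe_mul_top_of_pos (by positivity)] at h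
    exact absurd h (by simp)

lemma er_lt_inv {n : ℕ} (hn : 1 ≤ n) {x : EReal} {m : ℝ}
    (h : (m : EReal) < ((((n:ℝ)⁻¹ : ℝ)) : EReal) * x) : (((n:ℝ) * m : ℝ) : EReal) < x := by
  have hnR : (0:ℝ) < (n:ℝ) := by exact_mod_cast hn
  induction x using EReal.rec with
  | bot =>
    rw [EReal.coe_mul_bot_of_pos (by positivity)] at h
    exact absurd h (by simp)
  | coe r =>
    rw [← EReal.coe_mul, EReal.coe_lt_coe_iff] at h
    rw [EReal.coe_lt_coe_iff]
    calc (n:ℝ) * m < (n:ℝ) * ((n:ℝ)⁻¹ * r) := by exact mul_lt_mul_of_pos_left h hnR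
    _ = r := by field_simp
  | top => exact EReal.coe_lt_top _

lemma lt_toReal_add_one {x : EReal} (hx : x < ⊤) : x < ((x.toReal + 1 : ℝ) : EReal) := by
  induction x using EReal.rec with
  | bot => exact EReal.bot_lt_coe _
  | coe r => rw [EReal.coe_lt_coe_iff]; simp
  | top => simp at hx

lemma add_coe_cancel (x : EReal) (r : ℝ) : x + (r : EReal) + ((-r : ℝ) : EReal) = x := by
  induction x using EReal.rec with
  | bot => simp
  | coe s => norm_cast; ring
  | top => simp

lemma iSup_add_const {ι : Sort*} (f : ι → EReal) (r : ℝ) :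
    (⨆ i, f i + (r : EReal)) = (⨆ i, f i) + (r : EReal) := by
  apply le_antisymm
  · exact iSup_le fun i => add_le_add_left (le_iSup f i) _
  · have h1 : (⨆ i, f i) ≤ (⨆ i, f i + (r : EReal)) + ((-r : ℝ) : EReal) := by
      refine iSup_le fun i => ?_
      have := add_le_add_left (le_iSup (fun i => f i + (r : EReal)) i) ((-r : ℝ) : EReal)
      rwa [add_coe_cancel] at this
    have := add_le_add_left h1 (r : EReal)
    calc (⨆ i, f i) + (r:EReal) ≤ (⨆ i, f i + (r : EReal)) + ((-r : ℝ) : EReal) + (r:EReal) := this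
    _ = (⨆ i, f i + (r : EReal)) := by
        have := add_coe_cancel (⨆ i, f i + (r : EReal)) (-r)
        simpa using this

lemma er_le_of_forall {a b : EReal} (h : ∀ t : ℝ, (t : EReal) < a → (t : EReal) ≤ b) : a ≤ b := by
  by_contra hc
  push_neg at hc
  obtain ⟨t, htb, hta⟩ := EReal.lt_iff_exists_real_btwn.1 hc
  exact absurd (h t hta) (not_le.2 htb)

lemma t_le_liminf {μ : ℕ → Measure (Fin d → ℝ)} {S : Set (Fin d → ℝ)} {t : ℝ}
    (h : ∀ᶠ n : ℕ in atTop, μ n S ≤ EReal.exp ((-((n:ℝ)*t) : ℝ))) :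
    (t : EReal) ≤ liminf (fun n : ℕ => negLogRate n (μ n S)) atTop := by
  refine Filter.le_liminf_of_le (by isBoundedDefault) ?_
  filter_upwards [h, eventually_ge_atTop 1] with n hb hn
  have hlog : ENNReal.log (μ n S) ≤ ((-((n:ℝ)*t) : ℝ) : EReal) := by
    have := ENNReal.log_monotone hb
    rwa [EReal.log_exp] at this
  exact er_mul_le hn hlog

lemma limsup_le_t {μ : ℕ → Measure (Fin d → ℝ)} {S : Set (Fin d → ℝ)} {t : ℝ}
    (h : ∀ᶠ n : ℕ in atTop, EReal.exp ((-((n:ℝ)*t) : ℝ)) ≤ μ n S) :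
    limsup (fun n : ℕ => negLogRate n (μ n S)) atTop ≤ (t : EReal) := by
  refine Filter.limsup_le_of_le (by isBoundedDefault) ?_
  filter_upwards [h, eventually_ge_atTop 1] with n hb hn
  have hlog : ((-((n:ℝ)*t) : ℝ) : EReal) ≤ ENNReal.log (μ n S) := by
    have := ENNReal.log_monotone hb
    rwa [EReal.log_exp] at this
  exact er_mul_ge hn hlog


lemma chernoff (μ : Measure (Fin d → ℝ)) (l : Fin d → ℝ) (s : ℝ) {S : Set (Fin d → ℝ)}
    (hS : S ⊆ {z | s ≤ pr l z}) :
    μ S ≤ EReal.exp ((-s : ℝ)) * LL μ l := by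
  have hmeas := (measurable_expr (d := d) l).aemeasurable (μ := μ)
  have hmarkov := MeasureTheory.mul_meas_ge_le_lintegral₀ hmeas (ENNReal.ofReal (Real.exp s))
  have hsub : S ⊆ {z | ENNReal.ofReal (Real.exp s) ≤ ENNReal.ofReal (Real.exp (pr l z))} := by
    intro z hz
    exact ENNReal.ofReal_le_ofReal (Real.exp_le_exp.2 (hS hz))
  have h1 : ENNReal.ofReal (Real.exp s) * μ S ≤ LL μ l :=
    le_trans (mul_le_mul_right (measure_mono hsub) _) hmarkov
  have hne : ENNReal.ofReal (Real.exp s) ≠ 0 := by positivity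
  have hnt : ENNReal.ofReal (Real.exp s) ≠ ⊤ := ENNReal.ofReal_ne_top
  have h2 : μ S ≤ (ENNReal.ofReal (Real.exp s))⁻¹ * LL μ l := by
    have he : μ S = (ENNReal.ofReal (Real.exp s))⁻¹ * (ENNReal.ofReal (Real.exp s) * μ S) := by
      rw [← mul_assoc, ENNReal.inv_mul_cancel hne hnt, one_mul]
    rw [he]
    exact mul_le_mul_right h1 _
  have hinv : (ENNReal.ofReal (Real.exp s))⁻¹ = ENNReal.ofReal (Real.exp (-s)) := by
    rw [Real.exp_neg, ENNReal.ofReal_inv_of_pos (Real.exp_pos s)]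
  rw [EReal.exp_coe]
  rwa [hinv] at h2


noncomputable def seq (μ : ℕ → Measure (Fin d → ℝ)) (l : Fin d → ℝ) : ℕ → EReal :=
  fun n => ((((n:ℝ)⁻¹ : ℝ)) : EReal) * ENNReal.log (LL (μ n) ((n:ℝ) • l))

variable {μ : ℕ → Measure (Fin d → ℝ)} {Λ : (Fin d → ℝ) → EReal}

lemma ev_LL_le {l : Fin d → ℝ} (hl : Tendsto (seq μ l) atTop (𝓝 (Λ l))) {M : ℝ}
    (h : Λ l < (M : ℝ)) :
    ∀ᶠ n : ℕ in atTop, LL (μ n) ((n:ℝ) • l) ≤ EReal.exp (((n:ℝ) * M : ℝ)) := by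
  filter_upwards [hl.eventually_lt_const h, eventually_ge_atTop 1] with n h1 hn
  have h2 : ENNReal.log (LL (μ n) ((n:ℝ) • l)) ≤ (((n:ℝ) * M : ℝ) : EReal) :=
    (er_inv_lt hn h1).le
  have h3 := EReal.exp_monotone h2
  rwa [ENNReal.exp_log] at h3

lemma ev_LL_ge {l : Fin d → ℝ} (hl : Tendsto (seq μ l) atTop (𝓝 (Λ l))) {m : ℝ}
    (h : (m : ℝ) < Λ l) :
    ∀ᶠ n : ℕ in atTop, EReal.exp (((n:ℝ) * m : ℝ)) ≤ LL (μ n) ((n:ℝ) • l) := by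
  filter_upwards [hl.eventually_const_lt h, eventually_ge_atTop 1] with n h1 hn
  have h2 : (((n:ℝ) * m : ℝ) : EReal) ≤ ENNReal.log (LL (μ n) ((n:ℝ) • l)) :=
    (er_lt_inv hn h1).le
  have h3 := EReal.exp_monotone h2
  rwa [ENNReal.exp_log] at h3

/-- Extract an exposing direction with margin from `t < fls Λ x`. -/
lemma fls_local (Λ : (Fin d → ℝ) → EReal) (x : Fin d → ℝ) {t : ℝ} (ht : (t : EReal) < fls Λ x) :
    ∃ (l : Fin d → ℝ) (M : ℝ), Λ l < (M : EReal) ∧ t + M < pr l x := by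
  obtain ⟨l, hl⟩ := lt_iSup_iff.1 ht
  have hc : Λ l < ((pr l x - t : ℝ) : EReal) := by
    rcases eq_or_ne (Λ l) ⊤ with htop | htop
    · rw [htop, EReal.sub_top] at hl
      exact absurd hl (by simp)
    rcases eq_or_ne (Λ l) ⊥ with hbot | hbot
    · rw [hbot]
      exact EReal.bot_lt_coe _
    obtain ⟨r, hr⟩ : ∃ r : ℝ, Λ l = (r : EReal) := ⟨(Λ l).toReal, (EReal.coe_toReal htop hbot).symm⟩
    rw [hr] at hl ⊢
    rw [← EReal.coe_sub, EReal.coe_lt_coe_iff] at hl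
    rw [EReal.coe_lt_coe_iff]
    linarith
  obtain ⟨M, hM1, hM2⟩ := EReal.exists_between_coe_real hc
  refine ⟨l, M, hM1, ?_⟩
  rw [EReal.coe_lt_coe_iff] at hM2
  linarith

/-- Local Chernoff upper bound around a point. -/
lemma local_up (hΛ : ∀ l, Tendsto (seq μ l) atTop (𝓝 (Λ l)))
    (x : Fin d → ℝ) {t : ℝ} (ht : (t : EReal) < fls Λ x) :
    ∃ U : Set (Fin d → ℝ), IsOpen U ∧ x ∈ U ∧
      ∀ᶠ n : ℕ in atTop, μ n U ≤ EReal.exp ((-((n:ℝ) * t) : ℝ)) := by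
  obtain ⟨l, M, hM, hs⟩ := fls_local Λ x ht
  refine ⟨{y | t + M < pr l y}, (isOpen_Ioi).preimage (continuous_pr l), hs, ?_⟩
  filter_upwards [ev_LL_le (hΛ l) hM, eventually_ge_atTop 1] with n h1 hn
  have hsub : {y : Fin d → ℝ | t + M < pr l y} ⊆ {z | (n:ℝ) * (t+M) ≤ pr ((n:ℝ) • l) z} := by
    intro z hz
    rw [Set.mem_setOf_eq, pr_smul]
    have hn0 : (0:ℝ) ≤ (n:ℝ) := Nat.cast_nonneg n
    exact mul_le_mul_of_nonneg_left (le_of_lt hz) hn0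
  calc μ n {y | t + M < pr l y} ≤ EReal.exp ((-((n:ℝ)*(t+M)) : ℝ)) * LL (μ n) ((n:ℝ) • l) :=
        chernoff (μ n) _ _ hsub
  _ ≤ EReal.exp ((-((n:ℝ)*(t+M)) : ℝ)) * EReal.exp (((n:ℝ) * M : ℝ)) := mul_le_mul_right h1 _
  _ = EReal.exp ((-((n:ℝ) * t) : ℝ)) := by
      rw [← EReal.exp_add]
      norm_cast
      ring_nf

/-- Finite unions absorb the cardinality factor if we give up a bit of exponent. -/
lemma ev_union {ι : Type*} (s : Finset ι) (S : ι → Set (Fin d → ℝ)) {t t' : ℝ} (h : t < t')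
    (hev : ∀ i ∈ s, ∀ᶠ n : ℕ in atTop, μ n (S i) ≤ EReal.exp ((-((n:ℝ) * t') : ℝ))) :
    ∀ᶠ n : ℕ in atTop, μ n (⋃ i ∈ s, S i) ≤ EReal.exp ((-((n:ℝ) * t) : ℝ)) := by
  have hcard : ∀ᶠ n : ℕ in atTop, (s.card : ℝ) ≤ Real.exp ((n:ℝ) * (t' - t)) := by
    have h1 : Tendsto (fun n : ℕ => (n:ℝ) * (t' - t)) atTop atTop :=
      Tendsto.atTop_mul_const (by linarith) tendsto_natCast_atTop_atTop
    exact (Real.tendsto_exp_atTop.comp h1).eventually_ge_atTop _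
  filter_upwards [(eventually_all_finset s).2 hev, hcard] with n hb hc
  calc μ n (⋃ i ∈ s, S i) ≤ ∑ i ∈ s, μ n (S i) := measure_biUnion_finset_le s _
  _ ≤ ∑ _i ∈ s, EReal.exp ((-((n:ℝ) * t') : ℝ)) := Finset.sum_le_sum hb
  _ = (s.card : ℝ≥0∞) * EReal.exp ((-((n:ℝ) * t') : ℝ)) := by
      rw [Finset.sum_const, nsmul_eq_mul]
  _ ≤ EReal.exp (((n:ℝ) * (t' - t) : ℝ)) * EReal.exp ((-((n:ℝ) * t') : ℝ)) := by
      refine mul_le_mul_left ?_ _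
      rw [EReal.exp_coe]
      calc (s.card : ℝ≥0∞) = ENNReal.ofReal (s.card : ℝ) := by
            rw [ENNReal.ofReal_natCast]
      _ ≤ ENNReal.ofReal (Real.exp ((n:ℝ) * (t' - t))) := ENNReal.ofReal_le_ofReal hc
  _ = EReal.exp ((-((n:ℝ) * t) : ℝ)) := by
      rw [← EReal.exp_add]
      norm_cast
      ring_nf

lemma pr_single (j : Fin d) (x : Fin d → ℝ) : pr (Pi.single j 1) x = x j := by
  simp [pr, Pi.single_apply, Finset.sum_ite_eq']

lemma exp_mono_coe {a b : ℝ} (h : a ≤ b) : EReal.exp (a : ℝ) ≤ EReal.exp (b : ℝ) :=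
  EReal.exp_monotone (by exact_mod_cast h)

theorem master (μ : ℕ → Measure (Fin d → ℝ)) (Λ : (Fin d → ℝ) → EReal)
    (hΛ : ∀ l, Tendsto (seq μ l) atTop (𝓝 (Λ l)))
    {ε : ℝ} (hε : 0 < ε) (hD : ∀ l : Fin d → ℝ, (∀ j, |l j| ≤ ε) → Λ l < ⊤)
    {F : Set (Fin d → ℝ)} (hF : IsClosed F) {t t' : ℝ} (htt' : t < t')
    (ht' : ∀ x ∈ F, (t' : EReal) < fls Λ x) :
    ∀ᶠ n : ℕ in atTop, μ n F ≤ EReal.exp ((-((n:ℝ) * t) : ℝ)) := by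
  classical
  -- directions
  set ldir : Fin d × Bool → (Fin d → ℝ) :=
    fun i => (if i.2 then ε else -ε) • (Pi.single i.1 (1:ℝ) : Fin d → ℝ) with hldir
  have hpr_ldir : ∀ (i : Fin d × Bool) (x : Fin d → ℝ),
      pr (ldir i) x = (if i.2 then ε else -ε) * x i.1 := by
    intro i x
    rw [hldir]
    simp only [pr_smul, pr_single]
  have hldir_abs : ∀ i : Fin d × Bool, ∀ j, |ldir i j| ≤ ε := by
    rintro ⟨j0, b⟩ j
    simp only [hldir, Pi.smul_apply, smul_eq_mul, Pi.single_apply]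
    rcases eq_or_ne j j0 with h | h
    · cases b <;> simp [h, abs_of_pos hε, abs_of_neg (neg_neg_of_pos hε), le_refl]
    · simp [h, hε.le]
  have hDi : ∀ i, Λ (ldir i) < ⊤ := fun i => hD _ (hldir_abs i)
  obtain ⟨M, hM⟩ : ∃ M : ℝ, ∀ i : Fin d × Bool, Λ (ldir i) < ((M:ℝ) : EReal) := by
    refine ⟨(∑ i : Fin d × Bool, |(Λ (ldir i)).toReal + 1|) + 1, fun i => ?_⟩
    refine lt_trans (lt_toReal_add_one (hDi i)) ?_
    rw [EReal.coe_lt_coe_iff]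
    have h1 : |(Λ (ldir i)).toReal + 1| ≤ ∑ i : Fin d × Bool, |(Λ (ldir i)).toReal + 1| :=
      Finset.single_le_sum (f := fun i : Fin d × Bool => |(Λ (ldir i)).toReal + 1|)
        (fun i _ => abs_nonneg _) (Finset.mem_univ i)
    have h2 : (Λ (ldir i)).toReal + 1 ≤ |(Λ (ldir i)).toReal + 1| := le_abs_self _
    linarith
  obtain ⟨ρ, hερ⟩ : ∃ ρ : ℝ, ε * ρ = t' + M := ⟨(t' + M) / ε, by field_simp⟩
  -- halfspaces
  set H : Fin d × Bool → Set (Fin d → ℝ) :=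
    fun i => {x | ρ ≤ (if i.2 then x i.1 else -(x i.1))} with hHdef
  have hHev : ∀ i, ∀ᶠ n : ℕ in atTop, μ n (H i) ≤ EReal.exp ((-((n:ℝ) * t') : ℝ)) := by
    intro i
    filter_upwards [ev_LL_le (hΛ (ldir i)) (hM i)] with n h1
    have hsub : H i ⊆ {z | (n:ℝ) * (ε * ρ) ≤ pr ((n:ℝ) • ldir i) z} := by
      intro z hz
      rw [Set.mem_setOf_eq, pr_smul, hpr_ldir]
      have hz' : ρ ≤ (if i.2 then z i.1 else -(z i.1)) := hz
      have h2 : ε * ρ ≤ (if i.2 then ε else -ε) * z i.1 := by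
        cases hb : i.2 <;> rw [hb] at hz' <;> simp at hz' ⊢ <;> nlinarith
      exact mul_le_mul_of_nonneg_left h2 (Nat.cast_nonneg n)
    calc μ n (H i) ≤ EReal.exp ((-((n:ℝ) * (ε * ρ)) : ℝ)) * LL (μ n) ((n:ℝ) • ldir i) :=
          chernoff (μ n) _ _ hsub
    _ ≤ EReal.exp ((-((n:ℝ) * (ε * ρ)) : ℝ)) * EReal.exp (((n:ℝ) * M : ℝ)) :=
          mul_le_mul_right h1 _
    _ = EReal.exp ((-((n:ℝ) * (ε * ρ)) + (n:ℝ) * M : ℝ)) := by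
          rw [← EReal.exp_add]; norm_cast
    _ = EReal.exp ((-((n:ℝ) * t') : ℝ)) := by
          have he : (-((n:ℝ) * (ε * ρ)) + (n:ℝ) * M : ℝ) = -((n:ℝ) * t') := by rw [hερ]; ring
          rw [he]
  -- compact piece
  set K : Set (Fin d → ℝ) := Set.pi Set.univ (fun _ : Fin d => Set.Icc (-ρ) ρ) with hKdef
  have hKcomp : IsCompact K := isCompact_univ_pi fun _ => isCompact_Icc
  have hCcomp : IsCompact (F ∩ K) := hKcomp.inter_left hF
  choose U hUo hUx hUev using fun x : F => local_up hΛ (x : Fin d → ℝ) (ht' x x.2)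
  have hcover : F ∩ K ⊆ ⋃ x : F, U x := by
    intro z hz
    exact Set.mem_iUnion.2 ⟨⟨z, hz.1⟩, hUx ⟨z, hz.1⟩⟩
  obtain ⟨fs, hfs⟩ := hCcomp.elim_finite_subcover U hUo hcover
  have ht1 : t < (t + t') / 2 := by linarith
  have ht1' : (t + t') / 2 < t' := by linarith
  have hCev : ∀ᶠ n : ℕ in atTop, μ n (F ∩ K) ≤ EReal.exp ((-((n:ℝ) * ((t + t') / 2)) : ℝ)) := by
    filter_upwards [ev_union fs U ht1' (fun i _ => hUev i)] with n hn
    exact le_trans (measure_mono hfs) hn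
  -- assemble
  set S : Option (Fin d × Bool) → Set (Fin d → ℝ) := fun o => o.elim (F ∩ K) H with hSdef
  have hSev : ∀ o ∈ (Finset.univ : Finset (Option (Fin d × Bool))),
      ∀ᶠ n : ℕ in atTop, μ n (S o) ≤ EReal.exp ((-((n:ℝ) * ((t + t') / 2)) : ℝ)) := by
    rintro (_ | i) -
    · exact hCev
    · filter_upwards [hHev i] with n hn
      refine le_trans hn (exp_mono_coe ?_)
      nlinarith [Nat.cast_nonneg (α := ℝ) n]
  have hFsub : F ⊆ ⋃ o ∈ (Finset.univ : Finset (Option (Fin d × Bool))), S o := by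
    intro z hz
    by_cases hzK : z ∈ K
    · exact Set.mem_biUnion (Finset.mem_univ (none : Option (Fin d × Bool))) ⟨hz, hzK⟩
    · rw [hKdef, Set.mem_univ_pi] at hzK
      push_neg at hzK
      obtain ⟨j, hj⟩ := hzK
      rw [Set.mem_Icc] at hj
      push_neg at hj
      by_cases hzj : -ρ ≤ z j
      · refine Set.mem_biUnion (Finset.mem_univ (some (j, true))) ?_
        show z ∈ H (j, true)
        have : ρ ≤ z j := (hj hzj).le
        simpa [hHdef] using this
      · refine Set.mem_biUnion (Finset.mem_univ (some (j, false))) ?_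
        show z ∈ H (j, false)
        push_neg at hzj
        have : ρ ≤ -(z j) := by linarith
        simpa [hHdef] using this
  filter_upwards [ev_union Finset.univ S ht1 hSev] with n hn
  exact le_trans (measure_mono hFsub) hn

lemma interior_cube {Λ : (Fin d → ℝ) → EReal} {l₀ : Fin d → ℝ}
    (h : l₀ ∈ interior {l | Λ l < ⊤}) :
    ∃ ε : ℝ, 0 < ε ∧ ∀ θ : Fin d → ℝ, (∀ j, |θ j| ≤ ε) → Λ (θ + l₀) < ⊤ := by
  obtain ⟨ε, hε, hball⟩ := Metric.mem_nhds_iff.1 (mem_interior_iff_mem_nhds.1 h)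
  refine ⟨ε/2, by linarith, fun θ hθ => ?_⟩
  have hmem : θ + l₀ ∈ Metric.ball l₀ ε := by
    rw [Metric.mem_ball]
    have hd : dist (θ + l₀) l₀ ≤ ε/2 := by
      rw [dist_pi_le_iff (by linarith)]
      intro j
      rw [Real.dist_eq]
      simpa using hθ j
    linarith
  exact hball hmem

lemma pr_zero (x : Fin d → ℝ) : pr 0 x = 0 := by simp [pr]

lemma lambda_zero (hprob : ∀ n, IsProbabilityMeasure (μ n))
    (hΛ : ∀ l, Tendsto (seq μ l) atTop (𝓝 (Λ l))) : Λ 0 = 0 := by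
  have h1 : seq μ (0 : Fin d → ℝ) = fun _ => (0 : EReal) := by
    funext n
    haveI := hprob n
    have h2 : LL (μ n) (0 : Fin d → ℝ) = 1 := by
      have h3 : ∀ z : Fin d → ℝ, ENNReal.ofReal (Real.exp (pr 0 z)) = 1 := by
        intro z; rw [pr_zero]; simp
      simp only [LL]
      rw [lintegral_congr h3, lintegral_one, measure_univ]
    simp [seq, h2]
  have h4 := hΛ 0
  rw [h1] at h4
  exact (tendsto_nhds_unique tendsto_const_nhds h4).symm

lemma fls_nonneg (hΛ0 : Λ 0 = 0) (x : Fin d → ℝ) : 0 ≤ fls Λ x := by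
  have h := le_iSup (fun l : Fin d → ℝ => ((pr l x : ℝ) : EReal) - Λ l) 0
  rw [pr_zero, hΛ0] at h
  simpa [fls] using h

theorem part_a (μ : ℕ → Measure (Fin d → ℝ)) (Λ : (Fin d → ℝ) → EReal)
    (hΛ : ∀ l, Tendsto (seq μ l) atTop (𝓝 (Λ l)))
    (h0 : (0 : Fin d → ℝ) ∈ interior {l | Λ l < ⊤}) {F : Set (Fin d → ℝ)} (hF : IsClosed F) :
    (⨅ x ∈ F, fls Λ x) ≤ liminf (fun n : ℕ => negLogRate n (μ n F)) atTop := by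
  refine er_le_of_forall fun t ht => ?_
  obtain ⟨t', htt', ht'⟩ := EReal.lt_iff_exists_real_btwn.1 ht
  obtain ⟨ε, hε, hD⟩ := interior_cube h0
  have hD' : ∀ l : Fin d → ℝ, (∀ j, |l j| ≤ ε) → Λ l < ⊤ := by
    intro l hl
    have := hD l hl
    rwa [add_zero] at this
  have hpt : ∀ x ∈ F, (t' : EReal) < fls Λ x := fun x hx =>
    lt_of_lt_of_le ht' (iInf₂_le x hx)
  exact t_le_liminf (master μ Λ hΛ hε hD' hF (by exact_mod_cast htt') hpt)

lemma er_mul_add_real {c : ℝ} (hc : 0 ≤ c) (x : EReal) (r : ℝ) :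
    (c : EReal) * (x + (r : EReal)) = (c : EReal) * x + ((c * r : ℝ) : EReal) := by
  rcases eq_or_lt_of_le hc with h0 | hpos
  · rw [← h0]; simp
  induction x using EReal.rec with
  | bot =>
    rw [EReal.bot_add, EReal.coe_mul_bot_of_pos hpos, EReal.bot_add]
  | coe s => norm_cast; ring
  | top =>
    rw [EReal.top_add_coe, EReal.coe_mul_top_of_pos hpos, EReal.top_add_coe]

lemma sub_coe_lt_top {x : EReal} (hx : x < ⊤) (c : ℝ) : x - (c : EReal) < ⊤ := by
  induction x using EReal.rec with
  | bot => rw [EReal.bot_sub]; exact bot_lt_top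
  | coe s => rw [← EReal.coe_sub]; exact EReal.coe_lt_top _
  | top => simp at hx

lemma le_fls (Λ : (Fin d → ℝ) → EReal) (w l : Fin d → ℝ) :
    ((pr l w : ℝ) : EReal) - Λ l ≤ fls Λ w := by
  exact le_iSup (fun l : Fin d → ℝ => ((pr l w : ℝ) : EReal) - Λ l) l

lemma fls_lower_on (Λt : (Fin d → ℝ) → EReal) {l : Fin d → ℝ} {M t : ℝ}
    (h : Λt l < (M : EReal)) : ∀ w : Fin d → ℝ, t + M < pr l w → (t : EReal) < fls Λt w := by
  intro w hw
  have h1 : ((pr l w - M : ℝ) : EReal) ≤ ((pr l w : ℝ) : EReal) - Λt l := by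
    rw [EReal.coe_sub]
    exact EReal.sub_le_sub le_rfl h.le
  have h2 : (t : EReal) < ((pr l w - M : ℝ) : EReal) := by
    rw [EReal.coe_lt_coe_iff]; linarith
  exact lt_of_lt_of_le (lt_of_lt_of_le h2 h1) (le_fls Λt w l)

lemma compact_pos (Λt : (Fin d → ℝ) → EReal) {C : Set (Fin d → ℝ)} (hC : IsCompact C)
    (hpos : ∀ z ∈ C, (0 : EReal) < fls Λt z) :
    ∃ t : ℝ, 0 < t ∧ ∀ z ∈ C, (t : EReal) < fls Λt z := by
  classical
  by_cases hCe : C = ∅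
  · exact ⟨1, one_pos, by simp [hCe]⟩
  have hloc : ∀ z : C, ∃ tz : ℝ, 0 < tz ∧ ∃ U : Set (Fin d → ℝ), IsOpen U ∧ (z : Fin d → ℝ) ∈ U ∧
      ∀ w ∈ U, (tz : EReal) < fls Λt w := by
    intro z
    obtain ⟨tz, h1, h2⟩ := EReal.lt_iff_exists_real_btwn.1 (hpos z z.2)
    obtain ⟨l, M, hM, hs⟩ := fls_local Λt z h2
    exact ⟨tz, by exact_mod_cast h1, {w | tz + M < pr l w},
      isOpen_Ioi.preimage (continuous_pr l), hs, fun w hw => fls_lower_on Λt hM w hw⟩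
  choose tz htz U hUo hUx hUlt using hloc
  obtain ⟨fs, hfs⟩ := hC.elim_finite_subcover U hUo
    (fun z hz => Set.mem_iUnion.2 ⟨⟨z, hz⟩, hUx _⟩)
  have hfs_ne : fs.Nonempty := by
    rcases Finset.eq_empty_or_nonempty fs with h | h
    · exfalso
      obtain ⟨z, hz⟩ := Set.nonempty_iff_ne_empty.2 hCe
      have := hfs hz
      simp [h] at this
    · exact h
  refine ⟨fs.inf' hfs_ne tz, ?_, ?_⟩
  · rw [Finset.lt_inf'_iff]
    exact fun i _ => htz i
  · intro z hz
    obtain ⟨i, hi, hzU⟩ := Set.mem_iUnion₂.1 (hfs hz)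
    refine lt_of_le_of_lt ?_ (hUlt i z hzU)
    exact_mod_cast (Finset.inf'_le tz hi : _ ≤ tz i)

lemma fls_far (Λt : (Fin d → ℝ) → EReal) {ε : ℝ} (hε : 0 < ε)
    (hD : ∀ l : Fin d → ℝ, (∀ j, |l j| ≤ ε) → Λt l < ⊤) :
    ∃ ρ : ℝ, ∀ z : Fin d → ℝ,
      z ∉ Set.pi Set.univ (fun _ : Fin d => Set.Icc (-ρ) ρ) → (1 : EReal) < fls Λt z := by
  classical
  set ldir : Fin d × Bool → (Fin d → ℝ) :=
    fun i => (if i.2 then ε else -ε) • (Pi.single i.1 (1:ℝ) : Fin d → ℝ) with hldir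
  have hpr_ldir : ∀ (i : Fin d × Bool) (x : Fin d → ℝ),
      pr (ldir i) x = (if i.2 then ε else -ε) * x i.1 := by
    intro i x
    rw [hldir]
    simp only [pr_smul, pr_single]
  have hldir_abs : ∀ i : Fin d × Bool, ∀ j, |ldir i j| ≤ ε := by
    rintro ⟨j0, b⟩ j
    simp only [hldir, Pi.smul_apply, smul_eq_mul, Pi.single_apply]
    rcases eq_or_ne j j0 with h | h
    · cases b <;> simp [h, abs_of_pos hε, abs_of_neg (neg_neg_of_pos hε), le_refl]
    · simp [h, hε.le]
  have hDi : ∀ i, Λt (ldir i) < ⊤ := fun i => hD _ (hldir_abs i)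
  obtain ⟨M, hM⟩ : ∃ M : ℝ, ∀ i : Fin d × Bool, Λt (ldir i) < ((M:ℝ) : EReal) := by
    refine ⟨(∑ i : Fin d × Bool, |(Λt (ldir i)).toReal + 1|) + 1, fun i => ?_⟩
    refine lt_trans (lt_toReal_add_one (hDi i)) ?_
    rw [EReal.coe_lt_coe_iff]
    have h1 : |(Λt (ldir i)).toReal + 1| ≤ ∑ i : Fin d × Bool, |(Λt (ldir i)).toReal + 1| :=
      Finset.single_le_sum (f := fun i : Fin d × Bool => |(Λt (ldir i)).toReal + 1|)
        (fun i _ => abs_nonneg _) (Finset.mem_univ i)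
    have h2 : (Λt (ldir i)).toReal + 1 ≤ |(Λt (ldir i)).toReal + 1| := le_abs_self _
    linarith
  obtain ⟨ρ, hρ⟩ : ∃ ρ : ℝ, ε * ρ = 2 + M := ⟨(2 + M) / ε, by field_simp⟩
  refine ⟨ρ, fun z hz => ?_⟩
  rw [Set.mem_univ_pi] at hz
  push_neg at hz
  obtain ⟨j, hj⟩ := hz
  rw [Set.mem_Icc] at hj
  push_neg at hj
  by_cases hzj : -ρ ≤ z j
  · refine fls_lower_on Λt (hM (j, true)) z ?_
    rw [hpr_ldir]
    simp only [if_true]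
    have h3 : ρ < z j := hj hzj
    nlinarith
  · refine fls_lower_on Λt (hM (j, false)) z ?_
    rw [hpr_ldir]
    simp only [Bool.false_eq_true, if_false]
    push_neg at hzj
    nlinarith

lemma fls_tilt (Λ : (Fin d → ℝ) → EReal) (lam : Fin d → ℝ) (c : ℝ) (z : Fin d → ℝ) :
    fls (fun θ => Λ (θ + lam) - (c : EReal)) z = fls Λ z + ((c - pr lam z : ℝ) : EReal) := by
  have h1 : ∀ θ' : Fin d → ℝ, ((pr (θ' - lam) z : ℝ) : EReal) - (Λ θ' - (c : EReal))
      = (((pr θ' z : ℝ) : EReal) - Λ θ') + ((c - pr lam z : ℝ) : EReal) := by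
    intro θ'
    rw [pr_sub]
    rcases eq_or_ne (Λ θ') ⊤ with ht | ht
    · rw [ht, EReal.top_sub_coe, EReal.sub_top, EReal.sub_top, EReal.bot_add]
    rcases eq_or_ne (Λ θ') ⊥ with hb | hb
    · rw [hb, EReal.bot_sub, EReal.coe_sub_bot, EReal.coe_sub_bot, EReal.top_add_coe]
    obtain ⟨r, hr⟩ : ∃ r : ℝ, Λ θ' = (r : EReal) := ⟨(Λ θ').toReal, (EReal.coe_toReal ht hb).symm⟩
    rw [hr]
    norm_cast
    ring
  calc fls (fun θ => Λ (θ + lam) - (c : EReal)) z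
      = ⨆ θ' : Fin d → ℝ, ((pr ((Equiv.subRight lam) θ') z : ℝ) : EReal)
          - (Λ ((Equiv.subRight lam) θ' + lam) - (c : EReal)) := by
        rw [fls]
        exact ((Equiv.subRight lam).iSup_comp
          (g := fun θ => ((pr θ z : ℝ) : EReal) - (Λ (θ + lam) - (c : EReal)))).symm
  _ = ⨆ θ' : Fin d → ℝ, (((pr θ' z : ℝ) : EReal) - Λ θ') + ((c - pr lam z : ℝ) : EReal) := by
        refine iSup_congr fun θ' => ?_
        have he : (Equiv.subRight lam) θ' = θ' - lam := rfl
        rw [he, sub_add_cancel]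
        exact h1 θ'
  _ = fls Λ z + ((c - pr lam z : ℝ) : EReal) := iSup_add_const _ _

lemma ev_exp_le_half {γ : ℝ} (hγ : 0 < γ) :
    ∀ᶠ n : ℕ in atTop, (EReal.exp ((-((n:ℝ) * γ) : ℝ)) : ℝ≥0∞) ≤ 2⁻¹ := by
  have h1 : Tendsto (fun n : ℕ => -((n:ℝ) * γ)) atTop atBot :=
    tendsto_neg_atTop_atBot.comp (Tendsto.atTop_mul_const hγ tendsto_natCast_atTop_atTop)
  filter_upwards [h1.eventually (eventually_le_atBot (Real.log (1/2)))] with n hn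
  rw [EReal.exp_coe]
  have h2 : Real.exp (-((n:ℝ) * γ)) ≤ 1/2 := by
    calc Real.exp (-((n:ℝ) * γ)) ≤ Real.exp (Real.log (1/2)) := Real.exp_le_exp.2 hn
    _ = 1/2 := Real.exp_log (by norm_num)
  calc ENNReal.ofReal (Real.exp (-((n:ℝ) * γ))) ≤ ENNReal.ofReal (1/2) :=
        ENNReal.ofReal_le_ofReal h2
  _ = 2⁻¹ := by
      rw [one_div, ENNReal.ofReal_inv_of_pos (by norm_num)]
      norm_num

theorem part_b_point (μ : ℕ → Measure (Fin d → ℝ)) (hprob : ∀ n, IsProbabilityMeasure (μ n))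
    (Λ : (Fin d → ℝ) → EReal) (hΛ : ∀ l, Tendsto (seq μ l) atTop (𝓝 (Λ l)))
    (hΛ0 : Λ 0 = 0)
    {G : Set (Fin d → ℝ)} (hG : IsOpen G) {y : Fin d → ℝ} (hyG : y ∈ G)
    {lam : Fin d → ℝ} (hlam : lam ∈ interior {l | Λ l < ⊤})
    (hexp : ∀ x, x ≠ y →
      ((pr lam x : ℝ) : EReal) - fls Λ x < ((pr lam y : ℝ) : EReal) - fls Λ y) :
    limsup (fun n : ℕ => negLogRate n (μ n G)) atTop ≤ fls Λ y := by
  classical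
  have hlam_mem : lam ∈ {l : Fin d → ℝ | Λ l < ⊤} := interior_subset hlam
  have hlam_top : Λ lam < ⊤ := hlam_mem
  rcases eq_or_ne (Λ lam) ⊥ with hbot | hbot
  · have htop : fls Λ y = ⊤ := by
      refine top_le_iff.1 ?_
      have h := le_fls Λ y lam
      rwa [hbot, EReal.coe_sub_bot] at h
    rw [htop]; exact le_top
  obtain ⟨c, hc⟩ : ∃ c : ℝ, Λ lam = (c : EReal) := ⟨_, (EReal.coe_toReal hlam_top.ne hbot).symm⟩
  rcases eq_or_ne (fls Λ y) ⊤ with hfy | hfy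
  · rw [hfy]; exact le_top
  have hfy_bot : fls Λ y ≠ ⊥ := by
    intro h
    have h2 := fls_nonneg hΛ0 y
    rw [h] at h2
    simp at h2
  obtain ⟨ℓ, hℓ⟩ : ∃ ℓ : ℝ, fls Λ y = (ℓ : EReal) := ⟨_, (EReal.coe_toReal hfy hfy_bot).symm⟩
  have hpyc : pr lam y - c ≤ ℓ := by
    have h := le_fls Λ y lam
    rwa [hc, hℓ, ← EReal.coe_sub, EReal.coe_le_coe_iff] at h
  have hκpos : 0 < (∑ j, |lam j|) + 2 := by
    have h : (0:ℝ) ≤ ∑ j, |lam j| := Finset.sum_nonneg fun _ _ => abs_nonneg _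
    linarith
  -- main δ-estimate
  have hdelta : ∀ δ : ℝ, 0 < δ → Metric.ball y δ ⊆ G →
      limsup (fun n : ℕ => negLogRate n (μ n G)) atTop
        ≤ ((ℓ + ((∑ j, |lam j|) + 2) * δ : ℝ) : EReal) := by
    intro δ hδ hBG
    set B := Metric.ball y δ with hB
    have measB : MeasurableSet B := measurableSet_ball
    have hyB : y ∈ B := Metric.mem_ball_self hδ
    have hprB : ∀ z ∈ B, pr lam z ≤ pr lam y + (∑ j, |lam j|) * δ := by
      intro z hz
      have hzd : ∀ j, |z j - y j| ≤ δ := by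
        intro j
        have h1 : dist (z j) (y j) ≤ dist z y := dist_le_pi_dist z y j
        have h2 : dist z y < δ := Metric.mem_ball.1 hz
        rw [Real.dist_eq] at h1
        linarith
      have h3 : pr lam z - pr lam y ≤ (∑ j, |lam j|) * δ := by
        rw [pr, pr, ← Finset.sum_sub_distrib, Finset.sum_mul]
        refine Finset.sum_le_sum fun j _ => ?_
        have h4 : lam j * z j - lam j * y j = lam j * (z j - y j) := by ring
        rw [h4]
        calc lam j * (z j - y j) ≤ |lam j * (z j - y j)| := le_abs_self _
        _ = |lam j| * |z j - y j| := abs_mul _ _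
        _ ≤ |lam j| * δ := mul_le_mul_of_nonneg_left (hzd j) (abs_nonneg _)
      linarith
    -- tilting
    set A : ℕ → ℝ≥0∞ := fun n => LL (μ n) ((n:ℝ) • lam) with hA
    have hA0 : ∀ n, A n ≠ 0 := by
      intro n h
      haveI := hprob n
      rw [hA] at h
      simp only at h
      rw [LL, lintegral_eq_zero_iff (measurable_expr _)] at h
      obtain ⟨z, hz⟩ := h.exists
      simp only [Pi.zero_apply, ENNReal.ofReal_eq_zero] at hz
      exact absurd hz (not_le.2 (Real.exp_pos _))
    set ν : ℕ → Measure (Fin d → ℝ) := fun n =>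
      if h : A n < ⊤ then (A n)⁻¹ • (μ n).withDensity
        (fun z => ENNReal.ofReal (Real.exp (pr ((n:ℝ) • lam) z))) else μ n with hν
    have hν_apply : ∀ n, A n < ⊤ → ∀ S : Set (Fin d → ℝ), MeasurableSet S →
        ν n S = (A n)⁻¹ * ∫⁻ z in S, ENNReal.ofReal (Real.exp (pr ((n:ℝ) • lam) z)) ∂(μ n) := by
      intro n hn S hS
      rw [hν]
      simp only [dif_pos hn]
      rw [Measure.smul_apply, withDensity_apply _ hS, smul_eq_mul]
    have hν_prob : ∀ n, IsProbabilityMeasure (ν n) := by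
      intro n
      rw [hν]
      simp only
      split_ifs with h
      · constructor
        rw [Measure.smul_apply, withDensity_apply _ MeasurableSet.univ, smul_eq_mul,
          setLIntegral_univ]
        exact ENNReal.inv_mul_cancel (hA0 n) h.ne
      · exact hprob n
    have hAev : ∀ᶠ n : ℕ in atTop, A n < ⊤ := by
      have h1 : Λ lam < ((c + 1 : ℝ) : EReal) := by
        rw [hc]; exact_mod_cast (lt_add_one c)
      filter_upwards [ev_LL_le (hΛ lam) h1] with n hn
      rw [hA]
      exact lt_of_le_of_lt hn (EReal.exp_lt_top_iff.2 (EReal.coe_lt_top _))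
    -- tilted limit
    have hseqt : ∀ θ : Fin d → ℝ,
        Tendsto (seq ν θ) atTop (𝓝 (Λ (θ + lam) - (c : EReal))) := by
      intro θ
      have heq : ∀ᶠ n : ℕ in atTop, seq ν θ n = seq μ (θ + lam) n + (- seq μ lam n) := by
        filter_upwards [hAev] with n hfin
        have hLLν : LL (ν n) ((n:ℝ) • θ) = (A n)⁻¹ * LL (μ n) ((n:ℝ) • (θ + lam)) := by
          rw [LL, hν]
          simp only [dif_pos hfin]
          rw [lintegral_smul_measure,
            lintegral_withDensity_eq_lintegral_mul _ (measurable_expr _) (measurable_expr _)]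
          rw [LL]
          congr 1
          refine lintegral_congr fun z => ?_
          simp only [Pi.mul_apply]
          rw [← ENNReal.ofReal_mul (Real.exp_nonneg _), ← Real.exp_add]
          congr 2
          rw [smul_add, pr_add]
          ring
        have hlogA : ENNReal.log (A n) = ((Real.log (A n).toReal : ℝ) : EReal) :=
          ENNReal.log_pos_real (hA0 n) hfin.ne
        have h2 : - seq μ lam n = ((((n:ℝ)⁻¹) * (-(Real.log (A n).toReal)) : ℝ) : EReal) := by
          simp only [seq]
          rw [show LL (μ n) ((n:ℝ) • lam) = A n from rfl, hlogA, ← EReal.coe_mul, ← EReal.coe_neg,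
            EReal.coe_eq_coe_iff]
          ring
        rw [h2]
        simp only [seq]
        rw [hLLν, ENNReal.log_mul_add, ENNReal.log_inv, hlogA, ← EReal.coe_neg, add_comm
          (((-(Real.log (A n).toReal) : ℝ)) : EReal) _,
          er_mul_add_real (by positivity) _ _]
      have hne : Tendsto (fun n => - seq μ lam n) atTop (𝓝 (-(c : EReal))) := by
        have h3 := hΛ lam
        rw [hc] at h3
        exact h3.neg
      have hadd : Tendsto (fun n => seq μ (θ + lam) n + (- seq μ lam n)) atTop
          (𝓝 (Λ (θ + lam) + (-(c : EReal)))) := by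
        have hcont : ContinuousAt (fun p : EReal × EReal => p.1 + p.2)
            (Λ (θ + lam), -(c : EReal)) := by
          refine EReal.continuousAt_add (Or.inr ?_) (Or.inr ?_)
          · rw [← EReal.coe_neg]; exact EReal.coe_ne_bot _
          · rw [← EReal.coe_neg]; exact EReal.coe_ne_top _
        exact hcont.tendsto.comp ((hΛ (θ + lam)).prodMk_nhds hne)
      rw [sub_eq_add_neg]
      exact Tendsto.congr' (Filter.EventuallyEq.symm heq) hadd
    -- interior condition for the tilted Λ
    obtain ⟨ε', hε', hDt⟩ := interior_cube hlam
    have hDt' : ∀ θ : Fin d → ℝ, (∀ j, |θ j| ≤ ε') →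
        (fun θ => Λ (θ + lam) - (c : EReal)) θ < ⊤ :=
      fun θ hθ => sub_coe_lt_top (hDt θ hθ) c
    -- positivity of tilted rate away from y
    have hpos : ∀ z : Fin d → ℝ, z ≠ y →
        (0 : EReal) < fls (fun θ => Λ (θ + lam) - (c : EReal)) z := by
      intro z hz
      rw [fls_tilt]
      rcases eq_or_ne (fls Λ z) ⊤ with hfz | hfz
      · rw [hfz, EReal.top_add_coe]
        exact lt_of_lt_of_le (by norm_num : (0:EReal) < 1) le_top
      have hfzbot : fls Λ z ≠ ⊥ := by
        intro h
        have h2 := fls_nonneg hΛ0 z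
        rw [h] at h2
        simp at h2
      obtain ⟨v, hv⟩ : ∃ v : ℝ, fls Λ z = (v : EReal) := ⟨_, (EReal.coe_toReal hfz hfzbot).symm⟩
      have h3 := hexp z hz
      rw [hv, hℓ, ← EReal.coe_sub, ← EReal.coe_sub, EReal.coe_lt_coe_iff] at h3
      rw [hv, ← EReal.coe_add]
      have h4 : (0:ℝ) < v + (c - pr lam z) := by linarith
      exact_mod_cast h4
    -- uniform positivity on Bᶜ
    obtain ⟨ρ, hρ⟩ := fls_far (fun θ => Λ (θ + lam) - (c : EReal)) hε' hDt'
    have hCcomp : IsCompact (Bᶜ ∩ Set.pi Set.univ (fun _ : Fin d => Set.Icc (-ρ) ρ)) :=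
      (isCompact_univ_pi fun _ => isCompact_Icc).inter_left
        (Metric.isOpen_ball).isClosed_compl
    obtain ⟨tC, htC, htCpos⟩ := compact_pos _ hCcomp
      (fun z hz => hpos z (fun h => hz.1 (h ▸ hyB)))
    have ht₀pos : 0 < min tC 1 := lt_min htC one_pos
    have hBpos : ∀ z ∈ Bᶜ, ((min tC 1 : ℝ) : EReal) < fls (fun θ => Λ (θ + lam) - (c : EReal)) z := by
      intro z hz
      by_cases hzK : z ∈ Set.pi Set.univ (fun _ : Fin d => Set.Icc (-ρ) ρ)
      · exact lt_of_le_of_lt (by exact_mod_cast min_le_left tC 1) (htCpos z ⟨hz, hzK⟩)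
      · refine lt_of_le_of_lt ?_ (hρ z hzK)
        exact_mod_cast min_le_right tC 1
    have hmaster := master ν _ hseqt hε' hDt'
      (Metric.isOpen_ball).isClosed_compl (half_lt_self ht₀pos) hBpos
    -- ν n B is eventually at least 1/2
    have hνB : ∀ᶠ n : ℕ in atTop, (2⁻¹ : ℝ≥0∞) ≤ ν n B := by
      filter_upwards [hmaster, ev_exp_le_half (half_pos ht₀pos)] with n h1 h2
      haveI := hν_prob n
      have h3 : ν n Bᶜ ≤ 2⁻¹ := le_trans h1 h2
      have h4 : ν n B = 1 - ν n Bᶜ := by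
        rw [← prob_compl_eq_one_sub measB.compl, compl_compl]
      rw [h4]
      calc (2⁻¹ : ℝ≥0∞) = 1 - 2⁻¹ := ENNReal.one_sub_inv_two.symm
      _ ≤ 1 - ν n Bᶜ := tsub_le_tsub_left h3 1
    -- lower bound for μ n G
    have hALB := ev_LL_ge (hΛ lam)
      (show ((c - δ : ℝ) : EReal) < Λ lam by
        rw [hc]; exact_mod_cast (by linarith : c - δ < c))
    have hmain : ∀ᶠ n : ℕ in atTop,
        EReal.exp ((-((n:ℝ) * (pr lam y + (∑ j, |lam j|) * δ - (c - δ) + δ)) : ℝ)) ≤ μ n G := by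
      filter_upwards [hAev, hνB, hALB, ev_exp_le_half hδ] with n hfin hhalf hlb hsmall
      set W := ∫⁻ z in B, ENNReal.ofReal (Real.exp (pr ((n:ℝ) • lam) z)) ∂(μ n) with hW
      have hνBW : ν n B = (A n)⁻¹ * W := hν_apply n hfin B measB
      have hWA : A n * ν n B ≤ W := by
        rw [hνBW, ← mul_assoc, ENNReal.mul_inv_cancel (hA0 n) hfin.ne, one_mul]
      set a : ℝ := pr lam y + (∑ j, |lam j|) * δ with ha
      have hWup : W ≤ EReal.exp (((n:ℝ) * a : ℝ)) * μ n B := by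
        rw [hW]
        calc ∫⁻ z in B, ENNReal.ofReal (Real.exp (pr ((n:ℝ) • lam) z)) ∂(μ n)
            ≤ ∫⁻ _ in B, (EReal.exp (((n:ℝ) * a : ℝ)) : ℝ≥0∞) ∂(μ n) := by
              refine setLIntegral_mono' measB fun z hz => ?_
              rw [EReal.exp_coe]
              refine ENNReal.ofReal_le_ofReal (Real.exp_le_exp.2 ?_)
              rw [pr_smul]
              exact mul_le_mul_of_nonneg_left (hprB z hz) (Nat.cast_nonneg n)
        _ = EReal.exp (((n:ℝ) * a : ℝ)) * μ n B := setLIntegral_const _ _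
      have hμB : EReal.exp ((-((n:ℝ) * a) : ℝ)) * W ≤ μ n B := by
        calc EReal.exp ((-((n:ℝ) * a) : ℝ)) * W
            ≤ EReal.exp ((-((n:ℝ) * a) : ℝ)) * (EReal.exp (((n:ℝ) * a : ℝ)) * μ n B) :=
              mul_le_mul_right hWup _
        _ = μ n B := by
            rw [← mul_assoc, ← EReal.exp_add, ← EReal.coe_add, neg_add_cancel]
            norm_num
      calc EReal.exp ((-((n:ℝ) * (a - (c - δ) + δ)) : ℝ))
          = EReal.exp ((-((n:ℝ) * a) : ℝ)) *
            (EReal.exp (((n:ℝ) * (c - δ) : ℝ)) * EReal.exp ((-((n:ℝ) * δ) : ℝ))) := by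
            have hre : (-((n:ℝ) * (a - (c - δ) + δ)) : ℝ)
                = (-((n:ℝ) * a)) + (((n:ℝ) * (c - δ)) + (-((n:ℝ) * δ))) := by ring
            rw [hre, EReal.coe_add, EReal.exp_add, EReal.coe_add, EReal.exp_add]
      _ ≤ EReal.exp ((-((n:ℝ) * a) : ℝ)) * (A n * ν n B) :=
            mul_le_mul_right (mul_le_mul' hlb (le_trans hsmall hhalf)) _
      _ ≤ EReal.exp ((-((n:ℝ) * a) : ℝ)) * W := mul_le_mul_right hWA _
      _ ≤ μ n B := hμB
      _ ≤ μ n G := measure_mono hBG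
    have hfinal := limsup_le_t (μ := μ) hmain
    refine le_trans hfinal ?_
    rw [EReal.coe_le_coe_iff]
    have hS : (0:ℝ) ≤ ∑ j, |lam j| := Finset.sum_nonneg fun _ _ => abs_nonneg _
    nlinarith [hpyc]
  -- conclude from the δ-estimate
  rw [hℓ]
  by_contra hcon
  push_neg at hcon
  obtain ⟨u, hu1, hu2⟩ := EReal.lt_iff_exists_real_btwn.1 hcon
  rw [EReal.coe_lt_coe_iff] at hu1
  obtain ⟨δ₀, hδ₀, hball⟩ := Metric.isOpen_iff.1 hG y hyG
  set δ := min (δ₀ / 2) ((u - ℓ) / (2 * ((∑ j, |lam j|) + 2))) with hδdef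
  have hδpos : 0 < δ := by
    refine lt_min (by linarith) ?_
    apply div_pos (by linarith) (by linarith)
  have hsub : Metric.ball y δ ⊆ G :=
    subset_trans (Metric.ball_subset_ball (le_trans (min_le_left _ _) (by linarith))) hball
  have hest := hdelta δ hδpos hsub
  have hlt : ((ℓ + ((∑ j, |lam j|) + 2) * δ : ℝ) : EReal) < (u : EReal) := by
    rw [EReal.coe_lt_coe_iff]
    have hδle : δ ≤ (u - ℓ) / (2 * ((∑ j, |lam j|) + 2)) := min_le_right _ _
    have h5 : ((∑ j, |lam j|) + 2) * δ ≤ (u - ℓ) / 2 := by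
      have h6 : ((∑ j, |lam j|) + 2) * δ
          ≤ ((∑ j, |lam j|) + 2) * ((u - ℓ) / (2 * ((∑ j, |lam j|) + 2))) :=
        mul_le_mul_of_nonneg_left hδle (by linarith)
      have h7 : ((∑ j, |lam j|) + 2) * ((u - ℓ) / (2 * ((∑ j, |lam j|) + 2))) = (u - ℓ) / 2 := by
        field_simp
      linarith
    linarith
  exact absurd (lt_trans (lt_of_le_of_lt hest hlt) hu2) (lt_irrefl _)

end GEaux

/-- **Gärtner–Ellis theorem.** -/

theorem gartner_ellis {d : ℕ} (μ : ℕ → Measure (Fin d → ℝ))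
    (hprob : ∀ n, IsProbabilityMeasure (μ n))
    (Λ : (Fin d → ℝ) → EReal)
    (hΛ : ∀ l : Fin d → ℝ,
      Tendsto (fun n : ℕ => ((((n : ℝ)⁻¹ : ℝ)) : EReal) * logMGF (μ n) ((n : ℝ) • l))
        atTop (𝓝 (Λ l)))
    (h0 : (0 : Fin d → ℝ) ∈ interior {l | Λ l < ⊤})
    (Λstar : (Fin d → ℝ) → EReal)
    (hΛstar : ∀ x, Λstar x = ⨆ l : Fin d → ℝ, ((∑ j, l j * x j : ℝ) : EReal) - Λ l)
    (ℱ : Set (Fin d → ℝ))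
    (hℱ : ℱ = {y | ∃ l ∈ interior {l | Λ l < ⊤}, ∀ x ≠ y,
      ((∑ j, l j * x j : ℝ) : EReal) - Λstar x
        < ((∑ j, l j * y j : ℝ) : EReal) - Λstar y}) :
    (∀ F : Set (Fin d → ℝ), IsClosed F →
      (⨅ x ∈ F, Λstar x) ≤ liminf (fun n : ℕ => negLogRate n (μ n F)) atTop)
    ∧ (∀ G : Set (Fin d → ℝ), IsOpen G →
      limsup (fun n : ℕ => negLogRate n (μ n G)) atTop ≤ ⨅ x ∈ G ∩ ℱ, Λstar x) := by
  have hΛ' : ∀ l : Fin d → ℝ, Tendsto (GEaux.seq μ l) atTop (𝓝 (Λ l)) := fun l => hΛ l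
  have hfls : ∀ x, Λstar x = GEaux.fls Λ x := fun x => hΛstar x
  have hΛ0 : Λ 0 = 0 := GEaux.lambda_zero hprob hΛ'
  constructor
  · intro F hF
    have h1 := GEaux.part_a μ Λ hΛ' h0 hF
    have h2 : (⨅ x ∈ F, Λstar x) = ⨅ x ∈ F, GEaux.fls Λ x := by
      simp only [hfls]
    rw [h2]
    exact h1
  · intro G hGopen
    refine le_iInf₂ fun y hy => ?_
    obtain ⟨hyG, hyF⟩ := hy
    rw [hℱ] at hyF
    obtain ⟨lam, hlam, hsep⟩ := hyF
    rw [hfls y]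
    refine GEaux.part_b_point μ hprob Λ hΛ' hΛ0 hGopen hyG hlam ?_
    intro x hx
    have h3 := hsep x hx
    rwa [hfls x, hfls y] at h3
end

section
/- Let 𝒳 be a metric space. (i) Every closed ball B_{ε]}(P_X) under the Lévy–Prokhorov metric on Borel probability measures on 𝒳 is completely convex: if (𝒵,Σ,Q_Z) is a probability space and Q_{X|Z} is a Markov kernel from 𝒵 to 𝒳 with Q_{X|Z=z} ∈ B_{ε]}(P_X) for every z, then the mixture Q_X = ∫ Q_{X|Z=z} dQ_Z(z) belongs to B_{ε]}(P_X). (ii) If 𝒳 is Polish and Γ is a convex set of Borel probability measures on 𝒳, then Γ ⊆ cconv Γ ⊆ cl Γ, where cconv Γ is the completely convex hull of Γ (the set of all such mixtures of kernels taking values in Γ) and cl Γ is the closure of Γ under the Lévy–Prokhorov metric. -/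
open MeasureTheory Filter Topology Metric
open scoped ENNReal NNReal Classical

universe u

/-- The completely convex hull of a set `Γ` of Borel probability measures: all mixtures
`∫ Q_{X|Z=z} dQ_Z(z)` of Markov kernels whose values lie in `Γ`, over arbitrary probability
spaces `(Z, Σ, Q_Z)`. -/
def cconvHull {X : Type*} [mX : MeasurableSpace X] (Γ : Set (ProbabilityMeasure X)) :
    Set (ProbabilityMeasure X) :=
  {μ | ∃ (Z : Type u) (mZ : MeasurableSpace Z) (QZ : @MeasureTheory.Measure Z mZ)
        (_ : @IsProbabilityMeasure Z mZ QZ) (κ : @ProbabilityTheory.Kernel Z X mZ mX)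
        (_ : @ProbabilityTheory.IsMarkovKernel Z X mZ mX κ),
        (∀ z : Z, ∃ ν ∈ Γ, (ν : Measure X) = κ z) ∧
        (μ : Measure X) = @MeasureTheory.Measure.bind Z X mZ mX QZ (DFunLike.coe κ)}

/-- The canonical identification of probability measures with points of the
Lévy–Prokhorov metric space. -/
def toLP {X : Type*} [MeasurableSpace X] (μ : ProbabilityMeasure X) :
    LevyProkhorov (ProbabilityMeasure X) :=
  (LevyProkhorov.toMeasureEquiv (α := ProbabilityMeasure X)).symm μ

section Aux

open BoundedContinuousFunction

variable {X : Type*} [mX : MeasurableSpace X]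

/-- Part (i): closed Lévy–Prokhorov balls are completely convex. -/
lemma lp_aux_partI [MetricSpace X] [BorelSpace X]
    (PX : ProbabilityMeasure X) (ε : ℝ)
    {Z : Type*} [mZ : MeasurableSpace Z] (QZ : Measure Z) [IsProbabilityMeasure QZ]
    (κ : ProbabilityTheory.Kernel Z X) [ProbabilityTheory.IsMarkovKernel κ]
    (h : ∀ z, levyProkhorovEDist (κ z) (PX : Measure X) ≤ ENNReal.ofReal ε) :
    levyProkhorovEDist (QZ.bind ⇑κ) (PX : Measure X) ≤ ENNReal.ofReal ε := by
  haveI : IsProbabilityMeasure (QZ.bind ⇑κ) := by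
    constructor
    rw [Measure.bind_apply MeasurableSet.univ κ.measurable.aemeasurable]
    simp [measure_univ]
  apply levyProkhorovEDist_le_of_forall_le
  intro δ B δ_gt _ hB
  rw [Measure.bind_apply hB κ.measurable.aemeasurable]
  calc ∫⁻ z, κ z B ∂QZ
      ≤ ∫⁻ _, ((PX : Measure X) (thickening δ.toReal B) + δ) ∂QZ :=
        lintegral_mono fun z =>
          left_measure_le_of_levyProkhorovEDist_lt ((h z).trans_lt δ_gt) hB
    _ = (PX : Measure X) (thickening δ.toReal B) + δ := by
        simp [lintegral_const, measure_univ]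

lemma lp_aux_inducing [TopologicalSpace X] [OpensMeasurableSpace X] :
    IsInducing (fun (ν : ProbabilityMeasure X) (f : X →ᵇ ℝ≥0) =>
      ν.toFiniteMeasure.testAgainstNN f) := by
  have h1 : IsInducing
      (ProbabilityMeasure.toFiniteMeasure : ProbabilityMeasure X → FiniteMeasure X) := ⟨rfl⟩
  have h2 : IsInducing
      (FiniteMeasure.toWeakDualBCNN : FiniteMeasure X → WeakDual ℝ≥0 (X →ᵇ ℝ≥0)) := ⟨rfl⟩
  have h3 : IsInducing (fun (φ : WeakDual ℝ≥0 (X →ᵇ ℝ≥0)) (f : X →ᵇ ℝ≥0) => φ f) := ⟨rfl⟩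
  exact (h3.comp h2).comp h1

lemma lp_aux_lintegral_le [TopologicalSpace X] (f : X →ᵇ ℝ≥0) (ρ : Measure X) [IsProbabilityMeasure ρ] :
    ∫⁻ x, (f x : ℝ≥0∞) ∂ρ ≤ ((nndist f 0 : ℝ≥0) : ℝ≥0∞) := by
  calc ∫⁻ x, (f x : ℝ≥0∞) ∂ρ ≤ ∫⁻ _, ((nndist f 0 : ℝ≥0) : ℝ≥0∞) ∂ρ := by
        refine lintegral_mono fun x => ?_
        refine ENNReal.coe_le_coe.mpr ?_
        rw [← NNReal.coe_le_coe]
        have h := BoundedContinuousFunction.dist_coe_le_dist (f := f) (g := 0) x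
        simp only [BoundedContinuousFunction.coe_zero, Pi.zero_apply] at h
        rw [NNReal.dist_eq, NNReal.coe_zero, sub_zero,
          abs_of_nonneg (f x).coe_nonneg] at h
        rwa [dist_nndist] at h
    _ = ((nndist f 0 : ℝ≥0) : ℝ≥0∞) := by simp [measure_univ]

/-- The core closure lemma: a mixture of a Markov kernel with values in a convex set `Γ` of
probability measures lies in the closure of `Γ` (weak topology). -/
lemma lp_aux_mixture_mem_closure [MetricSpace X] [BorelSpace X]
    (Γ : Set (ProbabilityMeasure X))
    (hconv : ∀ μ ∈ Γ, ∀ ν ∈ Γ, ∀ t : ℝ≥0, t ≤ 1 → ∀ ρ : ProbabilityMeasure X,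
        (ρ : Measure X)
            = (t : ℝ≥0∞) • (μ : Measure X) + ((1 - t : ℝ≥0) : ℝ≥0∞) • (ν : Measure X) →
          ρ ∈ Γ)
    (μ' : ProbabilityMeasure X)
    {Z : Type*} [mZ : MeasurableSpace Z] (QZ : Measure Z) [IsProbabilityMeasure QZ]
    (κ : ProbabilityTheory.Kernel Z X) [ProbabilityTheory.IsMarkovKernel κ]
    (hmem : ∀ z, ∃ ν ∈ Γ, (ν : Measure X) = κ z)
    (hbind : (μ' : Measure X) = QZ.bind ⇑κ) :
    μ' ∈ closure Γ := by
  classical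
  have hind := lp_aux_inducing (X := X)
  set T : ProbabilityMeasure X → ((X →ᵇ ℝ≥0) → ℝ≥0) :=
    fun ν f => ν.toFiniteMeasure.testAgainstNN f with hTdef
  rw [hind.closure_eq_preimage_closure_image, Set.mem_preimage]
  rw [mem_closure_iff_nhds]
  intro U hU
  rw [nhds_pi, Filter.mem_pi] at hU
  obtain ⟨I, I_fin, t, ht, hIt⟩ := hU
  haveI : Fintype I := I_fin.fintype
  choose εf εf_pos hball using fun f => Metric.mem_nhds_iff.mp (ht f)
  obtain ⟨δ, δ_pos, hδ⟩ : ∃ δ > 0, ∀ f ∈ I, δ ≤ εf f := by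
    rcases I.eq_empty_or_nonempty with h | h
    · exact ⟨1, one_pos, by simp [h]⟩
    · have hne : I_fin.toFinset.Nonempty := by rwa [Set.Finite.toFinset_nonempty]
      refine ⟨I_fin.toFinset.inf' hne εf, ?_,
        fun f hf => Finset.inf'_le εf (I_fin.mem_toFinset.mpr hf)⟩
      rw [gt_iff_lt, Finset.lt_inf'_iff]
      exact fun f _ => εf_pos f
  -- the finite-dimensional picture
  set W : ProbabilityMeasure X → (I → ℝ) :=
    fun ν f => (∫⁻ x, ((f : X →ᵇ ℝ≥0) x : ℝ≥0∞) ∂(ν : Measure X)).toReal with hWdef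
  set v : Z → (I → ℝ) :=
    fun z f => (∫⁻ x, ((f : X →ᵇ ℝ≥0) x : ℝ≥0∞) ∂(κ z)).toReal with hvdef
  have hlint_ne : ∀ (f : X →ᵇ ℝ≥0) (ρ : Measure X) [IsProbabilityMeasure ρ],
      ∫⁻ x, (f x : ℝ≥0∞) ∂ρ ≠ ∞ := fun f ρ _ =>
    ((lp_aux_lintegral_le f ρ).trans_lt ENNReal.coe_lt_top).ne
  -- convexity of the image
  have hVconv : Convex ℝ (W '' Γ) := by
    rintro x ⟨μ₁, hμ₁, rfl⟩ y ⟨μ₂, hμ₂, rfl⟩ a b ha hb hab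
    set tN : ℝ≥0 := ⟨a, ha⟩ with htN
    have htle : tN ≤ 1 := by
      rw [← NNReal.coe_le_coe]
      simp only [htN, NNReal.coe_mk, NNReal.coe_one]
      change a ≤ 1
      linarith
    have hsubcoe : ((1 - tN : ℝ≥0) : ℝ) = b := by
      rw [NNReal.coe_sub htle]
      simp only [htN, NNReal.coe_mk, NNReal.coe_one]
      change 1 - a = b
      linarith
    set ρm : Measure X :=
      (tN : ℝ≥0∞) • (μ₁ : Measure X) + ((1 - tN : ℝ≥0) : ℝ≥0∞) • (μ₂ : Measure X) with hρm
    haveI hρprob : IsProbabilityMeasure ρm := by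
      constructor
      rw [hρm]
      rw [Measure.add_apply, Measure.smul_apply, Measure.smul_apply, measure_univ,
        measure_univ, smul_eq_mul, smul_eq_mul, mul_one, mul_one, ← ENNReal.coe_add,
        add_tsub_cancel_of_le htle, ENNReal.coe_one]
    refine ⟨⟨ρm, hρprob⟩, hconv μ₁ hμ₁ μ₂ hμ₂ tN htle _ rfl, ?_⟩
    funext f
    have h1 := hlint_ne (f : X →ᵇ ℝ≥0) (μ₁ : Measure X)
    have h2 := hlint_ne (f : X →ᵇ ℝ≥0) (μ₂ : Measure X)
    show (∫⁻ x, ((f : X →ᵇ ℝ≥0) x : ℝ≥0∞) ∂ρm).toReal = _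
    simp only [Pi.add_apply, Pi.smul_apply, smul_eq_mul]
    rw [hρm, lintegral_add_measure, lintegral_smul_measure, lintegral_smul_measure, smul_eq_mul, smul_eq_mul,
      ENNReal.toReal_add (ENNReal.mul_ne_top ENNReal.coe_ne_top h1)
        (ENNReal.mul_ne_top ENNReal.coe_ne_top h2),
      ENNReal.toReal_mul, ENNReal.toReal_mul]
    simp only [ENNReal.coe_toReal, hsubcoe, htN, NNReal.coe_mk, hWdef]
    show ((tN : ℝ≥0∞)).toReal * _ + ((1 - tN : ℝ≥0) : ℝ) * _ = _
    rw [ENNReal.coe_toReal, hsubcoe]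
    rfl
  -- v takes values in W '' Γ
  have hvmem : ∀ z, v z ∈ W '' Γ := by
    intro z
    obtain ⟨ν, hν, hνeq⟩ := hmem z
    exact ⟨ν, hν, by funext f; simp only [hWdef, hvdef, hνeq]⟩
  -- integrability of v
  have hvmeas : Measurable v := by
    refine measurable_pi_lambda _ fun f => ?_
    exact ENNReal.measurable_toReal.comp
      ((Measure.measurable_lintegral
        ((f : X →ᵇ ℝ≥0).continuous.measurable.coe_nnreal_ennreal)).comp κ.measurable)
  obtain ⟨M, hM⟩ := Finite.exists_le (fun f : I => ((nndist (f : X →ᵇ ℝ≥0) 0 : ℝ≥0) : ℝ))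
  have hvint : Integrable v QZ := by
    refine ⟨hvmeas.aestronglyMeasurable, ?_⟩
    refine HasFiniteIntegral.of_bounded (C := max M 0) (ae_of_all _ fun z => ?_)
    rw [pi_norm_le_iff_of_nonneg (le_max_right M 0)]
    intro f
    rw [Real.norm_eq_abs, abs_of_nonneg ENNReal.toReal_nonneg]
    calc (∫⁻ x, ((f : X →ᵇ ℝ≥0) x : ℝ≥0∞) ∂(κ z)).toReal
        ≤ (((nndist (f : X →ᵇ ℝ≥0) 0 : ℝ≥0) : ℝ≥0∞)).toReal :=
          ENNReal.toReal_mono ENNReal.coe_ne_top (lp_aux_lintegral_le _ _)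
      _ = ((nndist (f : X →ᵇ ℝ≥0) 0 : ℝ≥0) : ℝ) := ENNReal.coe_toReal _
      _ ≤ max M 0 := le_max_of_le_left (hM f)
  -- the barycenter lies in the closure of the convex image
  have hm : (∫ z, v z ∂QZ) ∈ closure (W '' Γ) :=
    hVconv.closure.integral_mem isClosed_closure
      (ae_of_all _ fun z => subset_closure (hvmem z)) hvint
  -- the barycenter equals W μ'
  have hInt : W μ' = ∫ z, v z ∂QZ := by
    funext f
    have hL := (ContinuousLinearMap.proj (R := ℝ) (φ := fun _ : I => ℝ) f).integral_comp_comm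
      hvint
    simp only [ContinuousLinearMap.proj_apply] at hL
    have hmz : Measurable fun z => ∫⁻ x, ((f : X →ᵇ ℝ≥0) x : ℝ≥0∞) ∂(κ z) :=
      (Measure.measurable_lintegral
        ((f : X →ᵇ ℝ≥0).continuous.measurable.coe_nnreal_ennreal)).comp κ.measurable
    have h2 : ∫ z, (v z) f ∂QZ
        = (∫⁻ z, ∫⁻ x, ((f : X →ᵇ ℝ≥0) x : ℝ≥0∞) ∂(κ z) ∂QZ).toReal := by
      simp only [hvdef]
      exact integral_toReal hmz.aemeasurable
        (ae_of_all _ fun z => (lp_aux_lintegral_le _ (κ z)).trans_lt ENNReal.coe_lt_top)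
    rw [← hL, h2,
      ← Measure.lintegral_bind κ.measurable.aemeasurable
        ((f : X →ᵇ ℝ≥0).continuous.measurable.coe_nnreal_ennreal.aemeasurable), ← hbind]
  rw [← hInt] at hm
  -- extract a close element of Γ
  obtain ⟨w, hw, hdist⟩ := Metric.mem_closure_iff.mp hm δ δ_pos
  obtain ⟨ν, hν, rfl⟩ := hw
  refine ⟨T ν, hIt ?_, Set.mem_image_of_mem T hν⟩
  rw [Set.mem_pi]
  intro f hf
  apply hball f
  rw [Metric.mem_ball]
  have hcoord : dist (T ν f) (T μ' f) = dist (W ν ⟨f, hf⟩) (W μ' ⟨f, hf⟩) := by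
    rw [NNReal.dist_eq, Real.dist_eq]
    rfl
  calc dist (T ν f) (T μ' f) = dist (W ν ⟨f, hf⟩) (W μ' ⟨f, hf⟩) := hcoord
    _ ≤ dist (W ν) (W μ') := dist_le_pi_dist _ _ _
    _ = dist (W μ') (W ν) := dist_comm _ _
    _ < δ := hdist
    _ ≤ εf f := hδ f hf

end Aux

/-- **(i) Closed Lévy–Prokhorov balls are completely convex; (ii) for Polish `X` and convex
`Γ`, `Γ ⊆ cconv Γ ⊆ cl Γ`** (closure in the Lévy–Prokhorov metric). -/
theorem lp_ball_completely_convex_and_cconv_between {X : Type*} [mX : MeasurableSpace X]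
    [MetricSpace X] [BorelSpace X] :
    (∀ (PX : ProbabilityMeasure X) (ε : ℝ), 0 ≤ ε →
      ∀ (Z : Type u) (mZ : MeasurableSpace Z) (QZ : @MeasureTheory.Measure Z mZ)
        (_ : @IsProbabilityMeasure Z mZ QZ) (κ : @ProbabilityTheory.Kernel Z X mZ mX)
        (_ : @ProbabilityTheory.IsMarkovKernel Z X mZ mX κ),
        (∀ z : Z, levyProkhorovEDist (κ z) (PX : Measure X) ≤ ENNReal.ofReal ε) →
        levyProkhorovEDist (@MeasureTheory.Measure.bind Z X mZ mX QZ (DFunLike.coe κ))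
          (PX : Measure X) ≤ ENNReal.ofReal ε)
    ∧ (∀ (_ : TopologicalSpace.SeparableSpace X) (_ : CompleteSpace X)
        (Γ : Set (ProbabilityMeasure X)),
        (∀ μ ∈ Γ, ∀ ν ∈ Γ, ∀ t : ℝ≥0, t ≤ 1 → ∀ ρ : ProbabilityMeasure X,
          (ρ : Measure X)
              = (t : ℝ≥0∞) • (μ : Measure X) + ((1 - t : ℝ≥0) : ℝ≥0∞) • (ν : Measure X) →
            ρ ∈ Γ) →
        Γ ⊆ cconvHull.{u} Γ
          ∧ cconvHull.{u} Γ ⊆ {μ | toLP μ ∈ closure (toLP '' Γ)}) := by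
  constructor
  · intro PX ε hε Z mZ QZ hQZ κ hκ h
    exact lp_aux_partI PX ε QZ κ h
  · intro hsep _ Γ hconv
    haveI := hsep
    constructor
    · -- Γ ⊆ cconvHull Γ via constant kernels over a one-point space
      intro μ hμ
      refine ⟨PUnit.{u + 1}, inferInstance, Measure.dirac PUnit.unit, inferInstance,
        ProbabilityTheory.Kernel.const _ (μ : Measure X), inferInstance,
        fun z => ⟨μ, hμ, by simp [ProbabilityTheory.Kernel.const_apply]⟩, ?_⟩
      rw [Measure.dirac_bind (ProbabilityTheory.Kernel.const _ (μ : Measure X)).measurable]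
      simp [ProbabilityTheory.Kernel.const_apply]
    · -- cconvHull Γ ⊆ LP-closure of Γ
      rintro μ' ⟨Z, mZ, QZ, hQZ, κ, hκ, hmem, hbind⟩
      haveI := hQZ
      haveI := hκ
      have hcl : μ' ∈ closure Γ :=
        lp_aux_mixture_mem_closure Γ hconv μ' QZ κ hmem hbind
      show toLP μ' ∈ closure (toLP '' Γ)
      have himg : toLP '' Γ
          = ⇑(LevyProkhorov.probabilityMeasureHomeomorph (Ω := X)) '' Γ := rfl
      have hpt : toLP μ' = (LevyProkhorov.probabilityMeasureHomeomorph (Ω := X)) μ' := rfl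
      rw [hpt, himg, ← Homeomorph.image_closure]
      exact Set.mem_image_of_mem _ hcl
end
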